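/- arXiv:0807.3240 — 2 statements merged into one kernel-verified Lean document; each statement's English description precedes it below -/
import Mathlib

section
/- Let X be a connected finite CW complex and let ω be a continuous closed 1-form on X whose cohomology class is nonzero, i.e., ∫_γ ω ≠ 0 for some loop γ in X. Then Cat(X, ω) ≤ cat(X) − 1. -/
open Set



section Infra

variable {α β γ : Type*} [TopologicalSpace α] [TopologicalSpace β] [TopologicalSpace γ]

/-- Pasting lemma for two compact pieces in a Hausdorff space. -/
lemma contOn_union_compact [T2Space α] {f : α → β} {K₁ K₂ : Set α}
    (h₁ : IsCompact K₁) (h₂ : IsCompact K₂)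
    (f₁ : ContinuousOn f K₁) (f₂ : ContinuousOn f K₂) :
    ContinuousOn f (K₁ ∪ K₂) := by
  rw [continuousOn_iff_isClosed]
  intro t ht
  obtain ⟨u₁, hu₁, he₁⟩ := continuousOn_iff_isClosed.mp f₁ t ht
  obtain ⟨u₂, hu₂, he₂⟩ := continuousOn_iff_isClosed.mp f₂ t ht
  refine ⟨(u₁ ∩ K₁) ∪ (u₂ ∩ K₂), (hu₁.inter h₁.isClosed).union (hu₂.inter h₂.isClosed), ?_⟩
  ext x
  have e₁ := Set.ext_iff.mp he₁ x
  have e₂ := Set.ext_iff.mp he₂ x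
  simp only [mem_union, mem_inter_iff, mem_preimage] at *
  tauto

/-- If `q` is continuous on a compact set `K` and `f ∘ q` is continuous on `K`,
then `f` is continuous on `q '' K` (Hausdorff spaces). -/
lemma contOn_image_of_comp [T2Space α] [T2Space β] [T2Space γ] {q : α → β} {f : β → γ}
    {K : Set α} (hK : IsCompact K) (hq : ContinuousOn q K)
    (hfq : ContinuousOn (f ∘ q) K) : ContinuousOn f (q '' K) := by
  rw [continuousOn_iff_isClosed]
  intro t ht
  obtain ⟨u, hu, he⟩ := continuousOn_iff_isClosed.mp hfq t ht
  have hS : IsCompact (K ∩ u) := hK.inter_right hu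
  have hSalt : (f ∘ q) ⁻¹' t ∩ K = K ∩ u := by
    rw [he]; exact Set.inter_comm _ _
  refine ⟨q '' (K ∩ u), (hS.image_of_continuousOn (hq.mono inter_subset_left)).isClosed, ?_⟩
  ext y
  constructor
  · rintro ⟨hyt, x, hxK, rfl⟩
    have : x ∈ (f ∘ q) ⁻¹' t ∩ K := ⟨hyt, hxK⟩
    rw [hSalt] at this
    exact ⟨⟨x, this, rfl⟩, ⟨x, hxK, rfl⟩⟩
  · rintro ⟨⟨x, hx, rfl⟩, hy⟩
    have hx' : x ∈ (f ∘ q) ⁻¹' t ∩ K := by rw [hSalt]; exact hx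
    exact ⟨hx'.1, x, hx.1, rfl⟩

/-- Pasting along two relatively closed pieces. -/
lemma contOn_union_relClosed {f : α → β} {A F₁ F₂ : Set α}
    (hA : A ⊆ F₁ ∪ F₂) (c₁ : IsClosed F₁) (c₂ : IsClosed F₂)
    (h₁ : ContinuousOn f (A ∩ F₁)) (h₂ : ContinuousOn f (A ∩ F₂)) :
    ContinuousOn f A := by
  intro x hx
  have key : ContinuousWithinAt f ((A ∩ F₁) ∪ (A ∩ F₂)) x := by
    have w₁ : ContinuousWithinAt f (A ∩ F₁) x := by
      by_cases hxF : x ∈ F₁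
      · exact h₁ x ⟨hx, hxF⟩
      · exact continuousWithinAt_of_notMem_closure fun hc =>
          hxF (closure_minimal inter_subset_right c₁ hc)
    have w₂ : ContinuousWithinAt f (A ∩ F₂) x := by
      by_cases hxF : x ∈ F₂
      · exact h₂ x ⟨hx, hxF⟩
      · exact continuousWithinAt_of_notMem_closure fun hc =>
          hxF (closure_minimal inter_subset_right c₂ hc)
    exact w₁.union w₂
  refine key.mono fun y hy => ?_
  rcases hA hy with h | h
  · exact Or.inl ⟨hy, h⟩
  · exact Or.inr ⟨hy, h⟩

variable {X : Type} [TopologicalSpace X]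

/-- `g` and `g'` are homotopic on `A` (as maps into `X`). -/
def HtpyOn (A : Set X) (g g' : X → X) : Prop :=
  ∃ H : X × ℝ → X, ContinuousOn H (A ×ˢ Set.Icc (0 : ℝ) 1) ∧
    (∀ a ∈ A, H (a, 0) = g a) ∧ (∀ a ∈ A, H (a, 1) = g' a)

lemma HtpyOn.trans {A : Set X} {g₁ g₂ g₃ : X → X}
    (h₁ : HtpyOn A g₁ g₂) (h₂ : HtpyOn A g₂ g₃) : HtpyOn A g₁ g₃ := by
  obtain ⟨H₁, hc₁, h₁0, h₁1⟩ := h₁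
  obtain ⟨H₂, hc₂, h₂0, h₂1⟩ := h₂
  refine ⟨fun p => if p.2 ≤ 1/2 then H₁ (p.1, 2 * p.2) else H₂ (p.1, 2 * p.2 - 1), ?_, ?_, ?_⟩
  · apply contOn_union_relClosed (F₁ := {p : X × ℝ | p.2 ≤ 1/2}) (F₂ := {p : X × ℝ | 1/2 ≤ p.2})
      (fun p _ => le_total p.2 (1/2))
      (isClosed_le continuous_snd continuous_const)
      (isClosed_le continuous_const continuous_snd)
    · apply ContinuousOn.congr (f := fun p : X × ℝ => H₁ (p.1, 2 * p.2))
      · apply hc₁.comp (Continuous.continuousOn (by fun_prop))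
        rintro ⟨x, t⟩ ⟨hp, htle⟩
        rw [Set.mem_prod] at hp ⊢
        have ht0 : (0:ℝ) ≤ t := hp.2.1
        have ht2 : t ≤ 1/2 := htle
        refine ⟨hp.1, ?_⟩
        simp only [Set.mem_Icc]
        constructor <;> linarith
      · rintro ⟨x, t⟩ ⟨_, htle⟩
        have ht : t ≤ 1/2 := htle
        simp only [if_pos ht]
    · apply ContinuousOn.congr (f := fun p : X × ℝ => H₂ (p.1, 2 * p.2 - 1))
      · apply hc₂.comp (Continuous.continuousOn (by fun_prop))
        rintro ⟨x, t⟩ ⟨hp, htle⟩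
        rw [Set.mem_prod] at hp ⊢
        have ht1 : t ≤ 1 := hp.2.2
        have ht2 : (1:ℝ)/2 ≤ t := htle
        refine ⟨hp.1, ?_⟩
        simp only [Set.mem_Icc]
        constructor <;> linarith
      · rintro ⟨x, t⟩ ⟨hp, htle⟩
        rw [Set.mem_prod] at hp
        have ht2 : (1:ℝ)/2 ≤ t := htle
        by_cases h : t ≤ 1/2
        · have ht : t = 1/2 := le_antisymm h ht2
          subst ht
          simp only [le_refl, if_pos]
          rw [show (2:ℝ) * (1/2) = 1 by norm_num] <;> try rfl
          rw [h₁1 x hp.1, show (1:ℝ) - 1 = 0 by norm_num, h₂0 x hp.1]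
        · simp only [if_neg h]
  · intro a ha
    have h0 : ((0:ℝ) ≤ 1/2) := by norm_num
    simp only [if_pos h0]
    rw [show (2:ℝ) * 0 = 0 by norm_num, h₁0 a ha]
  · intro a ha
    have h1 : ¬((1:ℝ) ≤ 1/2) := by norm_num
    simp only [if_neg h1]
    rw [show (2:ℝ) * 1 - 1 = 1 by norm_num, h₂1 a ha]

end Infra

/-- A continuous closed 1-form on a topological space `X`: a collection of
continuous real-valued functions `f i : U i → ℝ` indexed by an open cover
`{U i}` of `X`, such that on overlaps the differences `f i − f j` are locally
constant.  (The functions are recorded as total functions `X → ℝ`; only their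
restrictions to `U i` matter.) -/
structure ClosedOneForm (X : Type) [TopologicalSpace X] : Type 1 where
  ι : Type
  U : ι → Set X
  isOpen : ∀ i, IsOpen (U i)
  covers : ∀ x : X, ∃ i, x ∈ U i
  f : ι → X → ℝ
  cont : ∀ i, ContinuousOn (f i) (U i)
  locConst : ∀ i j, ∀ x ∈ U i ∩ U j, ∃ W, IsOpen W ∧ x ∈ W ∧
    ∀ y ∈ W ∩ (U i ∩ U j), f i y - f j y = f i x - f j x

namespace ClosedOneForm

variable {X Y : Type} [TopologicalSpace X] [TopologicalSpace Y]

/-- `r` is a value of the line integral `∫_γ ω` of the closed 1-form `ω` over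
the path `γ : [a,b] → X`: there is a partition `a = t₀ ≤ ⋯ ≤ t_n = b` with
`γ([t_m, t_{m+1}]) ⊆ U (idx m)` and
`r = Σ_m (f (idx m) (γ t_{m+1}) − f (idx m) (γ t_m))`. -/
def IsPathIntegral (ω : ClosedOneForm X) (γ : ℝ → X) (a b r : ℝ) : Prop :=
  ∃ (n : ℕ) (t : ℕ → ℝ) (idx : ℕ → ω.ι),
    t 0 = a ∧ t n = b ∧ (∀ m < n, t m ≤ t (m + 1)) ∧
    (∀ m < n, ∀ s ∈ Set.Icc (t m) (t (m + 1)), γ s ∈ ω.U (idx m)) ∧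
    r = ∑ m ∈ Finset.range n, (ω.f (idx m) (γ (t (m + 1))) - ω.f (idx m) (γ (t m)))

open scoped Classical in
/-- The line integral `∫_γ ω` over `γ : [a,b] → X` (its value is independent
of all choices; it is defined, via choice, as the common value computed from
any admissible partition). -/
noncomputable def pathIntegral (ω : ClosedOneForm X) (γ : ℝ → X) (a b : ℝ) : ℝ :=
  if h : ∃ r, ω.IsPathIntegral γ a b r then h.choose else 0

/-- A subset `A ⊆ X` is `N`-movable with respect to `ω` if there is a homotopy
`H : A × [0,1] → X` with `H(a,0) = a` and `∫_{t ↦ H(a,t)} ω ≤ −N` for all `a ∈ A`. -/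
def NMovable (ω : ClosedOneForm X) (A : Set X) (N : ℝ) : Prop :=
  ∃ H : X × ℝ → X, ContinuousOn H (A ×ˢ Set.Icc (0 : ℝ) 1) ∧
    (∀ a ∈ A, H (a, 0) = a) ∧
    ∀ a ∈ A, ω.pathIntegral (fun t => H (a, t)) 0 1 ≤ -N

end ClosedOneForm

/-- The inclusion of `V` into `X` is null-homotopic. -/
def NullhomotopicIn (X : Type) [TopologicalSpace X] (V : Set X) : Prop :=
  ∃ (H : X × ℝ → X) (x₀ : X), ContinuousOn H (V ×ˢ Set.Icc (0 : ℝ) 1) ∧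
    (∀ v ∈ V, H (v, 0) = v) ∧ (∀ v ∈ V, H (v, 1) = x₀)

/-- `cat_X(A) ≤ k`: the subset `A` can be covered by `k` open subsets of `X`,
each null-homotopic in `X`. -/
def CatLE (X : Type) [TopologicalSpace X] (A : Set X) (k : ℕ) : Prop :=
  ∃ V : Fin k → Set X, (∀ i, IsOpen (V i)) ∧ A ⊆ ⋃ i, V i ∧
    ∀ i, NullhomotopicIn X (V i)

/-- `cat_X(A)`, the Lusternik–Schnirelmann category of `A` in `X`. -/
noncomputable def catSet (X : Type) [TopologicalSpace X] (A : Set X) : ℕ :=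
  sInf {k | CatLE X A k}

/-- `cat(X)`, the Lusternik–Schnirelmann category of `X`. -/
noncomputable def catSpace (X : Type) [TopologicalSpace X] : ℕ :=
  catSet X Set.univ

namespace ClosedOneForm

/-- `cat(X, ω)`: the minimal `k` such that for every `N > 0` there is a closed
subset `A ⊆ X`, `N`-movable with respect to `ω`, with `cat_X(X − A) ≤ k`. -/
noncomputable def catForm {X : Type} [TopologicalSpace X] (ω : ClosedOneForm X) : ℕ :=
  sInf {k | ∀ N : ℝ, 0 < N →
    ∃ A : Set X, IsClosed A ∧ ω.NMovable A N ∧ CatLE X Aᶜ k}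

end ClosedOneForm

namespace ClosedOneForm

variable {X Y : Type} [TopologicalSpace X] [TopologicalSpace Y]

/-- The pullback `φ*ω` of a closed 1-form along a continuous map `φ : Y → X`,
given by the cover `{φ⁻¹(U)}` and the functions `f_U ∘ φ`. -/
def pullback (ω : ClosedOneForm X) (φ : Y → X) (hφ : Continuous φ) :
    ClosedOneForm Y where
  ι := ω.ι
  U i := φ ⁻¹' ω.U i
  isOpen i := (ω.isOpen i).preimage hφ
  covers y := ω.covers (φ y)
  f i := ω.f i ∘ φ
  cont i := (ω.cont i).comp hφ.continuousOn (fun _ h => h)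
  locConst := by
    intro i j y hy
    obtain ⟨W, hWo, hxW, hW⟩ := ω.locConst i j (φ y) hy
    exact ⟨φ ⁻¹' W, hWo.preimage hφ, hxW, fun z hz => hW (φ z) hz⟩

/-- The sum `ω₁ + ω₂` of two closed 1-forms on `X`, given on the common
refinement of the two covers by the sums of the local functions. -/
def add (ω₁ ω₂ : ClosedOneForm X) : ClosedOneForm X where
  ι := ω₁.ι × ω₂.ι
  U p := ω₁.U p.1 ∩ ω₂.U p.2
  isOpen p := (ω₁.isOpen p.1).inter (ω₂.isOpen p.2)
  covers x := by
    obtain ⟨i, hi⟩ := ω₁.covers x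
    obtain ⟨j, hj⟩ := ω₂.covers x
    exact ⟨(i, j), hi, hj⟩
  f p x := ω₁.f p.1 x + ω₂.f p.2 x
  cont p := ((ω₁.cont p.1).mono Set.inter_subset_left).add
    ((ω₂.cont p.2).mono Set.inter_subset_right)
  locConst := by
    intro p q x hx
    obtain ⟨W₁, h1o, h1x, h1⟩ := ω₁.locConst p.1 q.1 x ⟨hx.1.1, hx.2.1⟩
    obtain ⟨W₂, h2o, h2x, h2⟩ := ω₂.locConst p.2 q.2 x ⟨hx.1.2, hx.2.2⟩
    refine ⟨W₁ ∩ W₂, h1o.inter h2o, ⟨h1x, h2x⟩, fun y hy => ?_⟩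
    have e1 := h1 y ⟨hy.1.1, hy.2.1.1, hy.2.2.1⟩
    have e2 := h2 y ⟨hy.1.2, hy.2.1.2, hy.2.2.2⟩
    try dsimp only at e1 e2 ⊢
    linarith

/-- The closed 1-form `ω + dg` obtained from `ω` by adding the differential of
a continuous function `g : X → ℝ`, i.e. adding `g|_U` to each local function. -/
def addFun (ω : ClosedOneForm X) (g : X → ℝ) (hg : Continuous g) :
    ClosedOneForm X where
  ι := ω.ι
  U := ω.U
  isOpen := ω.isOpen
  covers := ω.covers
  f i x := ω.f i x + g x
  cont i := (ω.cont i).add hg.continuousOn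
  locConst := by
    intro i j x hx
    obtain ⟨W, hWo, hWx, hW⟩ := ω.locConst i j x hx
    refine ⟨W, hWo, hWx, fun y hy => ?_⟩
    have := hW y hy
    try dsimp only at this ⊢
    linarith

end ClosedOneForm

/-- A finite CW structure on a (compact Hausdorff) topological space `X`:
finitely many cells, each given by a characteristic map from the closed unit
ball of a Euclidean space, continuous on the closed ball, injective on the
open ball, whose restriction to the boundary sphere lands in cells of strictly
lower dimension, and such that the images of the open balls partition `X`. -/
structure FinCW (X : Type) [TopologicalSpace X] where
  /-- number of cells -/
  n : ℕ
  /-- dimension of each cell -/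
  dim : Fin n → ℕ
  /-- characteristic map of each cell -/
  φ : (i : Fin n) → EuclideanSpace ℝ (Fin (dim i)) → X
  cont : ∀ i, ContinuousOn (φ i) (Metric.closedBall 0 1)
  injOn : ∀ i, Set.InjOn (φ i) (Metric.ball 0 1)
  sphere_lt : ∀ i, ∀ x ∈ Metric.sphere (0 : EuclideanSpace ℝ (Fin (dim i))) 1,
    ∃ j, dim j < dim i ∧ φ i x ∈ φ j '' Metric.ball 0 1
  partition : ∀ x : X, ∃! p : (i : Fin n) × EuclideanSpace ℝ (Fin (dim i)),
    p.2 ∈ Metric.ball 0 1 ∧ φ p.1 p.2 = x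

/-- The Euler characteristic `χ(X) = Σ_i (−1)^i c_i` of a finite CW structure,
where `c_i` is the number of cells of dimension `i`. -/
def FinCW.euler {X : Type} [TopologicalSpace X] (c : FinCW X) : ℤ :=
  ∑ i : Fin c.n, (-1 : ℤ) ^ (c.dim i)

namespace ClosedOneForm

/-- `Cat(X, ω) ≤ k`: there is an open `U ⊆ X` with `cat_X(X − U) ≤ k` and a
homotopy `h : U × [0,∞) → X` starting from the inclusion such that
`∫_{τ ∈ [0,t] ↦ h(x,τ)} ω → −∞` as `t → ∞`, uniformly in `x ∈ U`. -/
def BigCatLE {X : Type} [TopologicalSpace X] (ω : ClosedOneForm X) (k : ℕ) : Prop :=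
  ∃ U : Set X, IsOpen U ∧ CatLE X Uᶜ k ∧
    ∃ h : X × ℝ → X, ContinuousOn h (U ×ˢ Set.Ici (0 : ℝ)) ∧
      (∀ x ∈ U, h (x, 0) = x) ∧
      ∀ C : ℝ, ∃ T : ℝ, ∀ x ∈ U, ∀ t : ℝ, T ≤ t →
        ω.pathIntegral (fun τ => h (x, τ)) 0 t ≤ -C

/-- `Cat(X, ω)`, the minimal `k` as in `BigCatLE`. -/
noncomputable def bigCatForm {X : Type} [TopologicalSpace X] (ω : ClosedOneForm X) : ℕ :=
  sInf {k | ω.BigCatLE k}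

end ClosedOneForm


namespace ClosedOneForm

variable {X : Type} [TopologicalSpace X] {ω : ClosedOneForm X} {γ : ℝ → X} {a b r r' : ℝ}

lemma chain_mono {t : ℕ → ℝ} {n : ℕ} (h : ∀ m < n, t m ≤ t (m + 1)) :
    ∀ {p q : ℕ}, p ≤ q → q ≤ n → t p ≤ t q := by
  have key : ∀ q : ℕ, q ≤ n → ∀ p : ℕ, p ≤ q → t p ≤ t q := by
    intro q
    induction q with
    | zero =>
      intro _ p hp
      interval_cases p
      exact le_rfl
    | succ k ih =>
      intro hk p hp
      rcases Nat.lt_succ_iff_lt_or_eq.mp (Nat.lt_succ_of_le hp) with h' | h'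
      · exact le_trans (ih (by omega) p (by omega)) (h k (by omega))
      · rw [h']
  intro p q hpq hqn
  exact key q hqn p hpq

/-- A path integral over a degenerate interval vanishes. -/
lemma isPathIntegral_self_eq_zero (h : ω.IsPathIntegral γ a a r) : r = 0 := by
  obtain ⟨n, t, idx, h0, hn, hmono, -, hsum⟩ := h
  have hall : ∀ m ≤ n, t m = a := by
    intro m hm
    have h₁ : t m ≤ a := hn ▸ chain_mono hmono hm le_rfl
    have h₂ : a ≤ t m := h0 ▸ chain_mono hmono (Nat.zero_le m) hm
    linarith
  rw [hsum]
  apply Finset.sum_eq_zero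
  intro m hm
  rw [Finset.mem_range] at hm
  rw [hall m (le_of_lt hm), hall (m + 1) hm, sub_self]

/-- Local constancy of `f i - f j` propagates over a connected path image. -/
lemma diff_const {i j : ω.ι} {c d : ℝ} (hcd : c ≤ d) (hγ : ContinuousOn γ (Icc c d))
    (hmem : ∀ s ∈ Icc c d, γ s ∈ ω.U i ∩ ω.U j) :
    ω.f i (γ d) - ω.f j (γ d) = ω.f i (γ c) - ω.f j (γ c) := by
  choose! W hWo hWmem hWconst using ω.locConst i j
  set S := γ '' Icc c d with hS
  have hSpre : IsPreconnected S := isPreconnected_Icc.image γ hγ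
  have hSsub : S ⊆ ω.U i ∩ ω.U j := by
    rintro x ⟨s, hs, rfl⟩; exact hmem s hs
  by_contra hne
  set u : Set X := ⋃ x ∈ {y | y ∈ S ∧ ω.f i y - ω.f j y = ω.f i (γ c) - ω.f j (γ c)}, W x with hu
  set v : Set X := ⋃ x ∈ {y | y ∈ S ∧ ω.f i y - ω.f j y ≠ ω.f i (γ c) - ω.f j (γ c)}, W x with hv
  have hγc : γ c ∈ S := mem_image_of_mem γ (left_mem_Icc.mpr hcd)
  have hγd : γ d ∈ S := mem_image_of_mem γ (right_mem_Icc.mpr hcd)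
  have huo : IsOpen u := isOpen_biUnion fun x hx => hWo x (hSsub hx.1)
  have hvo : IsOpen v := isOpen_biUnion fun x hx => hWo x (hSsub hx.1)
  have hcover : S ⊆ u ∪ v := by
    intro x hx
    by_cases hfx : ω.f i x - ω.f j x = ω.f i (γ c) - ω.f j (γ c)
    · exact Or.inl (mem_biUnion ⟨hx, hfx⟩ (hWmem x (hSsub hx)))
    · exact Or.inr (mem_biUnion ⟨hx, hfx⟩ (hWmem x (hSsub hx)))
  have hune : (S ∩ u).Nonempty :=
    ⟨γ c, hγc, mem_biUnion ⟨hγc, rfl⟩ (hWmem _ (hSsub hγc))⟩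
  have hvne : (S ∩ v).Nonempty :=
    ⟨γ d, hγd, mem_biUnion ⟨hγd, hne⟩ (hWmem _ (hSsub hγd))⟩
  obtain ⟨y, hyS, hyu, hyv⟩ := hSpre u v huo hvo hcover hune hvne
  obtain ⟨x₁, hx₁, hyW₁⟩ := mem_iUnion₂.mp hyu
  obtain ⟨x₂, hx₂, hyW₂⟩ := mem_iUnion₂.mp hyv
  have e₁ := hWconst x₁ (hSsub hx₁.1) y ⟨hyW₁, hSsub hyS⟩
  have e₂ := hWconst x₂ (hSsub hx₂.1) y ⟨hyW₂, hSsub hyS⟩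
  exact hx₂.2 (by rw [← e₂, e₁, hx₁.2])

/-- If the path stays in a single chart, the integral is the difference of the
endpoint values. -/
lemma value_of_subset_chart {i : ω.ι} (hab : a ≤ b) (hγ : ContinuousOn γ (Icc a b))
    (hmem : ∀ s ∈ Icc a b, γ s ∈ ω.U i) (h : ω.IsPathIntegral γ a b r) :
    r = ω.f i (γ b) - ω.f i (γ a) := by
  obtain ⟨n, t, idx, h0, hn, hmono, hpiece, hsum⟩ := h
  have hrange : ∀ m ≤ n, t m ∈ Icc a b := fun m hm =>
    ⟨h0 ▸ chain_mono hmono (Nat.zero_le m) hm, hn ▸ chain_mono hmono hm le_rfl⟩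
  have hterm : ∀ m < n,
      ω.f (idx m) (γ (t (m + 1))) - ω.f (idx m) (γ (t m)) =
      ω.f i (γ (t (m + 1))) - ω.f i (γ (t m)) := by
    intro m hm
    have hsub : Icc (t m) (t (m + 1)) ⊆ Icc a b :=
      Icc_subset_Icc (hrange m (le_of_lt hm)).1 (hrange (m + 1) hm).2
    have := ω.diff_const (γ := γ) (i := idx m) (j := i) (hmono m hm) (hγ.mono hsub)
      (fun s hs => ⟨hpiece m hm s hs, hmem s (hsub hs)⟩)
    linarith
  rw [hsum, Finset.sum_congr rfl (fun m hm => hterm m (Finset.mem_range.mp hm)),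
    Finset.sum_range_sub (fun m => ω.f i (γ (t m))) n, h0, hn]

end ClosedOneForm

namespace ClosedOneForm

variable {X : Type} [TopologicalSpace X]

/-- The data of an admissible partition computing a path integral. -/
def PartData (ω : ClosedOneForm X) (γ : ℝ → X) (a b r : ℝ) (n : ℕ) (t : ℕ → ℝ)
    (idx : ℕ → ω.ι) : Prop :=
  t 0 = a ∧ t n = b ∧ (∀ m < n, t m ≤ t (m + 1)) ∧
    (∀ m < n, ∀ u ∈ Set.Icc (t m) (t (m + 1)), γ u ∈ ω.U (idx m)) ∧
    r = ∑ m ∈ Finset.range n, (ω.f (idx m) (γ (t (m + 1))) - ω.f (idx m) (γ (t m)))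

lemma isPathIntegral_iff_partData {ω : ClosedOneForm X} {γ : ℝ → X} {a b r : ℝ} :
    ω.IsPathIntegral γ a b r ↔ ∃ n t idx, ω.PartData γ a b r n t idx := Iff.rfl

variable {ω : ClosedOneForm X} {γ : ℝ → X} {a b r r' : ℝ}

private lemma unique_core {N M : ℕ} {t s : ℕ → ℝ} {idx jdx : ℕ → ω.ι}
    (hγ : ContinuousOn γ (Set.Icc a b))
    (h₁ : ω.PartData γ a b r (N + 1) t idx)
    (h₂ : ω.PartData γ a b r' (M + 1) s jdx)
    (hts : t 1 ≤ s 1)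
    (IH : ∀ (a b : ℝ) (γ : ℝ → X), ContinuousOn γ (Set.Icc a b) →
      ∀ (n n' : ℕ) (t s : ℕ → ℝ) (idx jdx : ℕ → ω.ι) (r r' : ℝ),
        n + n' ≤ N + M + 1 → ω.PartData γ a b r n t idx → ω.PartData γ a b r' n' s jdx →
        r = r') :
    r = r' := by
  obtain ⟨ht0, htn, hmt, hpt, hrt⟩ := h₁
  obtain ⟨hs0, hsn, hms, hps, hrs⟩ := h₂
  set T0 : ℝ := ω.f (idx 0) (γ (t 1)) - ω.f (idx 0) (γ (t 0)) with hT0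
  have hta : a ≤ t 1 := ht0 ▸ hmt 0 (by omega)
  have ht1b : t 1 ≤ b := htn ▸ chain_mono hmt (by omega : 1 ≤ N + 1) le_rfl
  have hs1b : s 1 ≤ b := hsn ▸ chain_mono hms (by omega : 1 ≤ M + 1) le_rfl
  -- first partition with its initial piece removed
  have hP₁ : ω.PartData γ (t 1) b (r - T0) N (fun m => t (m + 1)) (fun m => idx (m + 1)) := by
    refine ⟨rfl, htn, fun m hm => hmt (m + 1) (by omega),
      fun m hm => hpt (m + 1) (by omega), ?_⟩
    have := Finset.sum_range_succ' (fun m => ω.f (idx m) (γ (t (m + 1))) - ω.f (idx m) (γ (t m))) N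
    rw [hrt, this]
    simp only [hT0]
    ring
  -- second partition with its initial piece clipped at `t 1`
  set s' : ℕ → ℝ := fun m => if m = 0 then t 1 else s m with hs'
  have hs'succ : ∀ m : ℕ, s' (m + 1) = s (m + 1) := fun m => if_neg (Nat.succ_ne_zero m)
  have hs'0 : s' 0 = t 1 := if_pos rfl
  have hkey : ω.f (jdx 0) (γ (t 1)) - ω.f (jdx 0) (γ a) = T0 := by
    have hmemIcc : ∀ u ∈ Set.Icc a (t 1), γ u ∈ ω.U (idx 0) ∩ ω.U (jdx 0) := by
      intro u hu
      constructor
      · exact hpt 0 (by omega) u (by rw [ht0]; exact hu)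
      · exact hps 0 (by omega) u ⟨by rw [hs0]; exact hu.1, le_trans hu.2 hts⟩
    have := ω.diff_const (γ := γ) (i := idx 0) (j := jdx 0) hta
      (hγ.mono (Set.Icc_subset_Icc le_rfl ht1b)) hmemIcc
    rw [hT0, ht0]
    linarith
  have hP₂ : ω.PartData γ (t 1) b (r' - T0) (M + 1) s' jdx := by
    refine ⟨if_pos rfl, ?_, ?_, ?_, ?_⟩
    · rw [hs'succ M]; exact hsn
    · intro m hm
      match m with
      | 0 => rw [hs'succ 0, hs'0]; exact hts
      | m + 1 => rw [hs'succ, hs'succ]; exact hms (m + 1) hm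
    · intro m hm u hu
      match m with
      | 0 =>
        rw [hs'succ 0, hs'0] at hu
        refine hps 0 (by omega) u ⟨?_, hu.2⟩
        rw [hs0]; exact le_trans hta hu.1
      | m + 1 =>
        rw [hs'succ, hs'succ] at hu
        exact hps (m + 1) hm u hu
    · have e₁ := Finset.sum_range_succ' (fun m => ω.f (jdx m) (γ (s (m + 1))) - ω.f (jdx m) (γ (s m))) M
      have e₂ := Finset.sum_range_succ' (fun m => ω.f (jdx m) (γ (s' (m + 1))) - ω.f (jdx m) (γ (s' m))) M
      have hcongr : ∀ m ∈ Finset.range M,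
          (ω.f (jdx (m + 1)) (γ (s' (m + 1 + 1))) - ω.f (jdx (m + 1)) (γ (s' (m + 1)))) =
          (ω.f (jdx (m + 1)) (γ (s (m + 1 + 1))) - ω.f (jdx (m + 1)) (γ (s (m + 1)))) := by
        intro m _
        rw [hs'succ, hs'succ]
      rw [e₂, Finset.sum_congr rfl hcongr]
      have hs'1 : s' (0 + 1) = s 1 := hs'succ 0
      rw [hrs, e₁]
      rw [hs'1, hs'0, hs0]
      have : ω.f (jdx 0) (γ (t 1)) = ω.f (jdx 0) (γ a) + T0 := by linarith
      rw [this]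
      ring
  have := IH (t 1) b γ (hγ.mono (Set.Icc_subset_Icc hta le_rfl)) N (M + 1)
    _ _ _ _ _ _ (by omega) hP₁ hP₂
  linarith

private lemma unique_aux : ∀ (NN : ℕ) (a b : ℝ) (γ : ℝ → X), ContinuousOn γ (Set.Icc a b) →
    ∀ (n n' : ℕ) (t s : ℕ → ℝ) (idx jdx : ℕ → ω.ι) (r r' : ℝ),
      n + n' ≤ NN → ω.PartData γ a b r n t idx → ω.PartData γ a b r' n' s jdx →
      r = r' := by
  intro NN
  induction NN with
  | zero =>
    intro a b γ hγ n n' t s idx jdx r r' hb h₁ h₂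
    have hn : n = 0 := by omega
    have hn' : n' = 0 := by omega
    subst hn; subst hn'
    rw [h₁.2.2.2.2, h₂.2.2.2.2]
    simp
  | succ NN ih =>
    intro a b γ hγ n n' t s idx jdx r r' hb h₁ h₂
    match n, n' with
    | 0, n' =>
      have hab : a = b := by rw [← h₁.1, ← h₁.2.1]
      have hr : r = 0 := by simpa using h₁.2.2.2.2
      have hr' : r' = 0 := by
        apply isPathIntegral_self_eq_zero (ω := ω) (γ := γ) (a := a)
        exact ⟨n', s, jdx, h₂.1, hab ▸ h₂.2.1, h₂.2.2⟩
      rw [hr, hr']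
    | (N + 1), 0 =>
      have hab : a = b := by rw [← h₂.1, ← h₂.2.1]
      have hr' : r' = 0 := by simpa using h₂.2.2.2.2
      have hr : r = 0 := by
        apply isPathIntegral_self_eq_zero (ω := ω) (γ := γ) (a := a)
        exact ⟨N + 1, t, idx, h₁.1, hab ▸ h₁.2.1, h₁.2.2⟩
      rw [hr, hr']
    | (N + 1), (M + 1) =>
      rcases le_total (t 1) (s 1) with h | h
      · exact unique_core hγ h₁ h₂ h
          (fun a b γ hγ n n' t s idx jdx r r' hb' h₁' h₂' =>
            ih a b γ hγ n n' t s idx jdx r r' (by omega) h₁' h₂')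
      · exact (unique_core hγ h₂ h₁ h
          (fun a b γ hγ n n' t s idx jdx r r' hb' h₁' h₂' =>
            ih a b γ hγ n n' t s idx jdx r r' (by omega) h₁' h₂')).symm

/-- Uniqueness of the path integral of a continuous path. -/
theorem integral_unique (hγ : ContinuousOn γ (Set.Icc a b))
    (h₁ : ω.IsPathIntegral γ a b r) (h₂ : ω.IsPathIntegral γ a b r') : r = r' := by
  obtain ⟨n, t, idx, h₁⟩ := h₁
  obtain ⟨n', s, jdx, h₂⟩ := h₂
  exact unique_aux (n + n') a b γ hγ n n' t s idx jdx r r' le_rfl h₁ h₂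

/-- The path integral of a continuous path equals any admissible value. -/
theorem pathIntegral_eq (hγ : ContinuousOn γ (Set.Icc a b))
    (h : ω.IsPathIntegral γ a b r) : ω.pathIntegral γ a b = r := by
  rw [pathIntegral]
  rw [dif_pos ⟨r, h⟩]
  exact integral_unique hγ (Exists.choose_spec (⟨r, h⟩ : ∃ r, ω.IsPathIntegral γ a b r)) h

end ClosedOneForm

namespace ClosedOneForm

variable {X : Type} [TopologicalSpace X] {ω : ClosedOneForm X} {γ γ' : ℝ → X} {a b c r r' : ℝ}

/-- Existence of the path integral of a continuous path. -/
theorem integral_exists (hab : a ≤ b) (hγ : ContinuousOn γ (Set.Icc a b)) :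
    ∃ r, ω.IsPathIntegral γ a b r := by
  haveI hne : Nonempty ω.ι := ⟨(ω.covers (γ a)).choose⟩
  rcases eq_or_lt_of_le hab with heq | hlt
  · refine ⟨0, 0, fun _ => a, fun _ => Classical.arbitrary ω.ι, rfl, heq ▸ rfl, ?_, ?_, by simp⟩
    · intro m hm; omega
    · intro m hm; omega
  -- a < b
  have hcov : ∀ u ∈ Set.Icc a b, ∃ O : Set ℝ, IsOpen O ∧ u ∈ O ∧
      ∃ i : ω.ι, ∀ v ∈ O ∩ Set.Icc a b, γ v ∈ ω.U i := by
    intro u hu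
    obtain ⟨i, hi⟩ := ω.covers (γ u)
    have h1 : γ ⁻¹' (ω.U i) ∈ nhdsWithin u (Set.Icc a b) :=
      hγ u hu ((ω.isOpen i).mem_nhds hi)
    obtain ⟨O, hOo, hOu, hOsub⟩ := mem_nhdsWithin.mp h1
    exact ⟨O, hOo, hOu, i, fun v hv => hOsub ⟨hv.1, hv.2⟩⟩
  choose! O hOo hOu i hi using hcov
  obtain ⟨δ, hδpos, hδ⟩ := lebesgue_number_lemma_of_metric (isCompact_Icc (a := a) (b := b))
    (c := fun u : Set.Icc a b => O u) (fun u => hOo u u.2)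
    (fun u hu => Set.mem_iUnion.mpr ⟨⟨u, hu⟩, hOu u hu⟩)
  obtain ⟨n, hn⟩ := exists_nat_gt ((b - a) / δ)
  have hnpos : 0 < (n : ℝ) := lt_of_le_of_lt (div_nonneg (by linarith) hδpos.le) hn
  have hn0 : n ≠ 0 := by exact_mod_cast hnpos.ne'
  set step : ℝ := (b - a) / n with hstep
  have hsteppos : 0 < step := div_pos (by linarith) hnpos
  have hstepδ : step < δ := by
    rw [hstep, div_lt_iff₀ hnpos]
    calc b - a = ((b - a) / δ) * δ := by field_simp
    _ < n * δ := by
      apply mul_lt_mul_of_pos_right hn hδpos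
    _ = δ * n := by ring
  set t : ℕ → ℝ := fun m => a + m * step with ht
  have ht0 : t 0 = a := by simp [ht]
  have htn : t n = b := by
    rw [ht]; simp only [hstep]; field_simp; ring
  have hmono : ∀ m < n, t m ≤ t (m + 1) := by
    intro m _
    simp only [ht]
    push_cast
    nlinarith
  have htmem : ∀ m ≤ n, t m ∈ Set.Icc a b := by
    intro m hm
    have h1 : (m : ℝ) ≤ n := by exact_mod_cast hm
    simp only [ht, Set.mem_Icc]
    constructor
    · nlinarith
    · have : (m : ℝ) * step ≤ n * step := by nlinarith
      have hns : (n : ℝ) * step = b - a := by rw [hstep]; field_simp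
      linarith
  have hpick : ∀ m : ℕ, m < n → ∃ j : ω.ι, ∀ v ∈ Set.Icc (t m) (t (m + 1)), γ v ∈ ω.U j := by
    intro m hm
    obtain ⟨u, hu⟩ := hδ (t m) (htmem m hm.le)
    refine ⟨i u, fun v hv => hi (u : ℝ) u.2 v ⟨hu ?_, ?_⟩⟩
    · rw [Metric.mem_ball, Real.dist_eq]
      have h1 : t (m + 1) - t m = step := by simp only [ht]; push_cast; ring
      have h2 : |v - t m| ≤ step := by
        rw [abs_le]; constructor
        · linarith [hv.1]
        · linarith [hv.2, h1]
      linarith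
    · exact ⟨le_trans (htmem m hm.le).1 hv.1, le_trans hv.2 (htmem (m + 1) hm).2⟩
  choose! idx hidx using hpick
  exact ⟨_, n, t, idx, ht0, htn, hmono, hidx, rfl⟩

/-- The notion of path integral only depends on the path through its
restriction to `[a, b]`. -/
lemma IsPathIntegral.congr (h : ω.IsPathIntegral γ a b r)
    (he : Set.EqOn γ γ' (Set.Icc a b)) : ω.IsPathIntegral γ' a b r := by
  obtain ⟨n, t, idx, h0, hn, hmono, hpiece, hsum⟩ := h
  have htmem : ∀ m ≤ n, t m ∈ Set.Icc a b := fun m hm =>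
    ⟨h0 ▸ chain_mono hmono (Nat.zero_le m) hm, hn ▸ chain_mono hmono hm le_rfl⟩
  refine ⟨n, t, idx, h0, hn, hmono, ?_, ?_⟩
  · intro m hm u hu
    rw [← he (Set.Icc_subset_Icc (htmem m hm.le).1 (htmem (m + 1) hm).2 hu)]
    exact hpiece m hm u hu
  · rw [hsum]
    apply Finset.sum_congr rfl
    intro m hm
    rw [Finset.mem_range] at hm
    rw [he (htmem m hm.le), he (htmem (m + 1) hm)]

/-- Concatenation of path integrals. -/
lemma IsPathIntegral.trans (h₁ : ω.IsPathIntegral γ a b r) (h₂ : ω.IsPathIntegral γ b c r') :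
    ω.IsPathIntegral γ a c (r + r') := by
  obtain ⟨n, t, idx, h0, hn, hmono, hpiece, hsum⟩ := h₁
  obtain ⟨n', s, jdx, h0', hn', hmono', hpiece', hsum'⟩ := h₂
  set t'' : ℕ → ℝ := fun m => if m < n then t m else s (m - n) with ht''
  set idx'' : ℕ → ω.ι := fun m => if m < n then idx m else jdx (m - n) with hidx''
  have hval : ∀ m ≤ n, t'' m = t m := by
    intro m hm
    rcases lt_or_eq_of_le hm with h | h
    · simp [ht'', h]
    · subst h
      simp only [ht'', lt_irrefl, if_neg, Nat.sub_self]
      rw [h0', hn]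
      simp
  have hval' : ∀ m : ℕ, t'' (n + m) = s m := by
    intro m
    simp only [ht'']
    rw [if_neg (by omega), Nat.add_sub_cancel_left]
  have hidxval : ∀ m < n, idx'' m = idx m := fun m hm => if_pos hm
  have hidxval' : ∀ m : ℕ, idx'' (n + m) = jdx m := by
    intro m
    simp only [hidx'']
    rw [if_neg (by omega), Nat.add_sub_cancel_left]
  refine ⟨n + n', t'', idx'', by rw [hval 0 (Nat.zero_le n), h0], by rw [hval' n', hn'], ?_, ?_, ?_⟩
  · intro m hm
    rcases lt_or_ge m n with h | h
    · rcases lt_or_eq_of_le (Nat.succ_le_of_lt h) with h' | h'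
      · rw [hval m h.le, hval (m + 1) h'.le]; exact hmono m h
      · rw [hval m h.le, hval (m + 1) (le_of_eq h')]; exact hmono m h
    · obtain ⟨k, rfl⟩ := Nat.exists_eq_add_of_le h
      rw [hval' k, show n + k + 1 = n + (k + 1) by omega, hval' (k + 1)]
      exact hmono' k (by omega)
  · intro m hm u hu
    rcases lt_or_ge m n with h | h
    · rw [hidxval m h]
      rw [hval m h.le, hval (m + 1) (Nat.succ_le_of_lt h)] at hu
      exact hpiece m h u hu
    · obtain ⟨k, rfl⟩ := Nat.exists_eq_add_of_le h
      rw [hidxval' k]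
      rw [hval' k, show n + k + 1 = n + (k + 1) by omega, hval' (k + 1)] at hu
      exact hpiece' k (by omega) u hu
  · rw [Finset.range_eq_Ico, ← Finset.sum_Ico_consecutive _ (Nat.zero_le n) (Nat.le_add_right n n'),
      ← Finset.range_eq_Ico, Finset.sum_Ico_eq_sum_range]
    have e₁ : ∀ m ∈ Finset.range n,
        (ω.f (idx'' m) (γ (t'' (m + 1))) - ω.f (idx'' m) (γ (t'' m))) =
        (ω.f (idx m) (γ (t (m + 1))) - ω.f (idx m) (γ (t m))) := by
      intro m hm
      rw [Finset.mem_range] at hm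
      rw [hidxval m hm, hval m hm.le, hval (m + 1) (Nat.succ_le_of_lt hm)]
    have e₂ : ∀ k ∈ Finset.range n',
        (ω.f (idx'' (n + k)) (γ (t'' (n + k + 1))) - ω.f (idx'' (n + k)) (γ (t'' (n + k)))) =
        (ω.f (jdx k) (γ (s (k + 1))) - ω.f (jdx k) (γ (s k))) := by
      intro k _
      rw [hidxval' k, hval' k, show n + k + 1 = n + (k + 1) by omega, hval' (k + 1)]
    rw [hsum, hsum']
    rw [Finset.sum_congr rfl e₁]
    congr 1
    rw [show n + n' - n = n' by omega]
    exact (Finset.sum_congr rfl e₂).symm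

/-- Translation invariance of the path integral. -/
lemma IsPathIntegral.translate (h : ω.IsPathIntegral γ a b r) (c a' b' : ℝ)
    (ha' : a' = a + c) (hb' : b' = b + c) (hγ' : ∀ τ, γ' τ = γ (τ - c)) :
    ω.IsPathIntegral γ' a' b' r := by
  obtain ⟨n, t, idx, h0, hn, hmono, hpiece, hsum⟩ := h
  refine ⟨n, fun m => t m + c, idx, ?_, ?_, ?_, ?_, ?_⟩
  · show t 0 + c = a'; rw [h0, ha']
  · show t n + c = b'; rw [hn, hb']
  · intro m hm
    show t m + c ≤ t (m + 1) + c
    have := hmono m hm; linarith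
  · intro m hm u hu
    have hu' : u ∈ Set.Icc (t m + c) (t (m + 1) + c) := hu
    rw [hγ']
    exact hpiece m hm (u - c) ⟨by linarith [hu'.1], by linarith [hu'.2]⟩
  · rw [hsum]
    apply Finset.sum_congr rfl
    intro m _
    rw [hγ', hγ']
    simp

/-- Reversal of the path integral. -/
lemma IsPathIntegral.reverse (h : ω.IsPathIntegral γ a b r)
    (hγ' : ∀ τ, γ' τ = γ (a + b - τ)) : ω.IsPathIntegral γ' a b (-r) := by
  obtain ⟨n, t, idx, h0, hn, hmono, hpiece, hsum⟩ := h
  refine ⟨n, fun m => a + b - t (n - m), fun m => idx (n - (m + 1)), ?_, ?_, ?_, ?_, ?_⟩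
  · simp only [Nat.sub_zero]; rw [hn]; ring
  · simp only [Nat.sub_self]; rw [h0]; ring
  · intro m hm
    show a + b - t (n - m) ≤ a + b - t (n - (m + 1))
    have h1 : n - (m + 1) < n := by omega
    have h2 : n - (m + 1) + 1 = n - m := by omega
    have := hmono _ h1
    rw [h2] at this
    linarith
  · intro m hm u hu
    have hu' : u ∈ Set.Icc (a + b - t (n - m)) (a + b - t (n - (m + 1))) := hu
    have h2 : n - (m + 1) + 1 = n - m := by omega
    rw [hγ']
    apply hpiece (n - (m + 1)) (by omega)
    rw [h2]
    simp only [Set.mem_Icc] at hu' ⊢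
    constructor
    · linarith [hu'.2]
    · linarith [hu'.1]
  · have hγ'' : ∀ x : ℝ, γ' (a + b - x) = γ x := fun x => by
      rw [hγ', show a + b - (a + b - x) = x by ring]
    have key : ∀ m ∈ Finset.range n,
        (ω.f (idx (n - (m + 1))) (γ' (a + b - t (n - (m + 1)))) -
          ω.f (idx (n - (m + 1))) (γ' (a + b - t (n - m)))) =
        -(fun k => ω.f (idx k) (γ (t (k + 1))) - ω.f (idx k) (γ (t k))) (n - 1 - m) := by
      intro m hm
      rw [Finset.mem_range] at hm
      rw [hγ'', hγ'']
      simp only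
      rw [show n - (m + 1) = n - 1 - m by omega, show n - m = n - 1 - m + 1 by omega]
      ring
    rw [Finset.sum_congr rfl key,
      Finset.sum_range_reflect (fun k => -(ω.f (idx k) (γ (t (k + 1))) - ω.f (idx k) (γ (t k)))) n]
    rw [hsum]
    rw [← Finset.sum_neg_distrib]

end ClosedOneForm

namespace ClosedOneForm

variable {X : Type} [TopologicalSpace X] {ω : ClosedOneForm X} {γ : ℝ → X}

/-- Uniform bound on the partial integrals of a continuous path on `[0,1]`. -/
lemma exists_partial_bound (hγ : ContinuousOn γ (Set.Icc 0 1)) :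
    ∃ B : ℝ, ∀ u ∈ Set.Icc (0:ℝ) 1, ∀ r, ω.IsPathIntegral γ 0 u r → |r| ≤ B := by
  classical
  obtain ⟨r0, hr0⟩ := integral_exists zero_le_one hγ
  obtain ⟨n, t, idx, h0, hn, hmono, hpiece, -⟩ := hr0
  have hne : n ≠ 0 := by
    intro h
    subst h
    rw [h0] at hn
    norm_num at hn
  have htmem : ∀ m ≤ n, t m ∈ Set.Icc (0:ℝ) 1 := fun m hm =>
    ⟨h0 ▸ chain_mono hmono (Nat.zero_le m) hm, hn ▸ chain_mono hmono hm le_rfl⟩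
  have hCex : ∀ m : ℕ, m < n → ∃ C : ℝ, ∀ s' ∈ Set.Icc (t m) (t (m + 1)),
      |ω.f (idx m) (γ s')| ≤ C := by
    intro m hm
    have hsub : Set.Icc (t m) (t (m + 1)) ⊆ Set.Icc (0:ℝ) 1 :=
      Set.Icc_subset_Icc (htmem m hm.le).1 (htmem (m + 1) hm).2
    have hcont : ContinuousOn (ω.f (idx m) ∘ γ) (Set.Icc (t m) (t (m + 1))) :=
      (ω.cont (idx m)).comp (hγ.mono hsub) (fun s' hs' => hpiece m hm s' hs')
    obtain ⟨C, hC⟩ := isCompact_Icc.exists_bound_of_continuousOn hcont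
    exact ⟨C, fun s' hs' => by simpa [Real.norm_eq_abs] using hC s' hs'⟩
  choose! C hC using hCex
  have hC0 : ∀ m, m < n → 0 ≤ C m := by
    intro m hm
    have := hC m hm (t m) (Set.left_mem_Icc.mpr (hmono m hm))
    exact le_trans (abs_nonneg _) this
  refine ⟨∑ m ∈ Finset.range n, 2 * C m, ?_⟩
  intro u hu r hr
  have hfind : ∀ N : ℕ, N ≠ 0 → t 0 ≤ u → u ≤ t N → ∃ k, k < N ∧ t k ≤ u ∧ u ≤ t (k + 1) := by
    intro N
    induction N with
    | zero => intro h; exact absurd rfl h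
    | succ N ih =>
      intro _ h0u huN
      by_cases hN : N = 0
      · subst hN; exact ⟨0, by omega, h0u, huN⟩
      · by_cases htn : t N ≤ u
        · exact ⟨N, by omega, htn, huN⟩
        · obtain ⟨k, hk, h1, h2⟩ := ih hN h0u (le_of_not_ge htn)
          exact ⟨k, by omega, h1, h2⟩
  obtain ⟨k, hkn, hkt, hkt1⟩ := hfind n hne (by rw [h0]; exact hu.1) (by rw [hn]; exact hu.2)
  set t' : ℕ → ℝ := fun m => if m = k + 1 then u else t m with ht'
  have ht'v : ∀ m, m ≠ k + 1 → t' m = t m := fun m hm => if_neg hm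
  have ht'k1 : t' (k + 1) = u := if_pos rfl
  set g : ℕ → ℝ := fun m => ω.f (idx m) (γ (t (m + 1))) - ω.f (idx m) (γ (t m)) with hg
  set ρ : ℝ := (∑ m ∈ Finset.range k, g m) + (ω.f (idx k) (γ u) - ω.f (idx k) (γ (t k)))
    with hρ
  have hrρ : ω.IsPathIntegral γ 0 u ρ := by
    refine ⟨k + 1, t', idx, ?_, ht'k1, ?_, ?_, ?_⟩
    · rw [ht'v 0 (by omega), h0]
    · intro m hm
      rcases Nat.lt_succ_iff_lt_or_eq.mp hm with h | h
      · rw [ht'v m (by omega), ht'v (m + 1) (by omega)]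
        exact hmono m (by omega)
      · rw [h, ht'v k (by omega), ht'k1]
        exact hkt
    · intro m hm s' hs'
      rcases Nat.lt_succ_iff_lt_or_eq.mp hm with h | h
      · rw [ht'v m (by omega), ht'v (m + 1) (by omega)] at hs'
        exact hpiece m (by omega) s' hs'
      · rw [h] at hs' ⊢
        rw [ht'v k (by omega), ht'k1] at hs'
        exact hpiece k hkn s' ⟨hs'.1, le_trans hs'.2 hkt1⟩
    · rw [Finset.sum_range_succ]
      have e : ∀ m ∈ Finset.range k,
          (ω.f (idx m) (γ (t' (m + 1))) - ω.f (idx m) (γ (t' m))) = g m := by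
        intro m hm
        rw [Finset.mem_range] at hm
        rw [ht'v m (by omega), ht'v (m + 1) (by omega)]
      rw [Finset.sum_congr rfl e, ht'k1, ht'v k (by omega)]
  have hrval : r = ρ :=
    integral_unique (hγ.mono (Set.Icc_subset_Icc le_rfl hu.2)) hr hrρ
  rw [hrval]
  have habs : |ρ| ≤ (∑ m ∈ Finset.range k, |g m|) + 2 * C k := by
    rw [hρ]
    refine le_trans (abs_add_le _ _) ?_
    gcongr
    · exact Finset.abs_sum_le_sum_abs _ _
    · refine le_trans (abs_sub _ _) ?_
      have h1 := hC k hkn u ⟨hkt, hkt1⟩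
      have h2 := hC k hkn (t k) (Set.left_mem_Icc.mpr (hmono k hkn))
      linarith
  have hterm : ∀ m ∈ Finset.range k, |g m| ≤ 2 * C m := by
    intro m hm
    rw [Finset.mem_range] at hm
    have hmn : m < n := by omega
    have h1 := hC m hmn (t (m + 1)) (Set.right_mem_Icc.mpr (hmono m hmn))
    have h2 := hC m hmn (t m) (Set.left_mem_Icc.mpr (hmono m hmn))
    refine le_trans (abs_sub _ _) (by linarith)
  have hsum1 : (∑ m ∈ Finset.range k, |g m|) ≤ ∑ m ∈ Finset.range k, 2 * C m :=
    Finset.sum_le_sum hterm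
  have hsum2 : (∑ m ∈ Finset.range k, 2 * C m) + 2 * C k ≤ ∑ m ∈ Finset.range n, 2 * C m := by
    rw [← Finset.sum_range_succ]
    apply Finset.sum_le_sum_of_subset_of_nonneg
    · exact Finset.range_subset_range.mpr (by omega)
    · intro m hm _
      rw [Finset.mem_range] at hm
      linarith [hC0 m hm]
  linarith

/-- Continuity in a parameter of the path integral over a uniformly continuous
family of paths. -/
lemma contOn_param_integral {V : Set X} {H : X × ℝ → X}
    (hH : ContinuousOn H (V ×ˢ Set.Icc (0:ℝ) 1)) :
    ContinuousOn (fun x => ω.pathIntegral (fun τ => H (x, τ)) 0 1) V := by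
  have hpc : ∀ x ∈ V, ContinuousOn (fun τ => H (x, τ)) (Set.Icc (0:ℝ) 1) := by
    intro x hx
    exact hH.comp (Continuous.continuousOn (by fun_prop)) (fun τ hτ => ⟨hx, hτ⟩)
  intro x₀ hx₀
  obtain ⟨r, n, t, idx, h0, hn, hmono, hpiece, hsum⟩ :=
    integral_exists zero_le_one (hpc x₀ hx₀)
  have htmem : ∀ m ≤ n, t m ∈ Set.Icc (0:ℝ) 1 := fun m hm =>
    ⟨h0 ▸ chain_mono hmono (Nat.zero_le m) hm, hn ▸ chain_mono hmono hm le_rfl⟩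
  have hrel : ∀ m : ℕ, m < n → ∃ u : Set X, IsOpen u ∧ x₀ ∈ u ∧
      ∀ x ∈ u, x ∈ V → ∀ τ ∈ Set.Icc (t m) (t (m + 1)), H (x, τ) ∈ ω.U (idx m) := by
    intro m hm
    obtain ⟨O, hOo, hOeq⟩ := continuousOn_iff'.mp hH (ω.U (idx m)) (ω.isOpen (idx m))
    have hsub0 : Set.Icc (t m) (t (m + 1)) ⊆ Set.Icc (0:ℝ) 1 :=
      Set.Icc_subset_Icc (htmem m hm.le).1 (htmem (m + 1) hm).2
    have hsub : ({x₀} : Set X) ×ˢ Set.Icc (t m) (t (m + 1)) ⊆ O := by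
      rintro ⟨x, τ⟩ ⟨hx, hτ⟩
      rw [Set.mem_singleton_iff] at hx
      subst hx
      have : (x, τ) ∈ H ⁻¹' (ω.U (idx m)) ∩ (V ×ˢ Set.Icc (0:ℝ) 1) :=
        ⟨hpiece m hm τ hτ, hx₀, hsub0 hτ⟩
      rw [hOeq] at this
      exact this.1
    obtain ⟨u, v, huo, hvo, hxu, htv, huv⟩ :=
      generalized_tube_lemma isCompact_singleton isCompact_Icc hOo hsub
    refine ⟨u, huo, hxu rfl, fun x hxu' hxV τ hτ => ?_⟩
    have : (x, τ) ∈ O ∩ (V ×ˢ Set.Icc (0:ℝ) 1) :=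
      ⟨huv ⟨hxu', htv hτ⟩, hxV, hsub0 hτ⟩
    rw [← hOeq] at this
    exact this.1
  choose! u huo hxu hu using hrel
  set Nn : Set X := ⋂ m ∈ Finset.range n, u m with hNn
  have hNo : IsOpen Nn := isOpen_biInter_finset fun m hm => huo m (Finset.mem_range.mp hm)
  have hxN : x₀ ∈ Nn := Set.mem_biInter fun m hm => hxu m (Finset.mem_range.mp hm)
  set g : X → ℝ := fun x => ∑ m ∈ Finset.range n,
    (ω.f (idx m) (H (x, t (m + 1))) - ω.f (idx m) (H (x, t m))) with hgdef
  have hmemN : ∀ x ∈ Nn, ∀ m, m < n → x ∈ u m := by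
    intro x hx m hm
    exact Set.mem_iInter₂.mp hx m (Finset.mem_range.mpr hm)
  have hgeq : ∀ x ∈ V ∩ Nn, ω.pathIntegral (fun τ => H (x, τ)) 0 1 = g x := by
    rintro x ⟨hxV, hxNn⟩
    apply pathIntegral_eq (hpc x hxV)
    exact ⟨n, t, idx, h0, hn, hmono,
      fun m hm τ hτ => hu m hm x (hmemN x hxNn m hm) hxV τ hτ, rfl⟩
  have hgc : ContinuousOn g (V ∩ Nn) := by
    apply continuousOn_finset_sum
    intro m hm
    rw [Finset.mem_range] at hm
    have hterm : ∀ c : ℝ, c ∈ Set.Icc (t m) (t (m + 1)) →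
        ContinuousOn (fun x => ω.f (idx m) (H (x, c))) (V ∩ Nn) := by
      intro c hc
      apply (ω.cont (idx m)).comp
      · exact hH.comp (Continuous.continuousOn (by fun_prop))
          (fun x hx => ⟨hx.1, Set.Icc_subset_Icc (htmem m hm.le).1 (htmem (m + 1) hm).2 hc⟩)
      · intro x hx
        exact hu m hm x (hmemN x hx.2 m hm) hx.1 c hc
    exact (hterm (t (m + 1)) (Set.right_mem_Icc.mpr (hmono m hm))).sub
      (hterm (t m) (Set.left_mem_Icc.mpr (hmono m hm)))
  rw [← continuousWithinAt_inter (hNo.mem_nhds hxN)]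
  exact (hgc x₀ ⟨hx₀, hxN⟩).congr (fun y hy => hgeq y hy) (hgeq x₀ ⟨hx₀, hxN⟩)

end ClosedOneForm

namespace ClosedOneForm

variable {X : Type} [TopologicalSpace X] {ω : ClosedOneForm X} {γ : ℝ → X} {a : ℝ}

lemma isPathIntegral_refl (hne : Nonempty ω.ι) : ω.IsPathIntegral γ a a 0 := by
  classical
  exact ⟨0, fun _ => a, fun _ => Classical.arbitrary _, rfl, rfl,
    fun m hm => absurd hm (by omega), fun m hm => absurd hm (by omega), by simp⟩

/-- The main deformation lemma: if `X` (compact Hausdorff) has `cat(X) ≤ K+1`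
and `ω` has a loop with nonzero integral, then `Cat(X,ω) ≤ K`. -/
lemma main_step {X : Type} [TopologicalSpace X] [T2Space X] [CompactSpace X]
    (ω : ClosedOneForm X) {K : ℕ} (hcat : CatLE X Set.univ (K + 1))
    (hξ : ∃ γ : ℝ → X, ContinuousOn γ (Set.Icc (0 : ℝ) 1) ∧ γ 0 = γ 1 ∧
      ω.pathIntegral γ 0 1 ≠ 0) :
    ω.BigCatLE K := by
  classical
  obtain ⟨γ, hγc, hγloop, hγne⟩ := hξ
  haveI hneι : Nonempty ω.ι := ⟨(ω.covers (γ 0)).choose⟩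
  obtain ⟨r₀, hr₀⟩ := integral_exists (ω := ω) zero_le_one hγc
  have hr₀ne : r₀ ≠ 0 := by
    rw [← pathIntegral_eq hγc hr₀]; exact hγne
  -- pick the direction of the loop so that the period is negative
  obtain ⟨δp, hδc, hδloop, rneg, hrn, hrneg⟩ :
      ∃ (δp : ℝ → X), ContinuousOn δp (Set.Icc (0 : ℝ) 1) ∧ δp 0 = δp 1 ∧
        ∃ rn : ℝ, ω.IsPathIntegral δp 0 1 rn ∧ rn < 0 := by
    rcases lt_or_gt_of_ne hr₀ne with h | h
    · exact ⟨γ, hγc, hγloop, r₀, hr₀, h⟩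
    · refine ⟨fun τ => γ (0 + 1 - τ), ?_, ?_, -r₀, hr₀.reverse (fun τ => rfl), by linarith⟩
      · apply hγc.comp (Continuous.continuousOn (by fun_prop))
        intro τ hτ
        exact ⟨by simp; linarith [hτ.2], by simp; linarith [hτ.1]⟩
      · show γ (0 + 1 - 0) = γ (0 + 1 - 1)
        rw [show (0:ℝ) + 1 - 0 = 1 by ring, show (0:ℝ) + 1 - 1 = 0 by ring]
        exact hγloop.symm
  -- periodic extension of the loop
  set L : ℝ → X := fun τ => δp (Int.fract τ) with hLdef
  have hLc : Continuous L := by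
    have h1 : Continuous fun st : ℝ × ℝ => δp (Int.fract st.2) := by
      apply ContinuousOn.comp_fract' (f := fun (_ : ℝ) τ => δp τ)
      · exact hδc.comp continuous_snd.continuousOn (fun p hp => hp.2)
      · exact fun _ => hδloop
    exact h1.comp (continuous_id.prodMk continuous_id)
  have hLeq : Set.EqOn δp L (Set.Icc 0 1) := by
    intro τ hτ
    rcases lt_or_eq_of_le hτ.2 with h | h
    · rw [hLdef]; simp only
      rw [Int.fract_eq_self.mpr ⟨hτ.1, h⟩]
    · rw [hLdef]; simp only
      rw [h, Int.fract_one]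
      exact hδloop.symm
  have hL1 : ω.IsPathIntegral L 0 1 rneg := hrn.congr hLeq
  have hLper : ∀ (k : ℕ) (τ : ℝ), L (τ - k) = L τ := by
    intro k τ
    rw [hLdef]; simp only
    rw [show ((k:ℝ)) = ((k:ℤ):ℝ) by push_cast; ring, Int.fract_sub_intCast]
  have hLk : ∀ k : ℕ, ω.IsPathIntegral L 0 (k : ℝ) (k * rneg) := by
    intro k
    induction k with
    | zero => simpa using isPathIntegral_refl hneι
    | succ k ih =>
      have hseg : ω.IsPathIntegral L (k : ℝ) ((k : ℝ) + 1) rneg :=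
        hL1.translate (k : ℝ) _ _ (by ring) (by ring) (fun τ => (hLper k τ).symm)
      have := ih.trans hseg
      rw [show ((k:ℝ) + 1) = ((k+1 : ℕ) : ℝ) by push_cast; ring] at this
      rw [show ((k:ℕ)+1 : ℕ) * rneg = (k : ℝ) * rneg + rneg by push_cast; ring]
      exact this
  obtain ⟨B, hB⟩ := exists_partial_bound (ω := ω) hLc.continuousOn
  have hLs : ∀ s : ℝ, 0 ≤ s →
      ∃ J : ℝ, ω.IsPathIntegral L 0 s (((⌊s⌋ : ℤ) : ℝ) * rneg + J) ∧ |J| ≤ B := by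
    intro s hs
    set k : ℕ := (⌊s⌋).toNat with hkdef
    have hk : ((k : ℕ) : ℝ) = ((⌊s⌋ : ℤ) : ℝ) := by
      rw [hkdef]
      exact_mod_cast Int.toNat_of_nonneg (Int.floor_nonneg.mpr hs)
    have hks : ((k : ℕ) : ℝ) ≤ s := by rw [hk]; exact Int.floor_le s
    have hsk1 : s - k ≤ 1 := by
      have := Int.lt_floor_add_one s
      have h2 : s < ((k:ℝ)) + 1 := by rw [hk]; exact_mod_cast this
      linarith
    obtain ⟨j, hj⟩ := integral_exists (ω := ω) (show (0:ℝ) ≤ s - k by linarith)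
      hLc.continuousOn
    have hjb : |j| ≤ B := hB (s - k) ⟨by linarith, hsk1⟩ j hj
    have hseg : ω.IsPathIntegral L (k : ℝ) s j :=
      hj.translate (k : ℝ) _ _ (by ring) (by ring) (fun τ => (hLper k τ).symm)
    refine ⟨j, ?_, hjb⟩
    have := (hLk k).trans hseg
    rw [← hk]
    exact this
  -- the categorical cover and its shrinking
  set y₀ : X := δp 0 with hy₀def
  obtain ⟨V, hVo, hVcov, hVnull⟩ := hcat
  obtain ⟨i₀, hi₀⟩ := Set.mem_iUnion.mp (hVcov (Set.mem_univ y₀))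
  obtain ⟨W, hWcov, hWo, hWcl⟩ := exists_subset_iUnion_closure_subset
    isClosed_univ hVo (fun x _ => Set.toFinite _) hVcov
  obtain ⟨HH, x₀, hHc, hH0, hH1⟩ := hVnull i₀
  set U : Set X := W i₀ with hUdef
  have hUV : U ⊆ V i₀ := fun x hx => hWcl i₀ (subset_closure hx)
  -- the contraction integral and its bound
  set I : X → ℝ := fun x => ω.pathIntegral (fun τ => HH (x, τ)) 0 1 with hIdef
  have hIc : ContinuousOn I (V i₀) := contOn_param_integral hHc
  have hclU : IsCompact (closure U) := isClosed_closure.isCompact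
  obtain ⟨M, hM⟩ := hclU.exists_bound_of_continuousOn (hIc.mono (hWcl i₀))
  have hMb : ∀ x ∈ U, |I x| ≤ M := fun x hx => by
    simpa [Real.norm_eq_abs] using hM x (subset_closure hx)
  have hy₀V : y₀ ∈ V i₀ := hi₀
  have hpc : ∀ x ∈ V i₀, ContinuousOn (fun τ => HH (x, τ)) (Set.Icc (0:ℝ) 1) := by
    intro x hx
    exact hHc.comp (Continuous.continuousOn (by fun_prop)) (fun τ hτ => ⟨hx, hτ⟩)
  obtain ⟨c', hc'⟩ := integral_exists (ω := ω) zero_le_one (hpc y₀ hy₀V)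
  have hq : ω.IsPathIntegral (fun τ => HH (y₀, 2 - τ)) 1 2 (-c') := by
    have h1 : ω.IsPathIntegral (fun τ => HH (y₀, 0 + 1 - τ)) 0 1 (-c') :=
      hc'.reverse (fun τ => rfl)
    exact h1.translate 1 1 2 (by ring) (by ring)
      (fun τ => by rw [show (2:ℝ) - τ = 0 + 1 - (τ - 1) by ring])
  -- the pushing homotopy
  set h : X × ℝ → X := fun p =>
    if p.2 ≤ 1 then HH p else if p.2 ≤ 2 then HH (y₀, 2 - p.2) else L (p.2 - 2) with hhdef
  have hhval1 : ∀ (x : X) (τ : ℝ), τ ≤ 1 → h (x, τ) = HH (x, τ) := by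
    intro x τ hτ
    rw [hhdef]; simp only
    rw [if_pos hτ]
  have hhval2 : ∀ (x : X) (τ : ℝ), x ∈ V i₀ → 1 ≤ τ → τ ≤ 2 → h (x, τ) = HH (y₀, 2 - τ) := by
    intro x τ hx h1 h2
    rw [hhdef]; simp only
    by_cases hτ : τ ≤ 1
    · have : τ = 1 := le_antisymm hτ h1
      subst this
      rw [if_pos le_rfl, hH1 x hx, show (2:ℝ) - 1 = 1 by ring]
      exact (hH1 y₀ hy₀V).symm
    · rw [if_neg hτ, if_pos h2]
  have hhval3 : ∀ (x : X) (τ : ℝ), x ∈ V i₀ → 2 ≤ τ → h (x, τ) = L (τ - 2) := by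
    intro x τ hx h2
    rw [hhdef]; simp only
    by_cases hτ1 : τ ≤ 1
    · linarith
    · rw [if_neg hτ1]
      by_cases hτ2 : τ ≤ 2
      · have : τ = 2 := le_antisymm hτ2 h2
        subst this
        rw [if_pos le_rfl]
        rw [show (2:ℝ) - 2 = 0 by ring, hH0 y₀ hy₀V]
        rw [hLdef]; simp only
        rw [Int.fract_zero]
      · rw [if_neg hτ2]
  -- continuity of the homotopy
  have hhc : ContinuousOn h (U ×ˢ Set.Ici (0:ℝ)) := by
    apply contOn_union_relClosed (F₁ := {p : X × ℝ | p.2 ≤ 1}) (F₂ := {p : X × ℝ | 1 ≤ p.2})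
      (fun p _ => le_total p.2 1)
      (isClosed_le continuous_snd continuous_const)
      (isClosed_le continuous_const continuous_snd)
    · apply ContinuousOn.congr (f := HH)
      · apply hHc.mono
        rintro ⟨x, τ⟩ ⟨⟨hxU, hτ0⟩, hτ1⟩
        exact ⟨hUV hxU, ⟨hτ0, hτ1⟩⟩
      · rintro ⟨x, τ⟩ ⟨⟨hxU, hτ0⟩, (hτ1 : τ ≤ 1)⟩
        exact hhval1 x τ hτ1
    · apply contOn_union_relClosed (F₁ := {p : X × ℝ | p.2 ≤ 2}) (F₂ := {p : X × ℝ | 2 ≤ p.2})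
        (fun p _ => le_total p.2 2)
        (isClosed_le continuous_snd continuous_const)
        (isClosed_le continuous_const continuous_snd)
      · apply ContinuousOn.congr (f := fun p : X × ℝ => HH (y₀, 2 - p.2))
        · apply hHc.comp (Continuous.continuousOn (by fun_prop))
          rintro ⟨x, τ⟩ ⟨⟨⟨hxU, hτ0⟩, (h1 : 1 ≤ τ)⟩, (h2 : τ ≤ 2)⟩
          show (y₀, 2 - τ) ∈ V i₀ ×ˢ Set.Icc (0:ℝ) 1
          refine ⟨hy₀V, ⟨?_, ?_⟩⟩
          · show (0:ℝ) ≤ 2 - τ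
            linarith
          · show (2:ℝ) - τ ≤ 1
            linarith
        · rintro ⟨x, τ⟩ ⟨⟨⟨hxU, hτ0⟩, (h1 : 1 ≤ τ)⟩, (h2 : τ ≤ 2)⟩
          exact hhval2 x τ (hUV hxU) h1 h2
      · apply ContinuousOn.congr (f := fun p : X × ℝ => L (p.2 - 2))
        · exact (hLc.comp (by fun_prop)).continuousOn
        · rintro ⟨x, τ⟩ ⟨⟨⟨hxU, hτ0⟩, (h1 : 1 ≤ τ)⟩, (h2 : 2 ≤ τ)⟩
          exact hhval3 x τ (hUV hxU) h2
  have hh0 : ∀ x ∈ U, h (x, 0) = x := by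
    intro x hx
    rw [hhval1 x 0 (by norm_num)]
    exact hH0 x (hUV hx)
  -- path continuity
  have hpath : ∀ x ∈ U, ∀ t : ℝ, 0 ≤ t → ContinuousOn (fun τ => h (x, τ)) (Set.Icc 0 t) := by
    intro x hx t _
    apply hhc.comp (Continuous.continuousOn (by fun_prop))
    intro τ hτ
    exact ⟨hx, hτ.1⟩
  -- the three segments of the integral
  have hIs : ∀ x ∈ U, ω.IsPathIntegral (fun τ => h (x, τ)) 0 1 (I x) := by
    intro x hx
    obtain ⟨ix, hix⟩ := integral_exists (ω := ω) zero_le_one (hpc x (hUV hx))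
    have hval : I x = ix := pathIntegral_eq (hpc x (hUV hx)) hix
    rw [hval]
    exact hix.congr (fun τ hτ => (hhval1 x τ hτ.2).symm)
  have hseg2 : ∀ x ∈ U, ω.IsPathIntegral (fun τ => h (x, τ)) 1 2 (-c') := by
    intro x hx
    exact hq.congr (fun τ hτ => (hhval2 x τ (hUV hx) hτ.1 hτ.2).symm)
  have hseg3 : ∀ x ∈ U, ∀ t : ℝ, 2 ≤ t →
      ∃ J : ℝ, ω.IsPathIntegral (fun τ => h (x, τ)) 2 t (((⌊t - 2⌋ : ℤ) : ℝ) * rneg + J) ∧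
        |J| ≤ B := by
    intro x hx t ht
    obtain ⟨J, hJ, hJb⟩ := hLs (t - 2) (by linarith)
    refine ⟨J, ?_, hJb⟩
    have h1 : ω.IsPathIntegral (fun τ => L (τ - 2)) 2 t (((⌊t - 2⌋ : ℤ) : ℝ) * rneg + J) :=
      hJ.translate 2 2 t (by ring) (by ring) (fun τ => rfl)
    exact h1.congr (fun τ hτ => (hhval3 x τ (hUV hx) hτ.1).symm)
  -- assemble `BigCatLE`
  refine ⟨U, hWo i₀, ?_, h, hhc, hh0, ?_⟩
  · -- CatLE X Uᶜ K
    refine ⟨fun j => V (i₀.succAbove j), fun j => hVo _, ?_, fun j => hVnull _⟩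
    intro x hx
    obtain ⟨i, hi⟩ := Set.mem_iUnion.mp (hWcov (Set.mem_univ x))
    have hne : i ≠ i₀ := by
      intro hEq
      subst hEq
      exact hx hi
    obtain ⟨j, hj⟩ := Fin.exists_succAbove_eq hne
    exact Set.mem_iUnion.mpr ⟨j, by rw [hj]; exact hWcl i (subset_closure hi)⟩
  · -- the drift estimate
    intro Cr
    have hrnegpos : 0 < -rneg := by linarith
    refine ⟨max 2 (3 + (Cr + M + |c'| + B) / (-rneg)), ?_⟩
    intro x hx t ht
    have ht2 : 2 ≤ t := le_trans (le_max_left _ _) ht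
    obtain ⟨J, hJ, hJb⟩ := hseg3 x hx t ht2
    have htot : ω.IsPathIntegral (fun τ => h (x, τ)) 0 t
        (I x + -c' + (((⌊t - 2⌋ : ℤ) : ℝ) * rneg + J)) :=
      ((hIs x hx).trans (hseg2 x hx)).trans hJ
    rw [pathIntegral_eq (hpath x hx t (by linarith)) htot]
    -- bound each term
    have hIxb : I x ≤ M := le_trans (le_abs_self _) (hMb x hx)
    have hJB : J ≤ B := le_trans (le_abs_self _) hJb
    have hc'b : -c' ≤ |c'| := neg_le_abs _
    have hfl : t - 3 ≤ ((⌊t - 2⌋ : ℤ) : ℝ) := by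
      have := Int.sub_one_lt_floor (t - 2)
      linarith
    have hflmul : ((⌊t - 2⌋ : ℤ) : ℝ) * rneg ≤ (t - 3) * rneg :=
      mul_le_mul_of_nonpos_right hfl (by linarith)
    have htT : 3 + (Cr + M + |c'| + B) / (-rneg) ≤ t := le_trans (le_max_right _ _) ht
    have hdiv : (Cr + M + |c'| + B) / (-rneg) ≤ t - 3 := by linarith
    have hmul : Cr + M + |c'| + B ≤ (t - 3) * (-rneg) := by
      rw [div_le_iff₀ hrnegpos] at hdiv
      linarith [hdiv]
    have : (t - 3) * rneg ≤ -(Cr + M + |c'| + B) := by nlinarith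
    linarith

end ClosedOneForm

namespace FinCW

open Metric

variable {X : Type} [TopologicalSpace X] [T2Space X] [CompactSpace X] {c : FinCW X}

/-- The open cell of index `i`. -/
def cell (c : FinCW X) (i : Fin c.n) : Set X := c.φ i '' Metric.ball 0 1

/-- The closed cell of index `i`. -/
def cb (c : FinCW X) (i : Fin c.n) : Set X := c.φ i '' Metric.closedBall 0 1

lemma cell_subset_cb {i : Fin c.n} : c.cell i ⊆ c.cb i :=
  Set.image_mono Metric.ball_subset_closedBall

lemma exists_cell (x : X) : ∃ i, x ∈ c.cell i := by
  obtain ⟨p, hp, -⟩ := c.partition x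
  exact ⟨p.1, p.2, hp.1, hp.2⟩

lemma eq_of_mem_cell {i j : Fin c.n} {z : EuclideanSpace ℝ (Fin (c.dim i))}
    {w : EuclideanSpace ℝ (Fin (c.dim j))} (hz : z ∈ Metric.ball 0 1)
    (hw : w ∈ Metric.ball 0 1) (h : c.φ i z = c.φ j w) : i = j := by
  obtain ⟨p, -, hu⟩ := c.partition (c.φ i z)
  have e1 := hu ⟨i, z⟩ ⟨hz, rfl⟩
  have e2 := hu ⟨j, w⟩ ⟨hw, h.symm⟩
  have : (⟨i, z⟩ : (i : Fin c.n) × EuclideanSpace ℝ (Fin (c.dim i))) = ⟨j, w⟩ := by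
    rw [e1, ← e2]
  exact congrArg Sigma.fst this

lemma cell_disjoint {i j : Fin c.n} {x : X} (hi : x ∈ c.cell i) (hj : x ∈ c.cell j) : i = j := by
  obtain ⟨z, hz, rfl⟩ := hi
  obtain ⟨w, hw, hφ⟩ := hj
  exact eq_of_mem_cell hz hw hφ.symm

lemma image_compact {i : Fin c.n} {K : Set (EuclideanSpace ℝ (Fin (c.dim i)))}
    (hK : IsCompact K) (hsub : K ⊆ Metric.closedBall 0 1) : IsCompact (c.φ i '' K) :=
  hK.image_of_continuousOn ((c.cont i).mono hsub)

lemma cb_compact {i : Fin c.n} : IsCompact (c.cb i) :=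
  image_compact (isCompact_closedBall _ _) le_rfl

lemma sphere_not_mem {i : Fin c.n} {z : EuclideanSpace ℝ (Fin (c.dim i))}
    (hz : z ∈ Metric.sphere 0 1) : c.φ i z ∉ c.cell i := by
  obtain ⟨j, hdim, w, hw, hjw⟩ := c.sphere_lt i z hz
  rintro ⟨v, hv, hve⟩
  have : i = j := eq_of_mem_cell hv hw (by rw [hve, ← hjw])
  rw [this] at hdim
  exact lt_irrefl _ hdim
lemma sphere_mem_lower {i : Fin c.n} {z : EuclideanSpace ℝ (Fin (c.dim i))}
    (hz : z ∈ Metric.sphere 0 1) : ∃ j, c.dim j < c.dim i ∧ c.φ i z ∈ c.cell j := by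
  obtain ⟨j, hdim, hw⟩ := c.sphere_lt i z hz
  exact ⟨j, hdim, hw⟩

lemma inj_cb {i : Fin c.n} {z w : EuclideanSpace ℝ (Fin (c.dim i))}
    (hz : z ∈ Metric.ball 0 1) (hw : w ∈ Metric.closedBall 0 1)
    (h : c.φ i z = c.φ i w) : z = w := by
  rcases lt_or_eq_of_le (mem_closedBall_zero_iff.mp hw) with h1 | h1
  · exact c.injOn i hz (mem_ball_zero_iff.mpr h1) h
  · exfalso
    apply sphere_not_mem (c := c) (i := i) (z := w) (mem_sphere_zero_iff_norm.mpr h1)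
    rw [← h]
    exact ⟨z, hz, rfl⟩

lemma mem_cb_cases {i : Fin c.n} {x : X} (hx : x ∈ c.cb i) :
    x ∈ c.cell i ∨ ∃ j, c.dim j < c.dim i ∧ x ∈ c.cell j := by
  obtain ⟨z, hz, rfl⟩ := hx
  rcases lt_or_eq_of_le (mem_closedBall_zero_iff.mp hz) with h1 | h1
  · exact Or.inl ⟨z, mem_ball_zero_iff.mpr h1, rfl⟩
  · exact Or.inr (sphere_mem_lower (mem_sphere_zero_iff_norm.mpr h1))

/-- The set of cells which remain: all removed cells have dimension at least
that of any remaining cell. -/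
def DownClosed (c : FinCW X) (T : Finset (Fin c.n)) : Prop :=
  ∀ i ∉ T, ∀ j ∈ T, c.dim j ≤ c.dim i

/-- The subcomplex spanned by the cells in `T`. -/
def Yset (c : FinCW X) (T : Finset (Fin c.n)) : Set X := ⋃ j ∈ T, c.cell j

lemma downClosed_erase {T : Finset (Fin c.n)} {i : Fin c.n} (hT : c.DownClosed T)
    (hmax : ∀ j ∈ T, c.dim j ≤ c.dim i) : c.DownClosed (T.erase i) := by
  intro a ha j hj
  by_cases hai : a = i
  · subst hai
    exact hmax j (Finset.mem_of_mem_erase hj)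
  · have haT : a ∉ T := fun haT => ha (Finset.mem_erase.mpr ⟨hai, haT⟩)
    exact hT a haT j (Finset.mem_of_mem_erase hj)

lemma lower_mem_of_downClosed {T : Finset (Fin c.n)} (hT : c.DownClosed T) {j a : Fin c.n}
    (hj : j ∈ T) (hdim : c.dim a < c.dim j) : a ∈ T := by
  by_contra ha
  exact absurd (hT a ha j hj) (by omega)

lemma cb_subset_Yset {T : Finset (Fin c.n)} (hT : c.DownClosed T) {j : Fin c.n} (hj : j ∈ T) :
    c.cb j ⊆ c.Yset T := by
  intro x hx
  rcases mem_cb_cases hx with h | ⟨a, hdim, ha⟩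
  · exact Set.mem_biUnion hj h
  · exact Set.mem_biUnion (lower_mem_of_downClosed hT hj hdim) ha

lemma Yset_eq_biUnion_cb {T : Finset (Fin c.n)} (hT : c.DownClosed T) :
    c.Yset T = ⋃ j ∈ T, c.cb j := by
  apply Set.Subset.antisymm
  · exact Set.iUnion₂_mono fun j _ => cell_subset_cb
  · intro x hx
    obtain ⟨j, hj, hxj⟩ := Set.mem_iUnion₂.mp hx
    exact cb_subset_Yset hT hj hxj

lemma Yset_compact {T : Finset (Fin c.n)} (hT : c.DownClosed T) : IsCompact (c.Yset T) := by
  rw [Yset_eq_biUnion_cb hT]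
  exact T.finite_toSet.isCompact_biUnion fun j _ => cb_compact

lemma Yset_closed {T : Finset (Fin c.n)} (hT : c.DownClosed T) : IsClosed (c.Yset T) :=
  (Yset_compact hT).isClosed

lemma not_mem_cell_of_mem_Yset_erase {T : Finset (Fin c.n)} {i : Fin c.n} {x : X}
    (hx : x ∈ c.Yset (T.erase i)) : x ∉ c.cell i := by
  obtain ⟨j, hj, hxj⟩ := Set.mem_iUnion₂.mp hx
  intro hxi
  exact (Finset.mem_erase.mp hj).1 (cell_disjoint hxj hxi)

lemma Yset_diff_cell {T : Finset (Fin c.n)} {i : Fin c.n} (hiT : i ∈ T) :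
    c.Yset T \ c.cell i = c.Yset (T.erase i) := by
  ext x
  constructor
  · rintro ⟨hx, hxi⟩
    obtain ⟨j, hj, hxj⟩ := Set.mem_iUnion₂.mp hx
    have hji : j ≠ i := fun h => hxi (h ▸ hxj)
    exact Set.mem_biUnion (Finset.mem_erase.mpr ⟨hji, hj⟩) hxj
  · intro hx
    refine ⟨?_, not_mem_cell_of_mem_Yset_erase hx⟩
    obtain ⟨j, hj, hxj⟩ := Set.mem_iUnion₂.mp hx
    exact Set.mem_biUnion (Finset.mem_of_mem_erase hj) hxj

/-- Key closedness: removing a small ball of a top-dimensional cell from the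
subcomplex leaves a closed set. -/
lemma closed_Yset_diff_ball {T : Finset (Fin c.n)} {i : Fin c.n} (hT : c.DownClosed T)
    (hiT : i ∈ T) (hmax : ∀ j ∈ T, c.dim j ≤ c.dim i) {ρ : ℝ} (hρ : ρ ≤ 1) :
    IsClosed (c.Yset T \ (c.φ i '' Metric.ball 0 ρ)) := by
  have key : c.Yset T \ (c.φ i '' Metric.ball 0 ρ) =
      c.Yset (T.erase i) ∪ c.φ i '' (Metric.closedBall 0 1 \ Metric.ball 0 ρ) := by
    ext x
    constructor
    · rintro ⟨hx, hxi⟩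
      obtain ⟨j, hj, hxj⟩ := Set.mem_iUnion₂.mp hx
      by_cases hji : j = i
      · subst hji
        obtain ⟨z, hz, rfl⟩ := hxj
        refine Or.inr ⟨z, ⟨ball_subset_closedBall hz, fun hzρ => hxi ⟨z, hzρ, rfl⟩⟩, rfl⟩
      · exact Or.inl (Set.mem_biUnion (Finset.mem_erase.mpr ⟨hji, hj⟩) hxj)
    · rintro (hx | ⟨z, ⟨hz1, hz2⟩, rfl⟩)
      · obtain ⟨j, hj, hxj⟩ := Set.mem_iUnion₂.mp hx
        refine ⟨Set.mem_biUnion (Finset.mem_of_mem_erase hj) hxj, fun hxi => ?_⟩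
        have : x ∈ c.cell i := by
          obtain ⟨z, hz, rfl⟩ := hxi
          exact ⟨z, ball_subset_ball hρ hz, rfl⟩
        exact not_mem_cell_of_mem_Yset_erase hx this
      · constructor
        · exact cb_subset_Yset hT hiT ⟨z, hz1, rfl⟩
        · rintro ⟨w, hw, hφ⟩
          have : w = z := inj_cb (ball_subset_ball hρ hw) hz1 hφ
          subst this
          exact hz2 hw
  rw [key]
  apply IsClosed.union
  · exact Yset_closed (downClosed_erase hT hmax)
  · exact (image_compact ((isCompact_closedBall _ _).diff isOpen_ball)
      Set.diff_subset).isClosed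

lemma exists_relOpen_ball {T : Finset (Fin c.n)} {i : Fin c.n} (hT : c.DownClosed T)
    (hiT : i ∈ T) (hmax : ∀ j ∈ T, c.dim j ≤ c.dim i) {ρ : ℝ} (hρ : ρ ≤ 1) :
    ∃ G : Set X, IsOpen G ∧ G ∩ c.Yset T = c.φ i '' Metric.ball 0 ρ := by
  refine ⟨(c.Yset T \ (c.φ i '' Metric.ball 0 ρ))ᶜ,
    (closed_Yset_diff_ball hT hiT hmax hρ).isOpen_compl, ?_⟩
  ext x
  constructor
  · rintro ⟨hG, hY⟩
    rw [Set.mem_compl_iff, Set.mem_diff, not_and, not_not] at hG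
    exact hG hY
  · intro hx
    have hxY : x ∈ c.Yset T := by
      obtain ⟨z, hz, rfl⟩ := hx
      exact Set.mem_biUnion hiT ⟨z, ball_subset_ball hρ hz, rfl⟩
    exact ⟨by rw [Set.mem_compl_iff, Set.mem_diff, not_and, not_not]; exact fun _ => hx, hxY⟩

end FinCW

namespace FinCW

open Metric

variable {X : Type} [TopologicalSpace X] [T2Space X] [CompactSpace X] {c : FinCW X}

lemma norm_scale {E : Type*} [NormedAddCommGroup E] [NormedSpace ℝ E] {z : E}
    (h2 : (1:ℝ)/2 ≤ ‖z‖) {t : ℝ} (ht0 : 0 ≤ t) (ht1 : t ≤ 1) :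
    ‖((1 - t) + t / ‖z‖) • z‖ = (1 - t) * ‖z‖ + t := by
  have hz0 : (0:ℝ) < ‖z‖ := by linarith
  rw [norm_smul, Real.norm_eq_abs,
    abs_of_nonneg (add_nonneg (by linarith) (div_nonneg ht0 hz0.le))]
  field_simp

open scoped Classical in
/-- The radial deformation of the cell `i`, as a total map. -/
noncomputable def Rmap (c : FinCW X) (i : Fin c.n) : X × ℝ → X := fun p =>
  if h : ∃ z : EuclideanSpace ℝ (Fin (c.dim i)),
      z ∈ Metric.closedBall 0 1 ∧ (1:ℝ)/2 ≤ ‖z‖ ∧ c.φ i z = p.1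
  then c.φ i (((1 - p.2) + p.2 / ‖h.choose‖) • h.choose)
  else p.1

lemma Rmap_eq_self {i : Fin c.n} {x : X} {t : ℝ} (hx : x ∉ c.cell i) :
    c.Rmap i (x, t) = x := by
  rw [Rmap]
  split_ifs with hw
  · obtain ⟨hz1, hz2, hz3⟩ := hw.choose_spec
    set z := hw.choose with hzdef
    have h1 : ‖z‖ = 1 := by
      rcases lt_or_eq_of_le (mem_closedBall_zero_iff.mp hz1) with h | h
      · exact absurd ⟨z, mem_ball_zero_iff.mpr h, hz3⟩ hx
      · exact h
    simp only
    rw [h1, div_one, show (1 - t) + t = 1 by ring, one_smul, hz3]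
  · rfl

lemma Rmap_apply {i : Fin c.n} {z : EuclideanSpace ℝ (Fin (c.dim i))} {t : ℝ}
    (hz : z ∈ Metric.closedBall 0 1) (hz2 : (1:ℝ)/2 ≤ ‖z‖) :
    c.Rmap i (c.φ i z, t) = c.φ i (((1 - t) + t / ‖z‖) • z) := by
  rw [Rmap]
  have hex : ∃ w : EuclideanSpace ℝ (Fin (c.dim i)),
      w ∈ Metric.closedBall 0 1 ∧ (1:ℝ)/2 ≤ ‖w‖ ∧ c.φ i w = c.φ i z :=
    ⟨z, hz, hz2, rfl⟩
  rw [dif_pos hex]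
  obtain ⟨hw1, hw2, hw3⟩ := hex.choose_spec
  set w := hex.choose with hwdef
  rcases lt_or_eq_of_le (mem_closedBall_zero_iff.mp hz) with h | h
  · have hzball : z ∈ Metric.ball 0 1 := mem_ball_zero_iff.mpr h
    have : z = w := inj_cb hzball hw1 hw3.symm
    rw [← this]
  · have hw1' : ‖w‖ = 1 := by
      rcases lt_or_eq_of_le (mem_closedBall_zero_iff.mp hw1) with h' | h'
      · exfalso
        apply sphere_not_mem (c := c) (i := i) (z := z) (mem_sphere_zero_iff_norm.mpr h)
        rw [← hw3]
        exact ⟨w, mem_ball_zero_iff.mpr h', rfl⟩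
      · exact h'
    simp only
    have hwv : ((1:ℝ) - t + t / ‖w‖) • w = w := by
      rw [hw1', div_one, show (1:ℝ) - t + t = 1 by ring, one_smul]
    have hzv : ((1:ℝ) - t + t / ‖z‖) • z = z := by
      rw [h, div_one, show (1:ℝ) - t + t = 1 by ring, one_smul]
    rw [hwv, hzv, hw3]

lemma Rmap_zero {i : Fin c.n} (x : X) : c.Rmap i (x, 0) = x := by
  rw [Rmap]
  split_ifs with hw
  · obtain ⟨hz1, hz2, hz3⟩ := hw.choose_spec
    simp only
    rw [show (1 : ℝ) - 0 + 0 / ‖hw.choose‖ = 1 by ring, one_smul, hz3]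
  · rfl

/-- The radial retraction of the cell `i`. -/
noncomputable def rmap (c : FinCW X) (i : Fin c.n) : X → X := fun x => c.Rmap i (x, 1)

lemma rmap_eq_self {i : Fin c.n} {x : X} (hx : x ∉ c.cell i) : c.rmap i x = x :=
  Rmap_eq_self hx

lemma rmap_apply {i : Fin c.n} {z : EuclideanSpace ℝ (Fin (c.dim i))}
    (hz : z ∈ Metric.closedBall 0 1) (hz2 : (1:ℝ)/2 ≤ ‖z‖) :
    c.rmap i (c.φ i z) = c.φ i ((‖z‖⁻¹) • z) := by
  rw [rmap, Rmap_apply hz hz2, show (1:ℝ) - 1 + 1 / ‖z‖ = ‖z‖⁻¹ by rw [one_div]; ring]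

lemma rmap_mem_sphere {i : Fin c.n} {z : EuclideanSpace ℝ (Fin (c.dim i))}
    (hz : z ∈ Metric.closedBall 0 1) (hz2 : (1:ℝ)/2 ≤ ‖z‖) :
    (‖z‖⁻¹ • z) ∈ Metric.sphere (0 : EuclideanSpace ℝ (Fin (c.dim i))) 1 := by
  have hz0 : (0:ℝ) < ‖z‖ := by linarith
  rw [mem_sphere_zero_iff_norm, norm_smul, Real.norm_eq_abs, abs_of_nonneg (by positivity)]
  field_simp

/-- For `x` in the subcomplex minus the half ball of the top cell,
the retraction lands in the subcomplex minus the open cell. -/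
lemma rmap_mem_erase {T : Finset (Fin c.n)} {i : Fin c.n} (hT : c.DownClosed T)
    (hiT : i ∈ T) {x : X} (hx : x ∈ c.Yset T)
    (hx2 : x ∉ c.φ i '' Metric.closedBall 0 (1/2)) :
    c.rmap i x ∈ c.Yset (T.erase i) := by
  by_cases hxi : x ∈ c.cell i
  · obtain ⟨z, hz, rfl⟩ := hxi
    have hz2 : (1:ℝ)/2 ≤ ‖z‖ := by
      by_contra h
      exact hx2 ⟨z, mem_closedBall_zero_iff.mpr (by linarith), rfl⟩
    rw [rmap_apply (ball_subset_closedBall hz) hz2]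
    obtain ⟨a, hdim, ha⟩ := sphere_mem_lower (rmap_mem_sphere (ball_subset_closedBall hz) hz2)
    have haT : a ∈ T := lower_mem_of_downClosed hT hiT hdim
    have hai : a ≠ i := fun h => by rw [h] at hdim; omega
    exact Set.mem_biUnion (Finset.mem_erase.mpr ⟨hai, haT⟩) ha
  · rw [rmap_eq_self hxi]
    rw [← Yset_diff_cell hiT]
    exact ⟨hx, hxi⟩

lemma mem_domain_split {T : Finset (Fin c.n)} {i : Fin c.n} {x : X}
    (hx : x ∈ c.Yset T) (hx2 : x ∉ c.φ i '' Metric.closedBall 0 (1/2)) (hiT : i ∈ T) :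
    x ∈ c.Yset (T.erase i) ∪ c.φ i '' (Metric.closedBall 0 1 \ Metric.ball 0 (1/2)) := by
  by_cases hxi : x ∈ c.cell i
  · obtain ⟨z, hz, rfl⟩ := hxi
    refine Or.inr ⟨z, ⟨ball_subset_closedBall hz, fun hzb => ?_⟩, rfl⟩
    exact hx2 ⟨z, ball_subset_closedBall hzb, rfl⟩
  · rw [← Yset_diff_cell hiT] at *
    exact Or.inl ⟨hx, hxi⟩

/-- Continuity of the radial deformation on its natural domain. -/
lemma Rmap_contOn {T : Finset (Fin c.n)} {i : Fin c.n} (hT : c.DownClosed T)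
    (hiT : i ∈ T) (hmax : ∀ j ∈ T, c.dim j ≤ c.dim i) :
    ContinuousOn (c.Rmap i)
      ((c.Yset (T.erase i) ∪ c.φ i '' (Metric.closedBall 0 1 \ Metric.ball 0 (1/2)))
        ×ˢ Set.Icc (0:ℝ) 1) := by
  rw [Set.union_prod]
  set K : Set (EuclideanSpace ℝ (Fin (c.dim i))) :=
    Metric.closedBall 0 1 \ Metric.ball 0 (1/2) with hK
  have hKsub : K ⊆ Metric.closedBall 0 1 := Set.diff_subset
  have hKnorm : ∀ z ∈ K, (1:ℝ)/2 ≤ ‖z‖ := by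
    intro z hz
    have := hz.2
    rw [mem_ball_zero_iff] at this
    linarith [not_lt.mp this]
  have hKcomp : IsCompact K := (isCompact_closedBall _ _).diff isOpen_ball
  apply contOn_union_compact
  · exact (Yset_compact (downClosed_erase hT hmax)).prod isCompact_Icc
  · exact (image_compact hKcomp hKsub).prod isCompact_Icc
  · -- on the lower subcomplex the map is the identity
    apply ContinuousOn.congr (f := Prod.fst)
    · exact continuousOn_fst
    · rintro ⟨x, t⟩ ⟨hx, -⟩
      exact Rmap_eq_self (not_mem_cell_of_mem_Yset_erase hx)
  · -- on the annulus use the quotient description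
    have himg : (c.φ i '' K) ×ˢ Set.Icc (0:ℝ) 1 =
        (fun p : EuclideanSpace ℝ (Fin (c.dim i)) × ℝ => (c.φ i p.1, p.2)) ''
          (K ×ˢ Set.Icc (0:ℝ) 1) := by
      ext ⟨x, t⟩
      constructor
      · rintro ⟨⟨z, hz, rfl⟩, ht⟩
        exact ⟨(z, t), ⟨hz, ht⟩, rfl⟩
      · rintro ⟨⟨z, s⟩, ⟨hz, hs⟩, heq⟩
        rw [← heq]
        exact ⟨⟨z, hz, rfl⟩, hs⟩
    rw [himg]
    apply contOn_image_of_comp ((hKcomp.prod isCompact_Icc))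
    · apply ContinuousOn.prodMk
      · exact (c.cont i).comp continuousOn_fst (fun p hp => hKsub hp.1)
      · exact continuousOn_snd
    · apply ContinuousOn.congr
        (f := fun p : EuclideanSpace ℝ (Fin (c.dim i)) × ℝ =>
          c.φ i (((1 - p.2) + p.2 / ‖p.1‖) • p.1))
      · apply (c.cont i).comp
        · apply ContinuousOn.smul (f := fun p : EuclideanSpace ℝ (Fin (c.dim i)) × ℝ => (1 - p.2) + p.2 / ‖p.1‖)
            (g := fun p : EuclideanSpace ℝ (Fin (c.dim i)) × ℝ => p.1)
          · apply ContinuousOn.add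
            · exact (continuousOn_const.sub continuousOn_snd)
            · apply ContinuousOn.div continuousOn_snd
                (continuous_norm.comp continuous_fst).continuousOn
              intro ⟨z, t⟩ hp
              have := hKnorm z hp.1
              positivity
          · exact continuousOn_fst
        · rintro ⟨z, t⟩ ⟨hz, ht⟩
          show ((1 - t) + t / ‖z‖) • z ∈ Metric.closedBall 0 1
          rw [mem_closedBall_zero_iff, norm_scale (hKnorm z hz) ht.1 ht.2]
          have h1 : ‖z‖ ≤ 1 := mem_closedBall_zero_iff.mp (hKsub hz)
          nlinarith [ht.1, ht.2]
      · rintro ⟨z, t⟩ ⟨hz, ht⟩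
        exact Rmap_apply (hKsub hz) (hKnorm z hz)

end FinCW

lemma HtpyOn.mono {X : Type} [TopologicalSpace X] {A A' : Set X} {g g' : X → X}
    (h : HtpyOn A g g') (hsub : A' ⊆ A) : HtpyOn A' g g' := by
  obtain ⟨H, hc, h0, h1⟩ := h
  exact ⟨H, hc.mono (Set.prod_mono hsub Set.Subset.rfl),
    fun a ha => h0 a (hsub ha), fun a ha => h1 a (hsub ha)⟩

namespace FinCW

open Metric

variable {X : Type} [TopologicalSpace X] [T2Space X] [CompactSpace X] {c : FinCW X}

/-- There are an open thickening `D` of the subcomplex `Yset T` and a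
retraction-up-to-homotopy `P : D → Yset T`. -/
def Thick (c : FinCW X) (T : Finset (Fin c.n)) : Prop :=
  ∃ (D : Set X) (P : X → X), IsOpen D ∧ ContinuousOn P D ∧
    (∀ x ∈ D, P x ∈ c.Yset T) ∧ (∀ y ∈ c.Yset T, y ∈ D ∧ P y = y) ∧
    HtpyOn D id P

lemma Yset_univ : c.Yset Finset.univ = Set.univ := by
  ext x
  simp only [Set.mem_univ, iff_true]
  obtain ⟨i, hi⟩ := exists_cell (c := c) x
  exact Set.mem_biUnion (Finset.mem_univ i) hi

lemma thick_univ : c.Thick Finset.univ := by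
  refine ⟨Set.univ, id, isOpen_univ, continuousOn_id, ?_, fun y _ => ⟨trivial, rfl⟩,
    Prod.fst, continuousOn_fst, fun a _ => rfl, fun a _ => rfl⟩
  intro x _
  rw [Yset_univ]
  trivial

lemma Yset_mono {T T' : Finset (Fin c.n)} (h : T' ⊆ T) : c.Yset T' ⊆ c.Yset T := by
  intro x hx
  obtain ⟨j, hj, hxj⟩ := Set.mem_iUnion₂.mp hx
  exact Set.mem_biUnion (h hj) hxj

lemma thick_step {T : Finset (Fin c.n)} {i : Fin c.n} (hT : c.DownClosed T)
    (hiT : i ∈ T) (hmax : ∀ j ∈ T, c.dim j ≤ c.dim i) (h : c.Thick T) :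
    c.Thick (T.erase i) := by
  obtain ⟨D, P, hDo, hPc, hPY, hYfix, hHom⟩ := h
  have hhalf : IsCompact (c.φ i '' Metric.closedBall 0 (1/2)) :=
    image_compact (isCompact_closedBall _ _) (closedBall_subset_closedBall (by norm_num))
  have hhalf_cell : c.φ i '' Metric.closedBall 0 (1/2) ⊆ c.cell i := by
    rintro x ⟨z, hz, rfl⟩
    exact ⟨z, lt_of_le_of_lt (mem_closedBall_zero_iff.mp hz) (by norm_num : (1:ℝ)/2 < 1)
      |> mem_ball_zero_iff.mpr, rfl⟩
  set D' : Set X := D ∩ P ⁻¹' (c.φ i '' Metric.closedBall 0 (1/2))ᶜ with hD'def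
  have hD'o : IsOpen D' := hPc.isOpen_inter_preimage hDo hhalf.isClosed.isOpen_compl
  have hD'sub : D' ⊆ D := Set.inter_subset_left
  have hkey : ∀ x ∈ D', P x ∈ c.Yset (T.erase i) ∪
      c.φ i '' (Metric.closedBall 0 1 \ Metric.ball 0 (1/2)) := by
    rintro x ⟨hxD, hxP⟩
    exact mem_domain_split (hPY x hxD) hxP hiT
  have hrc : ContinuousOn (c.rmap i)
      (c.Yset (T.erase i) ∪ c.φ i '' (Metric.closedBall 0 1 \ Metric.ball 0 (1/2))) := by
    apply (Rmap_contOn hT hiT hmax).comp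
      (Continuous.continuousOn (continuous_id.prodMk continuous_const))
    intro x hx
    exact ⟨hx, ⟨zero_le_one, le_rfl⟩⟩
  refine ⟨D', c.rmap i ∘ P, hD'o, hrc.comp (hPc.mono hD'sub) hkey, ?_, ?_, ?_⟩
  · rintro x ⟨hxD, hxP⟩
    exact rmap_mem_erase hT hiT (hPY x hxD) hxP
  · intro y hy
    have hyT : y ∈ c.Yset T := Yset_mono (Finset.erase_subset i T) hy
    obtain ⟨hyD, hyP⟩ := hYfix y hyT
    have hyc : y ∉ c.cell i := not_mem_cell_of_mem_Yset_erase hy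
    have hyD' : y ∈ D' := ⟨hyD, by rw [Set.mem_preimage, hyP]; exact fun hc => hyc (hhalf_cell hc)⟩
    refine ⟨hyD', ?_⟩
    show c.rmap i (P y) = y
    rw [hyP, rmap_eq_self hyc]
  · -- homotopy: id ≃ P ≃ rmap ∘ P on D'
    refine HtpyOn.trans (hHom.mono hD'sub) ?_
    refine ⟨fun p => c.Rmap i (P p.1, p.2), ?_, ?_, ?_⟩
    · apply (Rmap_contOn hT hiT hmax).comp
      · apply ContinuousOn.prodMk
        · exact (hPc.mono hD'sub).comp continuousOn_fst (fun p hp => hp.1)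
        · exact continuousOn_snd
      · rintro ⟨x, t⟩ ⟨hx, ht⟩
        exact ⟨hkey x hx, ht⟩
    · intro a _
      exact Rmap_zero (P a)
    · intro a _
      rfl

lemma thick_of_downClosed {T : Finset (Fin c.n)} (hT : c.DownClosed T) : c.Thick T := by
  classical
  have main : ∀ k : ℕ, ∀ T : Finset (Fin c.n), c.DownClosed T → Tᶜ.card = k → c.Thick T := by
    intro k
    induction k with
    | zero =>
      intro T _ hc
      have : Tᶜ = ∅ := Finset.card_eq_zero.mp hc
      have hTu : T = Finset.univ := by
        rwa [Finset.compl_eq_empty_iff] at this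
      rw [hTu]
      exact thick_univ
    | succ k ih =>
      intro T hT hc
      have hne : Tᶜ.Nonempty := Finset.card_pos.mp (by omega)
      obtain ⟨i, hiTc, hmin⟩ := Finset.exists_min_image Tᶜ (fun j => c.dim j) hne
      have hiT : i ∉ T := Finset.mem_compl.mp hiTc
      have hT' : c.DownClosed (insert i T) := by
        intro a ha j hj
        have haT : a ∉ T := fun h => ha (Finset.mem_insert_of_mem h)
        have hai : a ≠ i := fun h => ha (h ▸ Finset.mem_insert_self i T)
        rcases Finset.mem_insert.mp hj with rfl | hjT
        · exact hmin a (Finset.mem_compl.mpr haT)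
        · exact hT a haT j hjT
      have hcard : (insert i T)ᶜ.card = k := by
        rw [Finset.compl_insert, Finset.card_erase_of_mem hiTc]
        omega
      have hthick' := ih (insert i T) hT' hcard
      have hmax : ∀ j ∈ insert i T, c.dim j ≤ c.dim i := by
        intro j hj
        rcases Finset.mem_insert.mp hj with rfl | hjT
        · exact le_rfl
        · exact hT i hiT j hjT
      have := thick_step hT' (Finset.mem_insert_self i T) hmax hthick'
      rwa [Finset.erase_insert hiT] at this
  exact main Tᶜ.card T hT rfl

end FinCW

namespace FinCW

open Metric

variable {X : Type} [TopologicalSpace X] [T2Space X] [CompactSpace X] {c : FinCW X}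

lemma cov_of_downClosed {T : Finset (Fin c.n)} (hT : c.DownClosed T) :
    ∃ k, CatLE X (c.Yset T) k := by
  classical
  have main : ∀ k : ℕ, ∀ T : Finset (Fin c.n), c.DownClosed T → T.card = k →
      ∃ k', CatLE X (c.Yset T) k' := by
    intro k
    induction k with
    | zero =>
      intro T _ hc
      have hTe : T = ∅ := Finset.card_eq_zero.mp hc
      refine ⟨0, Fin.elim0, fun j => j.elim0, ?_, fun j => j.elim0⟩
      intro x hx
      obtain ⟨j, hj, -⟩ := Set.mem_iUnion₂.mp hx
      rw [hTe] at hj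
      exact absurd hj (Finset.notMem_empty j)
    | succ k ih =>
      intro T hT hc
      have hne : T.Nonempty := Finset.card_pos.mp (by omega)
      obtain ⟨i, hiT, hmax⟩ := Finset.exists_max_image T (fun j => c.dim j) hne
      have hT' : c.DownClosed (T.erase i) := downClosed_erase hT hmax
      obtain ⟨k₀, O, hOo, hOcov, hOnull⟩ := ih (T.erase i) hT'
        (by rw [Finset.card_erase_of_mem hiT]; omega)
      obtain ⟨D, P, hDo, hPc, hPY, hYfix, hHom⟩ := thick_of_downClosed hT
      -- the compact core of the cell `i` not covered by the `O j`
      set C : Set X := c.cb i \ ⋃ j, O j with hCdef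
      have hCcomp : IsCompact C := cb_compact.diff (isOpen_iUnion hOo)
      have hCcell : C ⊆ c.cell i := by
        rintro y ⟨hy, hyO⟩
        rcases mem_cb_cases hy with h | ⟨a, hdim, ha⟩
        · exact h
        · exfalso
          apply hyO
          have haT : a ∈ T := lower_mem_of_downClosed hT hiT hdim
          have hai : a ≠ i := fun h => by rw [h] at hdim; omega
          exact hOcov (Set.mem_biUnion (Finset.mem_erase.mpr ⟨hai, haT⟩) ha)
      -- its compact parameter set
      set Dh : Set (EuclideanSpace ℝ (Fin (c.dim i))) :=
        Metric.closedBall 0 1 ∩ (c.φ i) ⁻¹' C with hDhdef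
      have hDhcomp : IsCompact Dh := by
        obtain ⟨u, hu, hequ⟩ := continuousOn_iff_isClosed.mp (c.cont i) C hCcomp.isClosed
        have : Dh = u ∩ Metric.closedBall 0 1 := by
          rw [hDhdef, Set.inter_comm, hequ]
        rw [this]
        exact (isCompact_closedBall _ _).inter_left hu
      have hDhball : Dh ⊆ Metric.ball 0 1 := by
        rintro z ⟨hz, hzC⟩
        rcases lt_or_eq_of_le (mem_closedBall_zero_iff.mp hz) with h | h
        · exact mem_ball_zero_iff.mpr h
        · exact absurd (hCcell hzC) (sphere_not_mem (mem_sphere_zero_iff_norm.mpr h))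
      -- a radius `ρ' < 1` with `Dh ⊆ ball 0 ρ'`
      obtain ⟨ρ', hρ'lt, hρ'0, hρ'sub⟩ :
          ∃ ρ' : ℝ, ρ' < 1 ∧ 0 ≤ ρ' ∧ Dh ⊆ Metric.ball 0 ρ' := by
        rcases Set.eq_empty_or_nonempty Dh with hDe | hDne
        · exact ⟨1/2, by norm_num, by norm_num, by rw [hDe]; exact Set.empty_subset _⟩
        · obtain ⟨z₀, hz₀, hmaxz⟩ := hDhcomp.exists_isMaxOn hDne continuous_norm.continuousOn
          refine ⟨(‖z₀‖ + 1) / 2, ?_, by positivity, ?_⟩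
          · have : ‖z₀‖ < 1 := mem_ball_zero_iff.mp (hDhball hz₀)
            linarith
          · intro z hz
            have h1 : ‖z‖ ≤ ‖z₀‖ := hmaxz hz
            have h2 : ‖z₀‖ < 1 := mem_ball_zero_iff.mp (hDhball hz₀)
            rw [mem_ball_zero_iff]
            linarith
      obtain ⟨G, hGo, hGeq⟩ := exists_relOpen_ball hT hiT hmax (ρ := ρ') hρ'lt.le
      set Onew : Set X := D ∩ P ⁻¹' G with hOnewdef
      have hOnewo : IsOpen Onew := hPc.isOpen_inter_preimage hDo hGo
      have hONsub : ∀ x ∈ Onew, P x ∈ c.φ i '' Metric.ball 0 ρ' := by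
        rintro x ⟨hxD, hxG⟩
        rw [← hGeq]
        exact ⟨hxG, hPY x hxD⟩
      -- the inverse of the chart on the small closed ball
      set ψ : X → EuclideanSpace ℝ (Fin (c.dim i)) := fun x =>
        if h : ∃ z ∈ Metric.closedBall (0 : EuclideanSpace ℝ (Fin (c.dim i))) ρ',
          c.φ i z = x then h.choose else 0 with hψdef
      have hcbρsub : Metric.closedBall (0 : EuclideanSpace ℝ (Fin (c.dim i))) ρ' ⊆
          Metric.ball 0 1 := fun z hz =>
        mem_ball_zero_iff.mpr (lt_of_le_of_lt (mem_closedBall_zero_iff.mp hz) hρ'lt)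
      have hψφ : ∀ z ∈ Metric.closedBall (0 : EuclideanSpace ℝ (Fin (c.dim i))) ρ',
          ψ (c.φ i z) = z := by
        intro z hz
        rw [hψdef]
        have hex : ∃ w ∈ Metric.closedBall (0 : EuclideanSpace ℝ (Fin (c.dim i))) ρ',
            c.φ i w = c.φ i z := ⟨z, hz, rfl⟩
        simp only [dif_pos hex]
        obtain ⟨hw, hweq⟩ := hex.choose_spec
        exact c.injOn i (hcbρsub hw) (hcbρsub hz) hweq
      have hφψ : ∀ x ∈ c.φ i '' Metric.closedBall 0 ρ', c.φ i (ψ x) = x := by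
        rintro x ⟨z, hz, rfl⟩
        rw [hψφ z hz]
      have hψmem : ∀ x ∈ c.φ i '' Metric.closedBall 0 ρ',
          ψ x ∈ Metric.closedBall (0 : EuclideanSpace ℝ (Fin (c.dim i))) ρ' := by
        rintro x ⟨z, hz, rfl⟩
        rw [hψφ z hz]
        exact hz
      have hψc : ContinuousOn ψ (c.φ i '' Metric.closedBall 0 ρ') := by
        apply contOn_image_of_comp (isCompact_closedBall _ _)
          ((c.cont i).mono (fun z hz => ball_subset_closedBall (hcbρsub hz)))
        exact continuousOn_id.congr hψφ
      -- null homotopy of `Onew`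
      have hHom1 : HtpyOn Onew id P := hHom.mono Set.inter_subset_left
      have himgsub : c.φ i '' Metric.ball 0 ρ' ⊆ c.φ i '' Metric.closedBall 0 ρ' :=
        Set.image_mono ball_subset_closedBall
      have hHom2 : HtpyOn Onew P (fun _ => c.φ i 0) := by
        refine ⟨fun p => c.φ i ((1 - p.2) • ψ (P p.1)), ?_, ?_, ?_⟩
        · apply (c.cont i).comp
          · apply ContinuousOn.smul (f := fun p : X × ℝ => 1 - p.2) (g := fun p : X × ℝ => ψ (P p.1))
            · exact continuousOn_const.sub continuousOn_snd
            · apply hψc.comp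
              · exact (hPc.mono (show Onew ⊆ D from Set.inter_subset_left)).comp
                  continuousOn_fst (fun p hp => hp.1)
              · intro ⟨x, t⟩ hp
                exact himgsub (hONsub x hp.1)
          · rintro ⟨x, t⟩ ⟨hx, ht⟩
            show (1 - t) • ψ (P x) ∈ Metric.closedBall 0 1
            have h1 : ψ (P x) ∈ Metric.closedBall (0 : EuclideanSpace ℝ (Fin (c.dim i))) ρ' :=
              hψmem _ (himgsub (hONsub x hx))
            rw [mem_closedBall_zero_iff] at h1 ⊢
            rw [norm_smul, Real.norm_eq_abs, abs_of_nonneg (by linarith [ht.2])]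
            nlinarith [ht.1, ht.2, norm_nonneg (ψ (P x))]
        · intro a ha
          show c.φ i ((1 - 0) • ψ (P a)) = P a
          rw [show (1:ℝ) - 0 = 1 by ring, one_smul]
          exact hφψ _ (himgsub (hONsub a ha))
        · intro a _
          show c.φ i ((1 - 1) • ψ (P a)) = c.φ i 0
          rw [show (1:ℝ) - 1 = 0 by ring, zero_smul]
      obtain ⟨HN, hHNc, hHN0, hHN1⟩ := hHom1.trans hHom2
      have hnull : NullhomotopicIn X Onew :=
        ⟨HN, c.φ i 0, hHNc, fun v hv => hHN0 v hv, fun v hv => hHN1 v hv⟩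
      -- assemble the cover
      refine ⟨k₀ + 1, fun j => Fin.cases Onew O j, ?_, ?_, ?_⟩
      · intro j
        refine Fin.cases ?_ ?_ j
        · simpa using hOnewo
        · intro j'; simpa using hOo j'
      · intro y hy
        by_cases hyO : y ∈ ⋃ j, O j
        · obtain ⟨j, hj⟩ := Set.mem_iUnion.mp hyO
          exact Set.mem_iUnion.mpr ⟨j.succ, by simpa using hj⟩
        · refine Set.mem_iUnion.mpr ⟨0, ?_⟩
          simp only [Fin.cases_zero]
          -- y is in the core C
          obtain ⟨j, hj, hyj⟩ := Set.mem_iUnion₂.mp hy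
          have hji : j = i := by
            by_contra hne'
            exact hyO (hOcov (Set.mem_biUnion (Finset.mem_erase.mpr ⟨hne', hj⟩) hyj))
          rw [hji] at hyj
          have hyC : y ∈ C := ⟨cell_subset_cb hyj, hyO⟩
          obtain ⟨z, hz, rfl⟩ := hyj
          have hzD : z ∈ Dh := ⟨ball_subset_closedBall hz, hyC⟩
          have hyim : c.φ i z ∈ c.φ i '' Metric.ball 0 ρ' := ⟨z, hρ'sub hzD, rfl⟩
          have hyY : c.φ i z ∈ c.Yset T := hy
          obtain ⟨hyD, hyP⟩ := hYfix _ hyY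
          refine ⟨hyD, ?_⟩
          rw [Set.mem_preimage, hyP]
          have : c.φ i z ∈ G ∩ c.Yset T := by rw [hGeq]; exact hyim
          exact this.1
      · intro j
        refine Fin.cases ?_ ?_ j
        · simpa using hnull
        · intro j'; simpa using hOnull j'
  exact main T.card T hT rfl

/-- A compact Hausdorff space with a finite CW structure has finite
Lusternik–Schnirelmann category. -/
lemma exists_catLE (c : FinCW X) : ∃ k, CatLE X Set.univ k := by
  have hdc : c.DownClosed Finset.univ := fun i hi => absurd (Finset.mem_univ i) hi
  obtain ⟨k, hk⟩ := cov_of_downClosed hdc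
  rw [Yset_univ] at hk
  exact ⟨k, hk⟩

end FinCW

/-- **(Lemma 5.9 / Lemma `lm10`.)**  Let `X` be a connected finite CW complex
and `ω` a continuous closed 1-form on `X` whose cohomology class is nonzero,
i.e. `∫_γ ω ≠ 0` for some loop `γ` in `X`.  Then `Cat(X, ω) ≤ cat(X) − 1`. -/
theorem bigCatForm_le_cat_sub_one
    (X : Type) [TopologicalSpace X] [T2Space X] [CompactSpace X] [ConnectedSpace X]
    (c : FinCW X) (ω : ClosedOneForm X)
    (hξ : ∃ γ : ℝ → X, ContinuousOn γ (Set.Icc (0 : ℝ) 1) ∧ γ 0 = γ 1 ∧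
      ω.pathIntegral γ 0 1 ≠ 0) :
    ω.bigCatForm ≤ catSpace X - 1 := by
  haveI : Nonempty X := ConnectedSpace.toNonempty
  obtain ⟨k, hk⟩ := FinCW.exists_catLE c
  have hS2ne : {k | CatLE X Set.univ k}.Nonempty := ⟨k, hk⟩
  have hmem : CatLE X Set.univ (catSpace X) := by
    rw [catSpace, catSet]
    exact Nat.sInf_mem hS2ne
  have hpos : 1 ≤ catSpace X := by
    by_contra h
    push_neg at h
    have h0 : catSpace X = 0 := by omega
    rw [h0] at hmem
    obtain ⟨V, -, hcov, -⟩ := hmem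
    have := hcov (Set.mem_univ (Classical.arbitrary X))
    simp only [Set.mem_iUnion] at this
    obtain ⟨j, -⟩ := this
    exact j.elim0
  obtain ⟨K', hK'⟩ : ∃ K', catSpace X = K' + 1 := ⟨catSpace X - 1, by omega⟩
  have hbig : ω.BigCatLE K' := by
    apply ClosedOneForm.main_step ω _ hξ
    rw [← hK']
    exact hmem
  have hle : ω.bigCatForm ≤ K' := by
    rw [ClosedOneForm.bigCatForm]
    exact Nat.sInf_le hbig
  omega
end

section
/- Let v be a smooth vector field on a closed (compact, boundaryless) smooth manifold M generating a flow Φ : M × ℝ → M (write x·t = Φ(x,t)), and fix a metric d on M inducing its topology. Let Z be a connected component of the chain recurrent set R of Φ which is isolated in R, i.e., there exists a neighborhood U₀ of Z with U₀ ∩ R = Z. Then for every neighborhood W of Z there exists an open neighborhood B of Z contained in W with the following two properties: (A) for every x ∈ M the set J_x = {t ∈ ℝ : x·t ∈ B} is convex, i.e., it is either empty or an interval; and (B) letting A be the set of points x ∈ M for which J_x is nonempty and bounded below, the function A → ℝ, x ↦ inf J_x, is continuous. -/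
open Set Filter
open scoped Manifold Topology

/-- A smooth vector field on `M`: a smooth section of the tangent bundle. -/
def IsSmoothVF {n : ℕ} {M : Type} [TopologicalSpace M]
    [ChartedSpace (EuclideanSpace ℝ (Fin n)) M]
    [IsManifold (𝓡 n) (⊤ : ℕ∞) M]
    (v : (x : M) → TangentSpace (𝓡 n) x) : Prop :=
  ContMDiff (𝓡 n) (𝓡 n).tangent (⊤ : ℕ∞)
    (fun x => (⟨x, v x⟩ : TangentBundle (𝓡 n) M))

/-- `γ : ℝ → M` is an integral curve of the vector field `v`:
`γ'(t) = v(γ(t))` for all `t`. -/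
def IsIntCurve {n : ℕ} {M : Type} [TopologicalSpace M]
    [ChartedSpace (EuclideanSpace ℝ (Fin n)) M]
    [IsManifold (𝓡 n) (⊤ : ℕ∞) M]
    (v : (x : M) → TangentSpace (𝓡 n) x) (γ : ℝ → M) : Prop :=
  ∀ t : ℝ, HasMFDerivAt 𝓘(ℝ, ℝ) (𝓡 n) γ t
    ((1 : ℝ →L[ℝ] ℝ).smulRight (v (γ t)))

/-- `Φ : M × ℝ → M` (curried) is the flow generated by the vector field `v`:
it is continuous, starts at the identity, satisfies the group law, and each
trajectory `t ↦ Φ x t` is an integral curve of `v`. -/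
def IsFlowOf {n : ℕ} {M : Type} [TopologicalSpace M]
    [ChartedSpace (EuclideanSpace ℝ (Fin n)) M]
    [IsManifold (𝓡 n) (⊤ : ℕ∞) M]
    (v : (x : M) → TangentSpace (𝓡 n) x) (Φ : M → ℝ → M) : Prop :=
  Continuous (fun p : M × ℝ => Φ p.1 p.2) ∧ (∀ x : M, Φ x 0 = x) ∧
    (∀ (x : M) (s t : ℝ), Φ x (s + t) = Φ (Φ x s) t) ∧
    ∀ x : M, IsIntCurve v (Φ x)

/-- The chain recurrent set of the flow `Φ` (with respect to the metric `d`):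
points `x` such that for all `δ > 0` and `T > 1` there is a `(δ,T)`-chain
`x = x₀, x₁, …, x_N = x`, with times `tᵢ ≥ T` and
`d(x_{i-1}·t_i, x_i) < δ`. -/
def chainRecurrentSet {M : Type} [MetricSpace M] (Φ : M → ℝ → M) : Set M :=
  {x : M | ∀ δ > (0 : ℝ), ∀ T > (1 : ℝ),
    ∃ (N : ℕ) (xs : ℕ → M) (ts : ℕ → ℝ), 0 < N ∧ xs 0 = x ∧ xs N = x ∧
      ∀ i < N, T ≤ ts i ∧ dist (Φ (xs i) (ts i)) (xs (i + 1)) < δ}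

section FCNLib
open Metric
set_option linter.unusedSectionVars false
set_option linter.unusedVariables false
namespace FCN

variable {M : Type} [MetricSpace M]

structure FlowPkg (φ : M → ℝ → M) : Prop where
  cont : Continuous (fun p : M × ℝ => φ p.1 p.2)
  zero : ∀ x : M, φ x 0 = x
  law : ∀ (x : M) (s t : ℝ), φ x (s + t) = φ (φ x s) t

namespace FlowPkg

variable {φ : M → ℝ → M}

theorem contX (h : FlowPkg φ) (t : ℝ) : Continuous fun x => φ x t :=
  h.cont.comp (continuous_id.prodMk continuous_const)

theorem contT (h : FlowPkg φ) (x : M) : Continuous fun t => φ x t :=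
  h.cont.comp (continuous_const.prodMk continuous_id)

theorem law' (h : FlowPkg φ) (x : M) (s t : ℝ) : φ (φ x s) t = φ x (s + t) :=
  (h.law x s t).symm

/-- reversed flow -/
theorem rev (h : FlowPkg φ) : FlowPkg (fun x t => φ x (-t)) := by
  refine ⟨?_, ?_, ?_⟩
  · exact h.cont.comp ((continuous_fst).prodMk (continuous_snd.neg))
  · intro x; simpa using h.zero x
  · intro x s t
    have : -(s + t) = -s + -t := by ring
    rw [this, h.law]

theorem uc [CompactSpace M] (h : FlowPkg φ) (S : ℝ) {ε : ℝ} (hε : 0 < ε) :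
    ∃ δ > 0, ∀ x y : M, dist x y ≤ δ → ∀ t : ℝ, |t| ≤ S → dist (φ x t) (φ y t) ≤ ε := by
  have hK : IsCompact (Icc (-S) S) := isCompact_Icc
  haveI : CompactSpace (Icc (-S) S) := isCompact_iff_compactSpace.mp hK
  set F : M × (Icc (-S) S) → M := fun p => φ p.1 p.2.1 with hF
  have hFc : Continuous F := h.cont.comp (continuous_fst.prodMk (continuous_subtype_val.comp continuous_snd))
  have hu : UniformContinuous F := CompactSpace.uniformContinuous_of_continuous hFc
  rw [Metric.uniformContinuous_iff] at hu
  obtain ⟨δ, hδ, hd⟩ := hu ε hε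
  refine ⟨δ/2, by positivity, ?_⟩
  intro x y hxy t ht
  have ht' : t ∈ Icc (-S) S := abs_le.mp ht |>.imp (fun h => by linarith) (fun h => h)
  have : dist ((x, (⟨t, ht'⟩ : Icc (-S) S))) ((y, ⟨t, ht'⟩)) < δ := by
    rw [Prod.dist_eq]
    have : dist (⟨t, ht'⟩ : Icc (-S) S) ⟨t, ht'⟩ = 0 := dist_self _
    rw [this]
    have : max (dist x y) 0 = dist x y := max_eq_left dist_nonneg
    rw [this]; linarith
  exact le_of_lt (hd this)

end FlowPkg

/-- Chains with per-jump cost at most `c`, all flight times in `[T, 2T]`. -/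
inductive ReachW (φ : M → ℝ → M) (T c : ℝ) : M → M → Prop
  | single {x y : M} {t : ℝ} (h1 : T ≤ t) (h2 : t ≤ 2*T) (h3 : dist (φ x t) y ≤ c) :
      ReachW φ T c x y
  | tail {x y z : M} {t : ℝ} (h : ReachW φ T c x y) (h1 : T ≤ t) (h2 : t ≤ 2*T)
      (h3 : dist (φ y t) z ≤ c) : ReachW φ T c x z

namespace ReachW

variable {φ : M → ℝ → M} {T c c' : ℝ} {x y z : M}

theorem nonneg (h : ReachW φ T c x y) : 0 ≤ c := by
  induction h with
  | single h1 h2 h3 => exact dist_nonneg.trans h3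
  | tail h h1 h2 h3 ih => exact ih

theorem mono (h : ReachW φ T c x y) (hcc : c ≤ c') : ReachW φ T c' x y := by
  induction h with
  | single h1 h2 h3 => exact single h1 h2 (h3.trans hcc)
  | tail h h1 h2 h3 ih => exact tail ih h1 h2 (h3.trans hcc)

theorem trans (hxy : ReachW φ T c x y) (hyz : ReachW φ T c y z) : ReachW φ T c x z := by
  induction hyz with
  | single h1 h2 h3 => exact tail hxy h1 h2 h3
  | tail h h1 h2 h3 ih => exact tail ih h1 h2 h3

/-- one "hop" of arbitrary length `t ≥ T`, split into legal pieces -/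
theorem hop (hφ : FlowPkg φ) (hT : 0 < T) {t : ℝ} (h1 : T ≤ t)
    (h3 : dist (φ x t) y ≤ c) : ReachW φ T c x y := by
  have hc : 0 ≤ c := dist_nonneg.trans h3
  -- strong induction on n with t ≤ (n+2) * T
  obtain ⟨n, hn⟩ : ∃ n : ℕ, t ≤ (n + 2) * T := by
    obtain ⟨n, hn⟩ := exists_nat_ge (t / T)
    exact ⟨n, by
      rw [div_le_iff₀ hT] at hn
      nlinarith [hT.le]⟩
  induction n generalizing x t with
  | zero =>
    exact single h1 (by push_cast at hn; linarith) h3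
  | succ n ih =>
    by_cases h2T : t ≤ 2*T
    · exact single h1 h2T h3
    · push_neg at h2T
      have hstep : ReachW φ T c x (φ x T) :=
        single le_rfl (by linarith) (by rw [dist_self] at *; exact hc)
      have hrest : ReachW φ T c (φ x T) y := by
        apply ih (t := t - T)
        · linarith
        · rw [hφ.law', show T + (t - T) = t by ring]; exact h3
        · push_cast at hn ⊢; linarith
      exact hstep.trans hrest

theorem endpoint_lip (h : ReachW φ T c x y) {y' : M} :
    ReachW φ T (c + dist y y') x y' := by
  have hd : (0:ℝ) ≤ dist y y' := dist_nonneg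
  cases h with
  | single h1 h2 h3 =>
      exact single h1 h2 ((dist_triangle _ y y').trans (by linarith))
  | tail h h1 h2 h3 =>
      exact tail (h.mono (by linarith)) h1 h2 ((dist_triangle _ y y').trans (by linarith))

theorem start_perturb {x' : M} {ε : ℝ} (hT : 0 < T)
    (hm : ∀ t : ℝ, T ≤ t → t ≤ 2*T → dist (φ x t) (φ x' t) ≤ ε)
    (h : ReachW φ T c x y) : ReachW φ T (c + ε) x' y := by
  have hε : 0 ≤ ε := le_trans dist_nonneg (hm T le_rfl (by linarith))
  induction h with
  | @single a t h1 h2 h3 =>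
      refine single h1 h2 ((dist_triangle (φ x' t) (φ x t) a).trans ?_)
      have := hm t h1 h2
      rw [dist_comm (φ x' t)]
      linarith
  | tail h h1 h2 h3 ih =>
      exact tail ih h1 h2 (h3.trans (by linarith))

/-- conjugation by the flow: shift the whole chain by time `s` -/
theorem conj (hφ : FlowPkg φ) {s ε : ℝ}
    (hm : ∀ a b : M, dist a b ≤ c → dist (φ a s) (φ b s) ≤ ε)
    (h : ReachW φ T c x y) : ReachW φ T ε (φ x s) (φ y s) := by
  induction h with
  | @single a t h1 h2 h3 =>
      refine single h1 h2 ?_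
      have e : φ (φ x s) t = φ (φ x t) s := by
        rw [hφ.law', hφ.law', add_comm]
      rw [e]
      exact hm _ _ h3
  | @tail b a t h h1 h2 h3 ih =>
      refine tail ih h1 h2 ?_
      have e : φ (φ b s) t = φ (φ b t) s := by
        rw [hφ.law', hφ.law', add_comm]
      rw [e]
      exact hm _ _ h3

/-- extend the endpoint by flowing a small time `s ∈ [0,2T]` -/
theorem endpoint_flow (hφ : FlowPkg φ) (hT : 0 < T) {s ε : ℝ} (hs0 : 0 ≤ s)
    (hm : ∀ a b : M, dist a b ≤ c → dist (φ a s) (φ b s) ≤ ε)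
    (hce : c ≤ ε) (h : ReachW φ T c x y) : ReachW φ T ε x (φ y s) := by
  cases h with
  | @single a t h1 h2 h3 =>
      refine hop hφ hT (t := t + s) (by linarith) ?_
      rw [← hφ.law']
      exact hm _ _ h3
  | @tail b a t h h1 h2 h3 =>
      refine (h.mono hce).trans (hop hφ hT (t := t + s) (by linarith) ?_)
      rw [← hφ.law']
      exact hm _ _ h3

/-- lower the time-scale parameter -/
theorem scale (hφ : FlowPkg φ) {T' : ℝ} (hT : 0 < T) (hTT : T ≤ T')
    (h : ReachW φ T' c x y) : ReachW φ T c x y := by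
  induction h with
  | single h1 h2 h3 => exact hop hφ hT (le_trans hTT h1) h3
  | tail h h1 h2 h3 ih => exact ih.trans (hop hφ hT (le_trans hTT h1) h3)

/-- time reversal -/
theorem rev (hφ : FlowPkg φ) {φ' : M → ℝ → M} {ε : ℝ}
    (hrev : ∀ (a : M) (t : ℝ), φ' a t = φ a (-t))
    (hm : ∀ a b : M, dist a b ≤ c → ∀ t : ℝ, T ≤ t → t ≤ 2*T → dist (φ' a t) (φ' b t) ≤ ε)
    (h : ReachW φ T c x y) : ReachW φ' T ε y x := by
  induction h with
  | @single a t h1 h2 h3 =>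
      refine single h1 h2 ?_
      have key : φ' (φ x t) t = x := by
        rw [hrev, hφ.law', add_neg_cancel, hφ.zero]
      calc dist (φ' a t) x = dist (φ' a t) (φ' (φ x t) t) := by rw [key]
        _ ≤ ε := hm _ _ (by rw [dist_comm]; exact h3) _ h1 h2
  | @tail b a t h h1 h2 h3 ih =>
      have key : φ' (φ b t) t = b := by
        rw [hrev, hφ.law', add_neg_cancel, hφ.zero]
      refine (single h1 h2 ?_).trans ih
      calc dist (φ' a t) b = dist (φ' a t) (φ' (φ b t) t) := by rw [key]
        _ ≤ ε := hm _ _ (by rw [dist_comm]; exact h3) _ h1 h2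

end ReachW


/-- If a continuous nonnegative function has zero integral on `[a,b]`, it vanishes there. -/
theorem vanish_of_integral_zero {f : ℝ → ℝ} (hf : Continuous f) (h0 : ∀ t, 0 ≤ f t)
    {a b : ℝ} (hab : a < b) (hI : (∫ t in a..b, f t) = 0) :
    ∀ t₀ ∈ Icc a b, f t₀ = 0 := by
  intro t₀ ht₀
  by_contra hc
  have hpos : 0 < f t₀ := lt_of_le_of_ne (h0 t₀) (Ne.symm hc)
  obtain ⟨δ, hδ, hball⟩ := Metric.continuous_iff.mp hf t₀ (f t₀ / 2) (by linarith)
  set u := max a (t₀ - δ/2) with hu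
  set v := min b (t₀ + δ/2) with hv
  have hau : a ≤ u := le_max_left _ _
  have hvb : v ≤ b := min_le_left _ _
  have hut : u ≤ t₀ := max_le ht₀.1 (by linarith)
  have htv : t₀ ≤ v := le_min ht₀.2 (by linarith)
  have huv : u < v := by
    rcases lt_or_ge a t₀ with h | h
    · have : u < t₀ := max_lt (by linarith) (by linarith)
      linarith
    · have ht0 : t₀ = a := le_antisymm (by linarith [ht₀.1]) ht₀.1
      have : t₀ < v := lt_min (by rw [ht0]; exact hab) (by linarith)
      linarith
  have hflow : ∀ t ∈ Icc u v, f t₀ / 2 ≤ f t := by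
    intro t ht
    have : dist t t₀ < δ := by
      rw [Real.dist_eq, abs_lt]
      constructor <;>
      · simp only [hu, hv] at ht
        rcases ht with ⟨h1, h2⟩
        have := le_max_right a (t₀ - δ/2)
        have := min_le_right b (t₀ + δ/2)
        linarith
    have := hball t this
    rw [Real.dist_eq, abs_lt] at this
    linarith
  have hint : ∀ (p q : ℝ), IntervalIntegrable f MeasureTheory.volume p q :=
    fun p q => hf.intervalIntegrable p q
  have hsplit : (∫ t in a..u, f t) + (∫ t in u..v, f t) + (∫ t in v..b, f t)
      = ∫ t in a..b, f t := by
    rw [intervalIntegral.integral_add_adjacent_intervals (hint a u) (hint u v)]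
    exact intervalIntegral.integral_add_adjacent_intervals (hint a v) (hint v b)
  have h1 : 0 ≤ ∫ t in a..u, f t :=
    intervalIntegral.integral_nonneg hau (fun t _ => h0 t)
  have h2 : 0 ≤ ∫ t in v..b, f t :=
    intervalIntegral.integral_nonneg hvb (fun t _ => h0 t)
  have h3 : (v - u) * (f t₀ / 2) ≤ ∫ t in u..v, f t := by
    have := intervalIntegral.integral_mono_on (f := fun _ => f t₀ / 2) (g := f)
      huv.le (intervalIntegrable_const) (hint u v) hflow
    rwa [intervalIntegral.integral_const, smul_eq_mul] at this
  have : 0 < (v - u) * (f t₀ / 2) := by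
    apply mul_pos (by linarith) (by linarith)
  linarith [hI ▸ hsplit]



section Cost

variable [CompactSpace M] {φ : M → ℝ → M} {Z : Set M} {T : ℝ}

/-- set of costs of chains from `Z` to `x` -/
def costSet (φ : M → ℝ → M) (Z : Set M) (T : ℝ) (x : M) : Set ℝ :=
  {c | ∃ z ∈ Z, ReachW φ T c z x}

/-- chain cost from `Z` to `x` -/
noncomputable def ucost (φ : M → ℝ → M) (Z : Set M) (T : ℝ) (x : M) : ℝ :=
  sInf (costSet φ Z T x)

theorem costSet_bddBelow (x : M) : BddBelow (costSet φ Z T x) :=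
  ⟨0, fun _ hc => hc.choose_spec.2.nonneg⟩

theorem costSet_nonempty (hZ : Z.Nonempty) (hT : 0 < T) (x : M) :
    (costSet φ Z T x).Nonempty := by
  obtain ⟨z, hz⟩ := hZ
  exact ⟨dist (φ z T) x, z, hz, ReachW.single le_rfl (by linarith) le_rfl⟩

theorem ucost_nonneg (hZ : Z.Nonempty) (hT : 0 < T) (x : M) : 0 ≤ ucost φ Z T x :=
  le_csInf (costSet_nonempty hZ hT x) (fun _ hc => hc.choose_spec.2.nonneg)

theorem ucost_le {x : M} {c : ℝ} (hc : c ∈ costSet φ Z T x) : ucost φ Z T x ≤ c :=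
  csInf_le (costSet_bddBelow x) hc

theorem exists_reach (hZ : Z.Nonempty) (hT : 0 < T) {x : M} {δ : ℝ}
    (h : ucost φ Z T x < δ) : ∃ z ∈ Z, ReachW φ T δ z x := by
  obtain ⟨c, hc, hcδ⟩ := exists_lt_of_csInf_lt (costSet_nonempty hZ hT x) h
  obtain ⟨z, hz, hr⟩ := hc
  exact ⟨z, hz, hr.mono hcδ.le⟩

theorem ucost_lip (hZ : Z.Nonempty) (hT : 0 < T) (x x' : M) :
    ucost φ Z T x' ≤ ucost φ Z T x + dist x x' := by
  have : ucost φ Z T x' - dist x x' ≤ ucost φ Z T x := by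
    apply le_csInf (costSet_nonempty hZ hT x)
    intro c hc
    obtain ⟨z, hz, hr⟩ := hc
    have : ucost φ Z T x' ≤ c + dist x x' := ucost_le ⟨z, hz, hr.endpoint_lip⟩
    linarith
  linarith

theorem ucost_flow_le (hφ : FlowPkg φ) (hZ : Z.Nonempty) (hT : 0 < T) (x : M) {s : ℝ}
    (hs : T ≤ s) : ucost φ Z T (φ x s) ≤ ucost φ Z T x := by
  apply le_csInf (costSet_nonempty hZ hT x)
  intro c hc
  obtain ⟨z, hz, hr⟩ := hc
  refine ucost_le ⟨z, hz, hr.trans (ReachW.hop hφ hT hs ?_)⟩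
  rw [dist_self]; exact hr.nonneg

theorem ucost_zero_on (hφ : FlowPkg φ) (hT : 0 < T)
    (hZinv : ∀ z ∈ Z, ∀ t : ℝ, φ z t ∈ Z) {z : M} (hz : z ∈ Z) : ucost φ Z T z = 0 := by
  have h1 : ucost φ Z T z ≤ 0 := by
    apply ucost_le
    refine ⟨φ z (-T), hZinv z hz (-T), ReachW.single le_rfl (by linarith) ?_⟩
    rw [hφ.law', neg_add_cancel, hφ.zero, dist_self]
  exact le_antisymm h1 (ucost_nonneg ⟨z, hz⟩ hT z)

theorem ucost_bound (hZ : Z.Nonempty) : ∃ C : ℝ, ∀ (T : ℝ) (x : M),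
    0 < T → ucost φ Z T x ≤ C := by
  obtain ⟨z₀, hz₀⟩ := hZ
  obtain ⟨r, hr⟩ := isBounded_of_compactSpace (s := (univ : Set M)).subset_closedBall z₀
  refine ⟨2 * r, fun T x hT => ?_⟩
  have h1 : dist (φ z₀ T) z₀ ≤ r := hr (mem_univ _)
  have h2 : dist x z₀ ≤ r := hr (mem_univ _)
  refine (ucost_le ⟨z₀, hz₀, ReachW.single le_rfl (by linarith) le_rfl⟩).trans ?_
  calc dist (φ z₀ T) x ≤ dist (φ z₀ T) z₀ + dist z₀ x := dist_triangle _ _ _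
    _ ≤ 2 * r := by rw [dist_comm z₀ x]; linarith

/-- windowed cost: sup of `ucost` over forward window `[0,T]` -/
noncomputable def wcost (φ : M → ℝ → M) (Z : Set M) (T : ℝ) (x : M) : ℝ :=
  sSup ((fun s => ucost φ Z T (φ x s)) '' Icc 0 T)

theorem wcost_bddAbove (hZ : Z.Nonempty) (hT : 0 < T) (x : M) :
    BddAbove ((fun s => ucost φ Z T (φ x s)) '' Icc 0 T) := by
  obtain ⟨C, hC⟩ := ucost_bound (φ := φ) hZ
  exact ⟨C, fun c hc => by obtain ⟨s, _, rfl⟩ := hc; exact hC T _ hT⟩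

theorem wcost_img_nonempty (hT : 0 < T) (x : M) :
    ((fun s => ucost φ Z T (φ x s)) '' Icc 0 T).Nonempty :=
  ⟨ucost φ Z T (φ x 0), ⟨0, ⟨le_rfl, hT.le⟩, rfl⟩⟩

theorem le_wcost (hZ : Z.Nonempty) (hT : 0 < T) (x : M) {s : ℝ} (hs : s ∈ Icc 0 T) :
    ucost φ Z T (φ x s) ≤ wcost φ Z T x :=
  le_csSup (wcost_bddAbove hZ hT x) ⟨s, hs, rfl⟩

theorem wcost_le (hT : 0 < T) {x : M} {b : ℝ}
    (h : ∀ s ∈ Icc (0:ℝ) T, ucost φ Z T (φ x s) ≤ b) : wcost φ Z T x ≤ b :=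
  csSup_le (wcost_img_nonempty hT x) (fun c hc => by obtain ⟨s, hs, rfl⟩ := hc; exact h s hs)

theorem wcost_nonneg (hφ : FlowPkg φ) (hZ : Z.Nonempty) (hT : 0 < T) (x : M) :
    0 ≤ wcost φ Z T x :=
  (ucost_nonneg hZ hT _).trans (le_wcost hZ hT x ⟨le_rfl, hT.le⟩)

theorem wcost_flow_le (hφ : FlowPkg φ) (hZ : Z.Nonempty) (hT : 0 < T) (x : M) {r : ℝ}
    (hr : 0 ≤ r) : wcost φ Z T (φ x r) ≤ wcost φ Z T x := by
  apply wcost_le hT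
  intro s hs
  rw [hφ.law']
  rcases le_or_gt (r + s) T with h | h
  · exact le_wcost hZ hT x ⟨by linarith [hs.1], h⟩
  · set q := min T (r + s - T) with hq
    have hq0 : 0 ≤ q := le_min hT.le (by linarith)
    have hqT : q ≤ T := min_le_left _ _
    have hrs : T ≤ (r + s) - q := by
      rcases min_cases T (r + s - T) with ⟨h1, h2⟩ | ⟨h1, h2⟩ <;> rw [hq, h1] <;> linarith
    have e : φ x (r + s) = φ (φ x q) ((r + s) - q) := by
      rw [hφ.law', add_sub_cancel]
    rw [e]
    exact (ucost_flow_le hφ hZ hT _ hrs).trans (le_wcost hZ hT x ⟨hq0, hqT⟩)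

theorem wcost_zero_on (hφ : FlowPkg φ) (hT : 0 < T)
    (hZinv : ∀ z ∈ Z, ∀ t : ℝ, φ z t ∈ Z) {z : M} (hz : z ∈ Z) : wcost φ Z T z = 0 := by
  apply le_antisymm
  · apply wcost_le hT
    intro s _
    rw [ucost_zero_on hφ hT hZinv (hZinv z hz s)]
  · exact wcost_nonneg hφ ⟨z, hz⟩ hT z

theorem wcost_continuous (hφ : FlowPkg φ) (hZ : Z.Nonempty) (hT : 0 < T) :
    Continuous (wcost φ Z T) := by
  rw [Metric.continuous_iff]
  intro x ε hε
  obtain ⟨δ, hδ, hm⟩ := hφ.uc T (half_pos hε)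
  refine ⟨δ, hδ, fun y hy => ?_⟩
  have key : ∀ a b : M, dist a b ≤ δ → wcost φ Z T a ≤ wcost φ Z T b + ε/2 := by
    intro a b hab
    apply wcost_le hT
    intro s hs
    have h1 : ucost φ Z T (φ a s) ≤ ucost φ Z T (φ b s) + dist (φ b s) (φ a s) :=
      ucost_lip hZ hT _ _
    have h2 : dist (φ b s) (φ a s) ≤ ε/2 := by
      apply hm b a (by rw [dist_comm]; exact hab) s
      rw [abs_of_nonneg hs.1]; exact hs.2
    linarith [le_wcost (φ := φ) hZ hT b hs]
  have k1 := key y x hy.le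
  have k2 := key x y (by rw [dist_comm]; exact hy.le)
  rw [Real.dist_eq, abs_lt]
  constructor <;> linarith

end Cost


section Lyap

variable [CompactSpace M] {φ : M → ℝ → M} {Z : Set M}

/-- summed, truncated, windowed cost over all time scales -/
noncomputable def gfun (φ : M → ℝ → M) (Z : Set M) (x : M) : ℝ :=
  ∑' k : ℕ, (2:ℝ)⁻¹ ^ (k+1) * min 1 (wcost φ Z (k+2) x)

theorem Tk_pos (k : ℕ) : (0:ℝ) < (k:ℝ) + 2 := by positivity

theorem gterm_nonneg (hφ : FlowPkg φ) (hZ : Z.Nonempty) (k : ℕ) (x : M) :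
    0 ≤ (2:ℝ)⁻¹ ^ (k+1) * min 1 (wcost φ Z (k+2) x) := by
  apply mul_nonneg (by positivity)
  exact le_min zero_le_one (wcost_nonneg hφ hZ (Tk_pos k) x)

theorem gterm_le (hφ : FlowPkg φ) (hZ : Z.Nonempty) (k : ℕ) (x : M) :
    (2:ℝ)⁻¹ ^ (k+1) * min 1 (wcost φ Z (k+2) x) ≤ (2:ℝ)⁻¹ ^ (k+1) := by
  have h1 : min 1 (wcost φ Z (k+2) x) ≤ 1 := min_le_left _ _
  nlinarith [pow_nonneg (by norm_num : (0:ℝ) ≤ 2⁻¹) (k+1)]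

theorem summable_halfpow : Summable (fun k : ℕ => (2:ℝ)⁻¹ ^ (k+1)) := by
  have := (summable_geometric_of_lt_one (by norm_num : (0:ℝ) ≤ 2⁻¹) (by norm_num)).mul_right 2⁻¹
  simpa [pow_succ] using this

theorem gfun_summable (hφ : FlowPkg φ) (hZ : Z.Nonempty) (x : M) :
    Summable (fun k : ℕ => (2:ℝ)⁻¹ ^ (k+1) * min 1 (wcost φ Z (k+2) x)) :=
  Summable.of_nonneg_of_le (fun k => gterm_nonneg hφ hZ k x) (fun k => gterm_le hφ hZ k x)
    summable_halfpow

theorem gfun_nonneg (hφ : FlowPkg φ) (hZ : Z.Nonempty) (x : M) : 0 ≤ gfun φ Z x :=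
  tsum_nonneg (fun k => gterm_nonneg hφ hZ k x)

theorem gfun_le_one (hφ : FlowPkg φ) (hZ : Z.Nonempty) (x : M) : gfun φ Z x ≤ 1 := by
  have h1 : gfun φ Z x ≤ ∑' k : ℕ, (2:ℝ)⁻¹ ^ (k+1) :=
    Summable.tsum_le_tsum (fun k => gterm_le hφ hZ k x) (gfun_summable hφ hZ x) summable_halfpow
  have h2 : ∑' k : ℕ, (2:ℝ)⁻¹ ^ (k+1) = 1 := by
    have e : ∀ k : ℕ, (2:ℝ)⁻¹ ^ (k+1) = (2:ℝ)⁻¹ ^ k * 2⁻¹ := fun k => pow_succ _ _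
    rw [tsum_congr e, tsum_mul_right, tsum_geometric_of_lt_one (by norm_num) (by norm_num)]
    norm_num
  linarith

theorem gfun_continuous (hφ : FlowPkg φ) (hZ : Z.Nonempty) : Continuous (gfun φ Z) := by
  apply continuous_tsum (u := fun k : ℕ => (2:ℝ)⁻¹ ^ (k+1))
  · intro k
    exact continuous_const.mul (continuous_const.min (wcost_continuous hφ hZ (Tk_pos k)))
  · exact summable_halfpow
  · intro k x
    rw [Real.norm_eq_abs, abs_of_nonneg (gterm_nonneg hφ hZ k x)]
    exact gterm_le hφ hZ k x

theorem gfun_flow_le (hφ : FlowPkg φ) (hZ : Z.Nonempty) (x : M) {r : ℝ} (hr : 0 ≤ r) :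
    gfun φ Z (φ x r) ≤ gfun φ Z x := by
  apply Summable.tsum_le_tsum _ (gfun_summable hφ hZ _) (gfun_summable hφ hZ _)
  intro k
  have := wcost_flow_le hφ hZ (Tk_pos k) x hr
  have h2 : min 1 (wcost φ Z (k+2) (φ x r)) ≤ min 1 (wcost φ Z (k+2) x) :=
    min_le_min le_rfl this
  nlinarith [pow_nonneg (by norm_num : (0:ℝ) ≤ 2⁻¹) (k+1)]

theorem gfun_zero_on (hφ : FlowPkg φ) (hZinv : ∀ z ∈ Z, ∀ t : ℝ, φ z t ∈ Z)
    {z : M} (hz : z ∈ Z) : gfun φ Z z = 0 := by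
  have : ∀ k : ℕ, (2:ℝ)⁻¹ ^ (k+1) * min 1 (wcost φ Z (k+2) z) = 0 := by
    intro k
    rw [wcost_zero_on hφ (Tk_pos k) hZinv hz]
    simp
  rw [gfun, tsum_congr this, tsum_zero]

theorem gfun_zero_imp (hφ : FlowPkg φ) (hZ : Z.Nonempty) {x : M} (h : gfun φ Z x = 0)
    (k : ℕ) : wcost φ Z (k+2) x = 0 := by
  have hterm : (2:ℝ)⁻¹ ^ (k+1) * min 1 (wcost φ Z (k+2) x) = 0 := by
    have hle := Summable.le_tsum (gfun_summable hφ hZ x) k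
      (fun j _ => gterm_nonneg hφ hZ j x)
    have := gterm_nonneg hφ hZ k x
    rw [← gfun] at hle
    linarith [h ▸ hle]
  have hp : (0:ℝ) < (2:ℝ)⁻¹ ^ (k+1) := by positivity
  have hmin : min 1 (wcost φ Z (k+2) x) = 0 := by
    rcases mul_eq_zero.mp hterm with h' | h'
    · linarith
    · exact h'
  have hw := wcost_nonneg hφ hZ (Tk_pos k) x
  rcases min_cases (1:ℝ) (wcost φ Z (k+2) x) with ⟨h1, _⟩ | ⟨h1, _⟩
  · rw [h1] at hmin; norm_num at hmin
  · rw [h1] at hmin; exact hmin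

/-- the Lyapunov-type function: discounted accumulated cost along the orbit -/
noncomputable def Gfun (φ : M → ℝ → M) (Z : Set M) (x : M) : ℝ :=
  ∑' n : ℕ, (2:ℝ)⁻¹ ^ n * ∫ t in (0:ℝ)..(n:ℝ), gfun φ Z (φ x t)

theorem gfun_orbit_continuous (hφ : FlowPkg φ) (hZ : Z.Nonempty) :
    Continuous (fun p : M × ℝ => gfun φ Z (φ p.1 p.2)) :=
  (gfun_continuous hφ hZ).comp hφ.cont

theorem Gterm_nonneg (hφ : FlowPkg φ) (hZ : Z.Nonempty) (n : ℕ) (x : M) :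
    0 ≤ (2:ℝ)⁻¹ ^ n * ∫ t in (0:ℝ)..(n:ℝ), gfun φ Z (φ x t) := by
  apply mul_nonneg (by positivity)
  exact intervalIntegral.integral_nonneg (by positivity) (fun t _ => gfun_nonneg hφ hZ _)

theorem Gterm_le (hφ : FlowPkg φ) (hZ : Z.Nonempty) (n : ℕ) (x : M) :
    (2:ℝ)⁻¹ ^ n * ∫ t in (0:ℝ)..(n:ℝ), gfun φ Z (φ x t) ≤ (2:ℝ)⁻¹ ^ n * n := by
  have h1 : ‖∫ t in (0:ℝ)..(n:ℝ), gfun φ Z (φ x t)‖ ≤ 1 * |(n:ℝ) - 0| := by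
    apply intervalIntegral.norm_integral_le_of_norm_le_const
    intro t _
    rw [Real.norm_eq_abs, abs_of_nonneg (gfun_nonneg hφ hZ _)]
    exact gfun_le_one hφ hZ _
  rw [Real.norm_eq_abs] at h1
  have h2 : (∫ t in (0:ℝ)..(n:ℝ), gfun φ Z (φ x t)) ≤ (n:ℝ) := by
    have := le_abs_self (∫ t in (0:ℝ)..(n:ℝ), gfun φ Z (φ x t))
    have h3 : |(n:ℝ) - 0| = (n:ℝ) := by simp
    linarith [h1, h3 ▸ h1]
  nlinarith [pow_nonneg (by norm_num : (0:ℝ) ≤ 2⁻¹) n]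

theorem summable_npow : Summable (fun n : ℕ => (2:ℝ)⁻¹ ^ n * n) := by
  have := summable_pow_mul_geometric_of_norm_lt_one (R := ℝ) 1 (r := 2⁻¹)
    (by rw [Real.norm_eq_abs, abs_of_nonneg (by norm_num : (0:ℝ) ≤ 2⁻¹)]; norm_num)
  simpa [mul_comm] using this

theorem Gfun_summable (hφ : FlowPkg φ) (hZ : Z.Nonempty) (x : M) :
    Summable (fun n : ℕ => (2:ℝ)⁻¹ ^ n * ∫ t in (0:ℝ)..(n:ℝ), gfun φ Z (φ x t)) :=
  Summable.of_nonneg_of_le (fun n => Gterm_nonneg hφ hZ n x) (fun n => Gterm_le hφ hZ n x)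
    summable_npow

theorem Gfun_nonneg (hφ : FlowPkg φ) (hZ : Z.Nonempty) (x : M) : 0 ≤ Gfun φ Z x :=
  tsum_nonneg (fun n => Gterm_nonneg hφ hZ n x)

theorem Gfun_continuous (hφ : FlowPkg φ) (hZ : Z.Nonempty) : Continuous (Gfun φ Z) := by
  apply continuous_tsum (u := fun n : ℕ => (2:ℝ)⁻¹ ^ n * n)
  · intro n
    exact continuous_const.mul
      (intervalIntegral.continuous_parametric_intervalIntegral_of_continuous'
        (f := fun x t => gfun φ Z (φ x t)) (gfun_orbit_continuous hφ hZ) 0 n)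
  · exact summable_npow
  · intro n x
    rw [Real.norm_eq_abs, abs_of_nonneg (Gterm_nonneg hφ hZ n x)]
    exact Gterm_le hφ hZ n x

theorem Gfun_flow_le (hφ : FlowPkg φ) (hZ : Z.Nonempty) (x : M) {r : ℝ} (hr : 0 ≤ r) :
    Gfun φ Z (φ x r) ≤ Gfun φ Z x := by
  apply Summable.tsum_le_tsum _ (Gfun_summable hφ hZ _) (Gfun_summable hφ hZ _)
  intro n
  have hint : ∀ y : M, IntervalIntegrable (fun t => gfun φ Z (φ y t))
      MeasureTheory.volume 0 n := fun y =>
    ((gfun_continuous hφ hZ).comp (hφ.contT y)).intervalIntegrable 0 n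
  have hmono : (∫ t in (0:ℝ)..(n:ℝ), gfun φ Z (φ (φ x r) t))
      ≤ ∫ t in (0:ℝ)..(n:ℝ), gfun φ Z (φ x t) := by
    apply intervalIntegral.integral_mono_on (by positivity) (hint (φ x r)) (hint x)
    intro t ht
    have e : φ (φ x r) t = φ (φ x t) r := by rw [hφ.law', hφ.law', add_comm]
    rw [e]
    exact gfun_flow_le hφ hZ (φ x t) hr
  nlinarith [pow_nonneg (by norm_num : (0:ℝ) ≤ 2⁻¹) n]

theorem Gfun_zero_on (hφ : FlowPkg φ) (hZinv : ∀ z ∈ Z, ∀ t : ℝ, φ z t ∈ Z)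
    {z : M} (hz : z ∈ Z) : Gfun φ Z z = 0 := by
  have : ∀ n : ℕ, (2:ℝ)⁻¹ ^ n * ∫ t in (0:ℝ)..(n:ℝ), gfun φ Z (φ z t) = 0 := by
    intro n
    have : ∀ t : ℝ, gfun φ Z (φ z t) = 0 := fun t => gfun_zero_on hφ hZinv (hZinv z hz t)
    simp [this]
  rw [Gfun, tsum_congr this, tsum_zero]

theorem orbit_cont (hφ : FlowPkg φ) (hZ : Z.Nonempty) (y : M) :
    Continuous fun t : ℝ => gfun φ Z (φ y t) :=
  (gfun_continuous hφ hZ).comp (hφ.contT y)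

theorem Gfun_zero_imp (hφ : FlowPkg φ) (hZ : Z.Nonempty) {x : M} (h : Gfun φ Z x = 0) :
    gfun φ Z x = 0 := by
  have hterm : (2:ℝ)⁻¹ ^ 1 * ∫ t in (0:ℝ)..((1:ℕ):ℝ), gfun φ Z (φ x t) = 0 := by
    have hle := Summable.le_tsum (Gfun_summable hφ hZ x) 1 (fun j _ => Gterm_nonneg hφ hZ j x)
    rw [← Gfun] at hle
    have := Gterm_nonneg hφ hZ 1 x
    linarith [h ▸ hle]
  have hI : (∫ t in (0:ℝ)..(1:ℝ), gfun φ Z (φ x t)) = 0 := by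
    have hp : ((2:ℝ)⁻¹ ^ 1) ≠ 0 := by norm_num
    have := mul_eq_zero.mp hterm
    rcases this with h' | h'
    · exact absurd h' hp
    · simpa using h'
  have := vanish_of_integral_zero (orbit_cont hφ hZ x)
    (fun t => gfun_nonneg hφ hZ _) one_pos hI 0 ⟨le_rfl, zero_le_one⟩
  rwa [hφ.zero] at this

/-- KEY rigidity: if the Lyapunov function fails to strictly decrease over a
positive time step, then `gfun` is constant on the whole forward orbit. -/
theorem Gfun_rigid (hφ : FlowPkg φ) (hZ : Z.Nonempty) {x : M} {s : ℝ} (hs : 0 < s)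
    (h : Gfun φ Z (φ x s) = Gfun φ Z x) : ∀ t : ℝ, 0 ≤ t → gfun φ Z (φ x t) = gfun φ Z x := by
  -- termwise equality
  have hint : ∀ y : M, ∀ n : ℕ, IntervalIntegrable (fun t => gfun φ Z (φ y t))
      MeasureTheory.volume 0 n := fun y n =>
    ((gfun_continuous hφ hZ).comp (hφ.contT y)).intervalIntegrable 0 n
  have hterm : ∀ n : ℕ,
      ((2:ℝ)⁻¹ ^ n * ∫ t in (0:ℝ)..(n:ℝ), gfun φ Z (φ (φ x s) t))
        = (2:ℝ)⁻¹ ^ n * ∫ t in (0:ℝ)..(n:ℝ), gfun φ Z (φ x t) := by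
    by_contra hne
    push_neg at hne
    obtain ⟨n, hn⟩ := hne
    have hle : ∀ m : ℕ, ((2:ℝ)⁻¹ ^ m * ∫ t in (0:ℝ)..(m:ℝ), gfun φ Z (φ (φ x s) t))
        ≤ (2:ℝ)⁻¹ ^ m * ∫ t in (0:ℝ)..(m:ℝ), gfun φ Z (φ x t) := by
      intro m
      have hmono : (∫ t in (0:ℝ)..(m:ℝ), gfun φ Z (φ (φ x s) t))
          ≤ ∫ t in (0:ℝ)..(m:ℝ), gfun φ Z (φ x t) := by
        apply intervalIntegral.integral_mono_on (by positivity) (hint (φ x s) m) (hint x m)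
        intro t ht
        have e : φ (φ x s) t = φ (φ x t) s := by rw [hφ.law', hφ.law', add_comm]
        rw [e]
        exact gfun_flow_le hφ hZ (φ x t) hs.le
      nlinarith [pow_nonneg (by norm_num : (0:ℝ) ≤ 2⁻¹) m]
    have hstrict := Summable.tsum_lt_tsum hle (lt_of_le_of_ne (hle n) hn)
      (Gfun_summable hφ hZ (φ x s)) (Gfun_summable hφ hZ x)
    rw [← Gfun, ← Gfun, h] at hstrict
    exact lt_irrefl _ hstrict
  -- pointwise equality on each interval
  have hpt : ∀ t : ℝ, 0 ≤ t → gfun φ Z (φ x (s + t)) = gfun φ Z (φ x t) := by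
    intro t ht
    obtain ⟨n, hn⟩ := exists_nat_ge t
    have hn1 : (0:ℝ) < (((n+1):ℕ):ℝ) := by positivity
    have hIeq : (∫ u in (0:ℝ)..((((n+1)):ℕ):ℝ),
        (gfun φ Z (φ x u) - gfun φ Z (φ (φ x s) u))) = 0 := by
      rw [intervalIntegral.integral_sub (hint x (n+1)) (hint (φ x s) (n+1))]
      have hp : ((2:ℝ)⁻¹ ^ (n+1)) ≠ 0 := by positivity
      have := mul_left_cancel₀ hp (hterm (n+1))
      linarith [this]
    have hvan := vanish_of_integral_zero
      ((orbit_cont hφ hZ x).sub (orbit_cont hφ hZ (φ x s)))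
      (fun u => by
        have e : φ (φ x s) u = φ (φ x u) s := by rw [hφ.law', hφ.law', add_comm]
        have hle := gfun_flow_le hφ hZ (φ x u) hs.le
        simp only [Pi.sub_apply, sub_nonneg]
        rw [e]
        exact hle)
      hn1 hIeq t ⟨ht, by push_cast; linarith⟩
    simp only [Pi.sub_apply, sub_eq_zero] at hvan
    have e2 : φ (φ x s) t = φ x (s + t) := hφ.law' x s t
    rw [e2] at hvan
    linarith [hvan.symm.le, hvan.symm.ge]
  -- now constancy
  have hks : ∀ k : ℕ, gfun φ Z (φ x (k * s)) = gfun φ Z x := by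
    intro k
    induction k with
    | zero => simp [hφ.zero]
    | succ k ih =>
      have e : ((k:ℝ)+1) * s = s + k * s := by ring
      push_cast
      rw [e, hpt (k*s) (by positivity)]
      exact ih
  intro t ht
  obtain ⟨k, hk⟩ := exists_nat_ge (t / s)
  have hks' : t ≤ k * s := by
    rw [div_le_iff₀ hs] at hk
    linarith
  have h1 : gfun φ Z (φ x t) ≤ gfun φ Z x := by
    have := gfun_flow_le hφ hZ x ht
    nth_rewrite 2 [← hφ.zero x]
    have e : φ x t = φ (φ x 0) t := by rw [hφ.zero]
    calc gfun φ Z (φ x t) ≤ gfun φ Z x := gfun_flow_le hφ hZ x ht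
      _ = gfun φ Z (φ x 0) := by rw [hφ.zero]
  have h2 : gfun φ Z x ≤ gfun φ Z (φ x t) := by
    calc gfun φ Z x = gfun φ Z (φ x (k * s)) := (hks k).symm
      _ = gfun φ Z (φ (φ x t) (k * s - t)) := by rw [hφ.law', add_sub_cancel]
      _ ≤ gfun φ Z (φ x t) := gfun_flow_le hφ hZ (φ x t) (by linarith)
  have h3 : gfun φ Z (φ x 0) = gfun φ Z x := by rw [hφ.zero]
  linarith [h1, h2, h3 ▸ h1]

/-- consequence: `Gfun` is then constant along the forward orbit -/
theorem Gfun_const_orbit (hφ : FlowPkg φ) (hZ : Z.Nonempty) {x : M} {s : ℝ} (hs : 0 < s)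
    (h : Gfun φ Z (φ x s) = Gfun φ Z x) : ∀ r : ℝ, 0 ≤ r → Gfun φ Z (φ x r) = Gfun φ Z x := by
  have hg := Gfun_rigid hφ hZ hs h
  intro r hr
  have hterm : ∀ n : ℕ, ((2:ℝ)⁻¹ ^ n * ∫ t in (0:ℝ)..(n:ℝ), gfun φ Z (φ (φ x r) t))
      = (2:ℝ)⁻¹ ^ n * ∫ t in (0:ℝ)..(n:ℝ), gfun φ Z (φ x t) := by
    intro n
    congr 1
    apply intervalIntegral.integral_congr
    intro t ht
    rw [uIcc_of_le (by positivity)] at ht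
    have e : φ (φ x r) t = φ x (r + t) := hφ.law' x r t
    simp only []
    rw [e, hg (r+t) (by linarith [ht.1]), hg t ht.1]
  rw [Gfun, Gfun, tsum_congr hterm]

end Lyap


section RSet

variable [CompactSpace M] {φ : M → ℝ → M}

theorem R_mem_imp (hφ : FlowPkg φ) {x : M} (hx : x ∈ chainRecurrentSet φ)
    {T δ : ℝ} (hT : 0 < T) (hδ : 0 < δ) : ReachW φ T δ x x := by
  obtain ⟨N, xs, ts, hN, h0, hNx, hstep⟩ := hx δ hδ (max 2 (T+1))
    (lt_of_lt_of_le one_lt_two (le_max_left _ _))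
  have key : ∀ j : ℕ, 1 ≤ j → j ≤ N → ReachW φ T δ x (xs j) := by
    intro j
    induction j with
    | zero => intro h; omega
    | succ j ih =>
      intro _ hjN
      rcases Nat.eq_zero_or_pos j with rfl | hj
      · have hs := hstep 0 hN
        rw [h0] at hs
        exact ReachW.hop hφ hT (t := ts 0)
          (le_trans (by linarith [le_max_right 2 (T+1)]) hs.1) hs.2.le
      · have hj' : j < N := by omega
        have hs := hstep j hj'
        exact (ih hj (by omega)).trans (ReachW.hop hφ hT (t := ts j)
          (le_trans (by linarith [le_max_right 2 (T+1)]) hs.1) hs.2.le)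
  have := key N (by omega) le_rfl
  rwa [hNx] at this

theorem ReachW.to_chain {T c δ T₀ : ℝ} {x y : M} (h : ReachW φ T c x y)
    (hcδ : c < δ) (hTT : T₀ ≤ T) :
    ∃ (N : ℕ) (xs : ℕ → M) (ts : ℕ → ℝ), 0 < N ∧ xs 0 = x ∧ xs N = y ∧
      ∀ i < N, T₀ ≤ ts i ∧ dist (φ (xs i) (ts i)) (xs (i + 1)) < δ := by
  induction h with
  | @single a t h1 h2 h3 =>
    refine ⟨1, fun i => if i = 0 then x else a, fun _ => t, one_pos, by simp, by simp, ?_⟩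
    intro i hi
    interval_cases i
    simp only [if_pos rfl, if_neg one_ne_zero]
    exact ⟨hTT.trans h1, lt_of_le_of_lt h3 hcδ⟩
  | @tail b a t h h1 h2 h3 ih =>
    obtain ⟨N, xs, ts, hN, h0, hNy, hstep⟩ := ih
    refine ⟨N + 1, fun i => if i ≤ N then xs i else a, fun i => if i < N then ts i else t,
      by omega, by simp [h0], by simp only [if_neg (show ¬ N+1 ≤ N by omega)], ?_⟩
    intro i hi
    rcases lt_or_ge i N with hiN | hiN
    · have e1 : i ≤ N := hiN.le
      have e2 : i + 1 ≤ N := hiN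
      simp only [if_pos e1, if_pos e2, if_pos hiN]
      exact hstep i hiN
    · have hieq : i = N := by omega
      subst hieq
      simp only [if_pos (le_refl i), if_neg (lt_irrefl i), if_neg (show ¬ i+1 ≤ i by omega), hNy]
      exact ⟨hTT.trans h1, lt_of_le_of_lt h3 hcδ⟩

theorem mem_R_of (hφ : FlowPkg φ) {x : M}
    (h : ∀ T : ℝ, 2 ≤ T → ∀ δ : ℝ, 0 < δ → ReachW φ T δ x x) :
    x ∈ chainRecurrentSet φ := by
  intro δ hδ T hT
  have hr := h (max 2 T) (le_max_left _ _) (δ/2) (by linarith)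
  exact hr.to_chain (by linarith) (le_max_right _ _)

theorem R_closed (hφ : FlowPkg φ) : IsClosed (chainRecurrentSet φ) := by
  rw [← isOpen_compl_iff, Metric.isOpen_iff]
  intro x hx
  have : ¬ ∀ T : ℝ, 2 ≤ T → ∀ δ : ℝ, 0 < δ → ReachW φ T δ x x := fun h => hx (mem_R_of hφ h)
  push_neg at this
  obtain ⟨T, hT2, δ, hδ, hno⟩ := this
  have hT : (0:ℝ) < T := by linarith
  obtain ⟨δ₁, hδ₁, hm⟩ := hφ.uc (2*T) (ε := δ/4) (by linarith)
  refine ⟨min δ₁ (δ/4), by positivity, ?_⟩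
  intro y hy hyR
  apply hno
  have h1 : ReachW φ T (δ/4) y y := R_mem_imp hφ hyR hT (by linarith)
  have hyx : dist y x ≤ δ₁ := le_trans (le_of_lt hy) (min_le_left _ _)
  have h2 : ReachW φ T (δ/4 + δ/4) x y :=
    h1.start_perturb hT (fun t h1t h2t => hm y x hyx t
      (by rw [abs_of_nonneg (by linarith)]; linarith))
  have h3 : ReachW φ T (δ/4 + δ/4 + dist y x) x x := h2.endpoint_lip
  apply h3.mono
  have : dist y x ≤ δ/4 := le_trans hy.le (min_le_right _ _)
  linarith

theorem R_inv (hφ : FlowPkg φ) {x : M} (hx : x ∈ chainRecurrentSet φ) (s : ℝ) :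
    φ x s ∈ chainRecurrentSet φ := by
  apply mem_R_of hφ
  intro T hT2 δ hδ
  have hT : (0:ℝ) < T := by linarith
  obtain ⟨δ₂, hδ₂, hm⟩ := hφ.uc |s| (ε := δ/2) (by linarith)
  have h1 : ReachW φ T (min δ₂ (δ/2)) x x := R_mem_imp hφ hx hT (by positivity)
  have h2 : ReachW φ T (δ/2) (φ x s) (φ x s) :=
    h1.conj hφ (fun a b hab => hm a b (hab.trans (min_le_left _ _)) s (le_refl |s|))
  exact h2.mono (by linarith)

/-- forward chain-reachable set from `Z` (all time scales) -/
def Sp (φ : M → ℝ → M) (Z : Set M) : Set M :=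
  {x | ∀ T : ℝ, 1 ≤ T → ∀ δ : ℝ, 0 < δ → ∃ z ∈ Z, ReachW φ T δ z x}

/-- backward chain-reachable set: points chain-reaching `Z` -/
def Sm (φ : M → ℝ → M) (Z : Set M) : Set M :=
  {x | ∀ T : ℝ, 1 ≤ T → ∀ δ : ℝ, 0 < δ → ∃ z ∈ Z, ReachW φ T δ x z}

theorem gfun_zero_Sp (hφ : FlowPkg φ) {Z : Set M} (hZ : Z.Nonempty) {x : M}
    (h : gfun φ Z x = 0) : x ∈ Sp φ Z := by
  intro T hT1 δ hδ
  obtain ⟨k, hk⟩ := exists_nat_ge T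
  have hw := gfun_zero_imp hφ hZ h k
  have hu : ucost φ Z (k+2) x = 0 := by
    have h1 : ucost φ Z (k+2) (φ x 0) ≤ wcost φ Z (k+2) x :=
      le_wcost hZ (Tk_pos k) x ⟨le_rfl, by positivity⟩
    rw [hφ.zero, hw] at h1
    exact le_antisymm h1 (ucost_nonneg hZ (Tk_pos k) x)
  obtain ⟨z, hz, hr⟩ := exists_reach hZ (Tk_pos k) (by rw [hu]; exact hδ)
  exact ⟨z, hz, hr.scale hφ (by linarith) (by push_cast; linarith)⟩

theorem Sm_of_Spψ (hφ : FlowPkg φ) {Z : Set M} {x : M}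
    (h : x ∈ Sp (fun a t => φ a (-t)) Z) : x ∈ Sm φ Z := by
  intro T hT1 δ hδ
  obtain ⟨δ₁, hδ₁, hm⟩ := hφ.uc (2*T) (ε := δ/2) (by linarith)
  obtain ⟨z, hz, hr⟩ := h T hT1 (min δ₁ (δ/2)) (by positivity)
  refine ⟨z, hz, ?_⟩
  have := hr.rev (hφ.rev) (φ' := φ)
    (fun a t => by simp)
    (fun a b hab t h1t h2t => hm a b (hab.trans (min_le_left _ _)) t
      (by rw [abs_of_nonneg (by linarith)]; linarith))
  exact this.mono (by linarith)

theorem Sm_inv (hφ : FlowPkg φ) {Z : Set M} (hZinv : ∀ z ∈ Z, ∀ t : ℝ, φ z t ∈ Z)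
    {x : M} (hx : x ∈ Sm φ Z) (r : ℝ) : φ x r ∈ Sm φ Z := by
  intro T hT1 δ hδ
  obtain ⟨δ₃, hδ₃, hm⟩ := hφ.uc |r| (ε := δ/2) (by linarith)
  obtain ⟨z, hz, hr⟩ := hx T hT1 (min δ₃ (δ/2)) (by positivity)
  refine ⟨φ z r, hZinv z hz r, ?_⟩
  have := hr.conj hφ (s := r)
    (fun a b hab => hm a b (hab.trans (min_le_left _ _)) r (le_refl |r|))
  exact this.mono (by linarith)

/-- chain transitivity within the connected chain-recurrent piece `Z` -/
theorem Ztrans (hφ : FlowPkg φ) {Z : Set M} (hZconn : IsPreconnected Z)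
    (hZR : Z ⊆ chainRecurrentSet φ) {T δ : ℝ} (hT : 1 ≤ T) (hδ : 0 < δ)
    {z z' : M} (hz : z ∈ Z) (hz' : z' ∈ Z) : ReachW φ T δ z z' := by
  have hT0 : (0:ℝ) < T := by linarith
  set P : Set M := {w | w ∈ Z ∧ ReachW φ T (δ/2) z w} with hP
  have hext : ∀ w w', w ∈ P → w' ∈ Z → dist w w' < δ/4 → w' ∈ P := by
    intro w w' hw hw' hd
    have hloop : ReachW φ T (δ/4) w w := R_mem_imp hφ (hZR hw.1) hT0 (by linarith)
    have : ReachW φ T (δ/4 + dist w w') w w' := hloop.endpoint_lip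
    exact ⟨hw', hw.2.trans (this.mono (by linarith))⟩
  have hzP : z ∈ P := ⟨hz, R_mem_imp hφ (hZR hz) hT0 (by linarith)⟩
  by_cases hPz' : z' ∈ P
  · exact hPz'.2.mono (by linarith)
  exfalso
  set U : Set M := ⋃ w ∈ P, ball w (δ/4) with hU
  set V : Set M := ⋃ w ∈ Z \ P, ball w (δ/4) with hV
  have hUo : IsOpen U := isOpen_biUnion (fun _ _ => isOpen_ball)
  have hVo : IsOpen V := isOpen_biUnion (fun _ _ => isOpen_ball)
  have hcov : Z ⊆ U ∪ V := by
    intro w hw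
    by_cases hwP : w ∈ P
    · exact Or.inl (mem_biUnion hwP (mem_ball_self (by linarith)))
    · exact Or.inr (mem_biUnion ⟨hw, hwP⟩ (mem_ball_self (by linarith)))
  have hZU : (Z ∩ U).Nonempty := ⟨z, hz, mem_biUnion hzP (mem_ball_self (by linarith))⟩
  have hZV : (Z ∩ V).Nonempty := ⟨z', hz', mem_biUnion ⟨hz', hPz'⟩ (mem_ball_self (by linarith))⟩
  obtain ⟨p, hpZ, hpU, hpV⟩ := hZconn U V hUo hVo hcov hZU hZV
  obtain ⟨w, hwP, hpw⟩ := mem_iUnion₂.mp hpU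
  obtain ⟨w', hw'ZP, hpw'⟩ := mem_iUnion₂.mp hpV
  have hpP : p ∈ P := hext w p hwP hpZ (by rw [mem_ball] at hpw; rw [dist_comm]; exact hpw)
  have : w' ∈ P := hext p w' hpP hw'ZP.1 (by rwa [mem_ball] at hpw')
  exact hw'ZP.2 this

end RSet


section Cross

variable [CompactSpace M] {φ : M → ℝ → M}

/-- CROSSING LEMMA: a cheap chain from `Z` to a far-away point must pass
through the shell `{η ≤ infDist · Z ≤ 2η}`, at a point that is cheaply
reachable from `Z` and cheaply reaches (a small forward translate of) the
chain's endpoint. -/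
theorem cross (hφ : FlowPkg φ) {Z : Set M} {T c δc ε η : ℝ} (hT : 1 ≤ T)
    (hZinv : ∀ z ∈ Z, ∀ t : ℝ, φ z t ∈ Z)
    (hm2T : ∀ a b : M, dist a b ≤ δc → ∀ t : ℝ, |t| ≤ 2*T → dist (φ a t) (φ b t) ≤ ε)
    (hδη : δc ≤ η) (hδε : δc ≤ ε) (hη : 0 < η)
    {z y : M} (hz : z ∈ Z) (hc : ReachW φ T c z y) (hcδ : c ≤ δc)
    (hy : 2*η < infDist y Z) :
    ∃ w : M, η ≤ infDist w Z ∧ infDist w Z ≤ 2*η ∧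
      (∃ z' ∈ Z, ReachW φ T (c + ε) z' w) ∧
      ∃ r : ℝ, 0 ≤ r ∧ r ≤ T ∧ ReachW φ T (c + ε) w (φ y r) := by
  have hT0 : (0:ℝ) < T := by linarith
  induction hc with
  | @single a t h1 h2 h3 =>
    exfalso
    have hmem : φ z t ∈ Z := hZinv z hz t
    have : infDist a Z ≤ dist a (φ z t) := infDist_le_dist_of_mem hmem
    rw [dist_comm] at this
    have hc0 : dist (φ z t) a ≤ δc := h3.trans hcδ
    linarith
  | @tail b a t h h1 h2 h3 ih =>
    have hc0 : 0 ≤ c := h.nonneg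
    have hε0 : 0 ≤ ε := le_trans (le_trans hc0 hcδ) hδε
    rcases le_or_gt (infDist b Z) (2*η) with hb | hb
    · -- crossing in this hop (or at `b`)
      rcases le_or_gt η (infDist b Z) with hb2 | hb2
      · -- w := b
        refine ⟨b, hb2, hb, ⟨z, hz, h.mono (by linarith)⟩, 0, le_rfl, hT0.le, ?_⟩
        rw [hφ.zero]
        exact ReachW.single h1 h2 (h3.trans (by linarith))
      · -- IVT crossing inside the segment from b
        have hcont : ContinuousOn (fun u => infDist (φ b u) Z) (Icc 0 t) :=
          ((continuous_infDist_pt Z).comp (hφ.contT b)).continuousOn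
        have hf0 : infDist (φ b 0) Z < η := by rw [hφ.zero]; exact hb2
        have hft : η ≤ infDist (φ b t) Z := by
          have h4 : infDist a Z ≤ infDist (φ b t) Z + dist a (φ b t) :=
            infDist_le_infDist_add_dist
          rw [dist_comm] at h4
          have : dist (φ b t) a ≤ δc := h3.trans hcδ
          linarith
        have hIVT := intermediate_value_Icc (by linarith : (0:ℝ) ≤ t) hcont
        have hmem : η ∈ Icc (infDist (φ b 0) Z) (infDist (φ b t) Z) := ⟨hf0.le, hft⟩
        obtain ⟨u, hu, hval⟩ := hIVT hmem
        simp only [] at hval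
        set w := φ b u with hw
        have hu2T : |u| ≤ 2*T := by rw [abs_of_nonneg hu.1]; linarith [hu.2]
        refine ⟨w, le_of_eq hval.symm, by rw [hval]; linarith, ?_, ?_⟩
        · refine ⟨z, hz, ?_⟩
          exact h.endpoint_flow hφ hT0 hu.1
            (fun a' b' hab => (hm2T a' b' (hab.trans hcδ) u hu2T).trans (by linarith))
            (by linarith)
        · set r' := max 0 (T - (t - u)) with hr'
          have hr'0 : 0 ≤ r' := le_max_left _ _
          have hr'T : r' ≤ T := max_le hT0.le (by linarith [hu.2])
          have hq : T ≤ (t - u) + r' := by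
            rcases max_cases 0 (T - (t - u)) with ⟨he, h2'⟩ | ⟨he, h2'⟩ <;>
              rw [hr', he] <;> linarith [hu.2]
          refine ⟨r', hr'0, hr'T, ReachW.hop hφ hT0 (t := (t-u) + r') hq ?_⟩
          have e : φ w ((t-u) + r') = φ (φ b t) r' := by
            rw [hw, hφ.law', hφ.law']
            congr 1
            ring
          rw [e]
          have := hm2T (φ b t) a (h3.trans hcδ) r' (by rw [abs_of_nonneg hr'0]; linarith)
          linarith
    · -- far case: use the induction hypothesis
      obtain ⟨w, hw1, hw2, hpre, r, hr0, hrT, hsuf⟩ := ih hb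
      refine ⟨w, hw1, hw2, hpre, ?_⟩
      set r' := max 0 (T - (t - r)) with hr'
      have hr'0 : 0 ≤ r' := le_max_left _ _
      have htr : 0 ≤ t - r := by linarith
      have hr'T : r' ≤ T := max_le hT0.le (by linarith)
      have hq : T ≤ (t - r) + r' := by
        rcases max_cases 0 (T - (t - r)) with ⟨he, h2'⟩ | ⟨he, h2'⟩ <;>
          rw [hr', he] <;> linarith
      refine ⟨r', hr'0, hr'T, hsuf.trans (ReachW.hop hφ hT0 (t := (t-r) + r') hq ?_)⟩
      have e : φ (φ b r) ((t-r) + r') = φ (φ b t) r' := by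
        rw [hφ.law', hφ.law']
        congr 1
        ring
      rw [e]
      have := hm2T (φ b t) a (h3.trans hcδ) r' (by rw [abs_of_nonneg hr'0]; linarith)
      linarith

end Cross


section Core

variable [CompactSpace M] {φ : M → ℝ → M}

theorem nat_cast_ge {T : ℝ} {n₀ n : ℕ} (h : T ≤ (n₀:ℝ)) (hn : n₀ ≤ n) : T ≤ (n:ℝ)+1 := by
  have : (n₀:ℝ) ≤ (n:ℝ) := by exact_mod_cast hn
  linarith

theorem core (hφ : FlowPkg φ) {Z : Set M}
    (hZne : Z.Nonempty) (hZconn : IsPreconnected Z) (hZcpt : IsCompact Z)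
    (hZinv : ∀ z ∈ Z, ∀ s : ℝ, φ z s ∈ Z) (hZR : Z ⊆ chainRecurrentSet φ)
    {U₀ : Set M} (hU₀o : IsOpen U₀) (hZU₀ : Z ⊆ U₀)
    (hU₀R : U₀ ∩ chainRecurrentSet φ = Z)
    {p : M} (hp : p ∈ Sp φ Z) (hpm : p ∈ Sm φ Z) : p ∈ Z := by
  have hRmem : ∀ q : M, q ∈ Sp φ Z → q ∈ Sm φ Z → q ∈ chainRecurrentSet φ := by
    intro q h1 h2
    apply mem_R_of hφ
    intro T hT2 δ hδ
    have hT1 : (1:ℝ) ≤ T := by linarith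
    obtain ⟨z1, hz1, hr1⟩ := h1 T hT1 δ hδ
    obtain ⟨z2, hz2, hr2⟩ := h2 T hT1 δ hδ
    exact (hr2.trans (Ztrans hφ hZconn hZR hT1 hδ hz2 hz1)).trans hr1
  obtain ⟨δs, hδs, hth⟩ := hZcpt.exists_thickening_subset_open hU₀o hZU₀
  set η := δs / 4 with hηdef
  have hη : 0 < η := by positivity
  have hUmem : ∀ x : M, infDist x Z < 3*η → x ∈ U₀ := by
    intro x hx
    apply hth
    rw [Metric.mem_thickening_iff_infDist_lt hZne]
    rw [hηdef] at hx
    linarith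
  rcases le_or_gt (infDist p Z) (2*η) with hnear | hfar
  · have hU : p ∈ U₀ := hUmem p (by linarith)
    have : p ∈ U₀ ∩ chainRecurrentSet φ := ⟨hU, hRmem p hp hpm⟩
    rwa [hU₀R] at this
  exfalso
  have hcr : ∀ n : ℕ, ∃ w : M, η ≤ infDist w Z ∧ infDist w Z ≤ 2*η ∧
      (∃ z' ∈ Z, ReachW φ ((n:ℝ)+1) (2/((n:ℝ)+1)) z' w) ∧
      ∃ r : ℝ, 0 ≤ r ∧ r ≤ (n:ℝ)+1 ∧ ReachW φ ((n:ℝ)+1) (2/((n:ℝ)+1)) w (φ p r) := by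
    intro n
    set T : ℝ := (n:ℝ)+1 with hTdef
    have hT1 : (1:ℝ) ≤ T := by rw [hTdef]; have : (0:ℝ) ≤ (n:ℝ) := Nat.cast_nonneg n; linarith
    set a := min (1/((n:ℝ)+1)) η with hadef
    have ha0 : 0 < a := lt_min (by positivity) hη
    obtain ⟨δ₁, hδ₁, hmod⟩ := hφ.uc (2*T) (ε := a) ha0
    set δc := min δ₁ a with hδcdef
    have hδc0 : 0 < δc := lt_min hδ₁ ha0
    obtain ⟨z, hz, hchain⟩ := hp T hT1 δc hδc0
    obtain ⟨w, h1, h2, ⟨z', hz', hpre⟩, r, hr0, hrT, hsuf⟩ :=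
      cross hφ hT1 hZinv
        (fun a' b' hab t h2t => hmod a' b' (hab.trans (min_le_left _ _)) t h2t)
        (le_trans (min_le_right _ _) (min_le_right _ _))
        (min_le_right _ _) hη hz hchain le_rfl hfar
    have hcost : δc + a ≤ 2/((n:ℝ)+1) := by
      have h1' : δc ≤ 1/((n:ℝ)+1) := le_trans (min_le_right _ _) (min_le_left _ _)
      have h2' : a ≤ 1/((n:ℝ)+1) := min_le_left _ _
      have he : 2/((n:ℝ)+1) = 1/((n:ℝ)+1) + 1/((n:ℝ)+1) := by ring
      linarith
    exact ⟨w, h1, h2, ⟨z', hz', hpre.mono hcost⟩, r, hr0, hrT, hsuf.mono hcost⟩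
  choose w hw1 hw2 hwpre hwsuf using hcr
  obtain ⟨q, -, σ, hσ, hlim⟩ := isCompact_univ.tendsto_subseq (x := w) (fun n => mem_univ _)
  have hdist : ∀ ε' : ℝ, 0 < ε' → ∃ j₀, ∀ j ≥ j₀, dist (w (σ j)) q < ε' := by
    intro ε' hε'
    exact Metric.tendsto_atTop.mp hlim ε' hε'
  have hcostsmall : ∀ δ : ℝ, 0 < δ → ∃ n₁ : ℕ, ∀ n : ℕ, n₁ ≤ n → 2/((n:ℝ)+1) ≤ δ := by
    intro δ hδ
    obtain ⟨n₁, hn₁⟩ := exists_nat_ge (2/δ)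
    refine ⟨n₁, fun n hn => ?_⟩
    have h2 : (2/δ) ≤ (n:ℝ)+1 := le_trans hn₁ (by exact_mod_cast Nat.le_succ_of_le hn)
    rw [div_le_iff₀ (by positivity : (0:ℝ) < (n:ℝ)+1)]
    calc (2:ℝ) = (2/δ) * δ := by field_simp
      _ ≤ ((n:ℝ)+1) * δ := by nlinarith
      _ = δ * ((n:ℝ)+1) := by ring
  have hqSp : q ∈ Sp φ Z := by
    intro T hT1 δ hδ
    obtain ⟨n₀, hn₀⟩ := exists_nat_ge T
    obtain ⟨n₁, hn₁⟩ := hcostsmall (δ/2) (by linarith)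
    obtain ⟨j₀, hj₀⟩ := hdist (δ/2) (by linarith)
    set j := max j₀ (max n₀ n₁) with hjdef
    have hjσ : max n₀ n₁ ≤ σ j :=
      le_trans (le_trans (le_max_right j₀ (max n₀ n₁)) (hσ.le_apply)) le_rfl
    obtain ⟨z', hz', hpre⟩ := hwpre (σ j)
    have hTσ : T ≤ ((σ j : ℕ):ℝ)+1 :=
      nat_cast_ge hn₀ (le_trans (le_max_left _ _) hjσ)
    have hsc : ReachW φ T (2/(((σ j : ℕ):ℝ)+1)) z' (w (σ j)) :=
      hpre.scale hφ (by linarith) hTσ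
    have h2n : 2/(((σ j : ℕ):ℝ)+1) ≤ δ/2 := hn₁ (σ j) (le_trans (le_max_right _ _) hjσ)
    have hlip := (hsc.mono h2n).endpoint_lip (y' := q)
    refine ⟨z', hz', hlip.mono ?_⟩
    have hdj : dist (w (σ j)) q < δ/2 := hj₀ j (le_max_left _ _)
    linarith
  have hqSm : q ∈ Sm φ Z := by
    intro T hT1 δ hδ
    have hT0 : (0:ℝ) < T := by linarith
    obtain ⟨δ₂, hδ₂, hm2⟩ := hφ.uc (2*T) (ε := δ/4) (by linarith)
    obtain ⟨n₀, hn₀⟩ := exists_nat_ge T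
    obtain ⟨n₁, hn₁⟩ := hcostsmall (δ/4) (by linarith)
    obtain ⟨j₀, hj₀⟩ := hdist (min δ₂ (δ/4)) (by positivity)
    set j := max j₀ (max n₀ n₁) with hjdef
    have hjσ : max n₀ n₁ ≤ σ j := le_trans (le_max_right j₀ _) hσ.le_apply
    obtain ⟨r, hr0, hrT, hs⟩ := hwsuf (σ j)
    have hTσ : T ≤ ((σ j : ℕ):ℝ)+1 := nat_cast_ge hn₀ (le_trans (le_max_left _ _) hjσ)
    have hs1 : ReachW φ T (2/(((σ j : ℕ):ℝ)+1)) (w (σ j)) (φ p r) := hs.scale hφ hT0 hTσ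
    have h2n : 2/(((σ j : ℕ):ℝ)+1) ≤ δ/4 := hn₁ (σ j) (le_trans (le_max_right _ _) hjσ)
    have hdj : dist (w (σ j)) q ≤ δ₂ :=
      le_trans (hj₀ j (le_max_left _ _)).le (min_le_left _ _)
    have hs2 : ReachW φ T (2/(((σ j : ℕ):ℝ)+1) + δ/4) q (φ p r) :=
      hs1.start_perturb hT0 (fun t h1t h2t => hm2 (w (σ j)) q hdj t
        (by rw [abs_of_nonneg (by linarith)]; linarith))
    have hfr : φ p r ∈ Sm φ Z := Sm_inv hφ hZinv hpm r
    obtain ⟨z'', hz'', h3⟩ := hfr T hT1 (δ/4) (by linarith)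
    have hs3 : ReachW φ T (δ/2) q (φ p r) := hs2.mono (by linarith)
    have h4 : ReachW φ T (δ/2) (φ p r) z'' := h3.mono (by linarith)
    exact ⟨z'', hz'', (hs3.trans h4).mono (by linarith)⟩
  have hqR := hRmem q hqSp hqSm
  have htend : Tendsto (fun j => infDist (w (σ j)) Z) atTop (𝓝 (infDist q Z)) :=
    ((continuous_infDist_pt Z).tendsto q).comp hlim
  have hq1 : η ≤ infDist q Z :=
    ge_of_tendsto htend (Filter.Eventually.of_forall (fun j => hw1 (σ j)))
  have hq2 : infDist q Z ≤ 2*η :=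
    le_of_tendsto htend (Filter.Eventually.of_forall (fun j => hw2 (σ j)))
  have hqU : q ∈ U₀ := hUmem q (by linarith)
  have hqZ : q ∈ Z := by rw [← hU₀R]; exact ⟨hqU, hqR⟩
  have : infDist q Z = 0 := infDist_zero_of_mem hqZ
  linarith

end Core


section Entry

variable [CompactSpace M] {φ : M → ℝ → M}

theorem entry (hφ : FlowPkg φ) {Z : Set M} (hZne : Z.Nonempty) {ε : ℝ} (hε : 0 < ε) (x : M)
    (hne : ({t : ℝ | Gfun φ Z (φ x t) < ε ∧
      Gfun (fun a s => φ a (-s)) Z (φ x t) < ε}).Nonempty)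
    (hbdd : BddBelow {t : ℝ | Gfun φ Z (φ x t) < ε ∧
      Gfun (fun a s => φ a (-s)) Z (φ x t) < ε}) :
    BddBelow {t : ℝ | Gfun φ Z (φ x t) < ε} ∧
    ({t : ℝ | Gfun φ Z (φ x t) < ε}).Nonempty ∧
    sInf {t : ℝ | Gfun φ Z (φ x t) < ε ∧ Gfun (fun a s => φ a (-s)) Z (φ x t) < ε}
      = sInf {t : ℝ | Gfun φ Z (φ x t) < ε} ∧
    (∀ t : ℝ, sInf {t : ℝ | Gfun φ Z (φ x t) < ε} < t → Gfun φ Z (φ x t) < ε) ∧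
    (∀ t : ℝ, t < sInf {t : ℝ | Gfun φ Z (φ x t) < ε} → ε < Gfun φ Z (φ x t)) := by
  set ψ : M → ℝ → M := fun a s => φ a (-s) with hψdef
  set U : Set ℝ := {t : ℝ | Gfun φ Z (φ x t) < ε} with hUdef
  set J : Set ℝ := {t : ℝ | Gfun φ Z (φ x t) < ε ∧ Gfun ψ Z (φ x t) < ε} with hJdef
  have hmono : ∀ t₁ t₂ : ℝ, t₁ ≤ t₂ → Gfun φ Z (φ x t₂) ≤ Gfun φ Z (φ x t₁) := by
    intro t₁ t₂ h
    have e : φ x t₂ = φ (φ x t₁) (t₂ - t₁) := by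
      rw [hφ.law', show t₁ + (t₂ - t₁) = t₂ from by ring]
    rw [e]
    exact Gfun_flow_le hφ hZne _ (by linarith)
  have hψmono : ∀ t₁ t₂ : ℝ, t₁ ≤ t₂ → Gfun ψ Z (φ x t₁) ≤ Gfun ψ Z (φ x t₂) := by
    intro t₁ t₂ h
    have e : φ x t₁ = ψ (φ x t₂) (t₂ - t₁) := by
      show φ x t₁ = φ (φ x t₂) (-(t₂ - t₁))
      rw [hφ.law', show t₂ + -(t₂ - t₁) = t₁ from by ring]
    rw [e]
    exact Gfun_flow_le hφ.rev hZne _ (by linarith)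
  have hUne : U.Nonempty := hne.imp (fun t ht => ht.1)
  have hUbdd : BddBelow U := by
    by_contra hnb
    rw [not_bddBelow_iff] at hnb
    obtain ⟨t₀, ht₀⟩ := hne
    obtain ⟨b, hb⟩ := hbdd
    obtain ⟨u, hu, hub⟩ := hnb (min b t₀ - 1)
    have hmem : min b t₀ - 1 ∈ J := by
      constructor
      · exact lt_of_le_of_lt (hmono u _ hub.le) hu
      · exact lt_of_le_of_lt (hψmono _ t₀ (by linarith [min_le_right b t₀])) ht₀.2
    have h1 := hb hmem
    have h2 := min_le_left b t₀
    linarith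
  have hStep2 : ∀ t : ℝ, sInf U < t → Gfun φ Z (φ x t) < ε := by
    intro t ht
    obtain ⟨u, hu, hut⟩ := exists_lt_of_csInf_lt hUne ht
    exact lt_of_le_of_lt (hmono u t hut.le) hu
  have hτnot : ¬ (Gfun φ Z (φ x (sInf U)) < ε) := by
    intro hτU
    have hcont : Continuous fun t : ℝ => Gfun φ Z (φ x t) :=
      (Gfun_continuous hφ hZne).comp (hφ.contT x)
    obtain ⟨d, hd, hdd⟩ := Metric.continuousAt_iff.mp (hcont.continuousAt (x := sInf U))
      (ε - Gfun φ Z (φ x (sInf U))) (by linarith)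
    have hless : Gfun φ Z (φ x (sInf U - d/2)) < ε := by
      have h1 : dist (sInf U - d/2) (sInf U) < d := by
        rw [Real.dist_eq]
        rw [abs_of_nonpos (by linarith)]
        linarith
      have h2 := hdd h1
      rw [Real.dist_eq, abs_lt] at h2
      linarith [h2.2]
    have := csInf_le hUbdd hless
    linarith
  have hStep4 : sInf J = sInf U := by
    apply le_antisymm
    · by_contra hlt
      push_neg at hlt
      obtain ⟨t₀, ht₀⟩ := hne
      have hτt₀ : sInf J ≤ t₀ := csInf_le hbdd ht₀
      set γ := min ((sInf J - sInf U)/2) (t₀ - sInf U) with hγdef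
      have hγpos : 0 < (sInf J - sInf U)/2 := by linarith
      have hU2 : sInf U < sInf U + γ := by
        have : 0 < γ := lt_min hγpos (by linarith)
        linarith
      have hmem : sInf U + γ ∈ J := by
        constructor
        · exact hStep2 _ hU2
        · refine lt_of_le_of_lt (hψmono _ t₀ ?_) ht₀.2
          have := min_le_right ((sInf J - sInf U)/2) (t₀ - sInf U)
          linarith
      have h1 := csInf_le hbdd hmem
      have h2 := min_le_left ((sInf J - sInf U)/2) (t₀ - sInf U)
      linarith
    · exact le_csInf hne (fun t ht => csInf_le hUbdd ht.1)
  refine ⟨hUbdd, hUne, hStep4, hStep2, ?_⟩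
  intro t ht
  have hnotU : ¬ (Gfun φ Z (φ x t) < ε) := by
    intro hU'
    have := csInf_le hUbdd hU'
    linarith
  rcases lt_or_eq_of_le (not_lt.mp hnotU) with h | h
  · exact h
  exfalso
  have hτ : Gfun φ Z (φ x (sInf U)) = ε := by
    have h1 : ε ≤ Gfun φ Z (φ x (sInf U)) := not_lt.mp hτnot
    have h2 : Gfun φ Z (φ x (sInf U)) ≤ Gfun φ Z (φ x t) := hmono t _ ht.le
    rw [← h] at h2
    linarith
  have hkey : Gfun φ Z (φ (φ x t) (sInf U - t)) = Gfun φ Z (φ x t) := by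
    have e : φ (φ x t) (sInf U - t) = φ x (sInf U) := by
      rw [hφ.law', show t + (sInf U - t) = sInf U from by ring]
    rw [e, hτ, ← h]
  have hconst := Gfun_const_orbit hφ hZne (x := φ x t) (s := sInf U - t) (by linarith) hkey
  obtain ⟨u, hu⟩ := hUne
  rcases le_or_gt t u with h' | h'
  · have hc := hconst (u - t) (by linarith)
    have e : φ (φ x t) (u - t) = φ x u := by
      rw [hφ.law', show t + (u - t) = u from by ring]
    rw [e, ← h] at hc
    have : Gfun φ Z (φ x u) < ε := hu
    linarith
  · have hge := hmono u t h'.le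
    rw [← h] at hge
    have : Gfun φ Z (φ x u) < ε := hu
    linarith

end Entry


theorem main_abstract {M : Type} [MetricSpace M] [CompactSpace M]
    (φ : M → ℝ → M) (hφp : FlowPkg φ) (Z : Set M)
    (hZ : ∃ x ∈ chainRecurrentSet φ, Z = connectedComponentIn (chainRecurrentSet φ) x)
    (hiso : ∃ U₀ : Set M, IsOpen U₀ ∧ Z ⊆ U₀ ∧ U₀ ∩ chainRecurrentSet φ = Z) :
    ∀ W ∈ nhdsSet Z, ∃ B : Set M, IsOpen B ∧ Z ⊆ B ∧ B ⊆ W ∧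
      (∀ x : M, Set.OrdConnected {t : ℝ | φ x t ∈ B}) ∧
      ContinuousOn (fun x : M => sInf {t : ℝ | φ x t ∈ B})
        {x : M | ({t : ℝ | φ x t ∈ B}).Nonempty ∧ BddBelow {t : ℝ | φ x t ∈ B}} := by
  intro W hW
  obtain ⟨x₀, hx₀R, hZdef⟩ := hZ
  obtain ⟨U₀, hU₀o, hZU₀, hU₀R⟩ := hiso
  have hZsub : Z ⊆ chainRecurrentSet φ := by
    rw [hZdef]; exact connectedComponentIn_subset _ _
  have hZne : Z.Nonempty := ⟨x₀, by rw [hZdef]; exact mem_connectedComponentIn hx₀R⟩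
  have hRclosed := R_closed hφp (φ := φ)
  have hRcpt : IsCompact (chainRecurrentSet φ) := hRclosed.isCompact
  have hZclosed : IsClosed Z := by
    rw [hZdef, connectedComponentIn_eq_image hx₀R]
    haveI : CompactSpace (chainRecurrentSet φ) := isCompact_iff_compactSpace.mp hRcpt
    have h1 : IsCompact (connectedComponent (⟨x₀, hx₀R⟩ : chainRecurrentSet φ)) :=
      isClosed_connectedComponent.isCompact
    exact (h1.image continuous_subtype_val).isClosed
  have hZcpt : IsCompact Z := hZclosed.isCompact
  have hZconn : IsPreconnected Z := by
    rw [hZdef]; exact isPreconnected_connectedComponentIn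
  have hZinv : ∀ z ∈ Z, ∀ s : ℝ, φ z s ∈ Z := by
    intro z hz s
    have hzR : z ∈ chainRecurrentSet φ := hZsub hz
    have hK : IsPreconnected ((fun u => φ z u) '' uIcc 0 s) :=
      isPreconnected_uIcc.image _ (hφp.contT z).continuousOn
    have hKR : (fun u => φ z u) '' uIcc 0 s ⊆ chainRecurrentSet φ := by
      rintro _ ⟨u, -, rfl⟩; exact R_inv hφp hzR u
    have hzK : z ∈ (fun u => φ z u) '' uIcc 0 s := ⟨0, left_mem_uIcc, hφp.zero z⟩
    have hsub := hK.subset_connectedComponentIn hzK hKR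
    have hccz : connectedComponentIn (chainRecurrentSet φ) x₀
        = connectedComponentIn (chainRecurrentSet φ) z :=
      connectedComponentIn_eq (by rw [← hZdef]; exact hz)
    have hmem : φ z s ∈ connectedComponentIn (chainRecurrentSet φ) z :=
      hsub ⟨s, right_mem_uIcc, rfl⟩
    rw [hZdef, hccz]; exact hmem
  set ψ : M → ℝ → M := fun a s => φ a (-s) with hψdef
  have hψp : FlowPkg ψ := hφp.rev
  have hψZinv : ∀ z ∈ Z, ∀ s : ℝ, ψ z s ∈ Z := fun z hz s => hZinv z hz (-s)
  have hcore : ∀ p : M, Gfun φ Z p = 0 → Gfun ψ Z p = 0 → p ∈ Z := by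
    intro p h1 h2
    have hp1 : p ∈ Sp φ Z := gfun_zero_Sp hφp hZne (Gfun_zero_imp hφp hZne h1)
    have hp2 : p ∈ Sp ψ Z := gfun_zero_Sp hψp hZne (Gfun_zero_imp hψp hZne h2)
    exact core hφp hZne hZconn hZcpt hZinv hZsub hU₀o hZU₀ hU₀R hp1 (Sm_of_Spψ hφp hp2)
  obtain ⟨W', hW'o, hZW', hW'W⟩ := mem_nhdsSet_iff_exists.mp hW
  have hKey : ∃ ε : ℝ, 0 < ε ∧ {x : M | Gfun φ Z x ≤ ε ∧ Gfun ψ Z x ≤ ε} ⊆ W' := by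
    by_contra hk
    push_neg at hk
    have hsel : ∀ n : ℕ, ∃ x : M,
        (Gfun φ Z x ≤ 1/((n:ℝ)+1) ∧ Gfun ψ Z x ≤ 1/((n:ℝ)+1)) ∧ x ∉ W' := by
      intro n
      have := hk (1/((n:ℝ)+1)) (by positivity)
      rw [Set.not_subset] at this
      obtain ⟨x, hx1, hx2⟩ := this
      exact ⟨x, hx1, hx2⟩
    choose xs hxs1 hxs2 using hsel
    obtain ⟨q, -, σ, hσ, hlim⟩ := isCompact_univ.tendsto_subseq (x := xs) (fun n => mem_univ _)
    have hzero : ∀ (χ : M → ℝ → M), FlowPkg χ →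
        (∀ j, Gfun χ Z (xs (σ j)) ≤ 1/((σ j:ℝ)+1)) → Gfun χ Z q = 0 := by
      intro χ hχ hb
      have htd : Tendsto (fun j => Gfun χ Z (xs (σ j))) atTop (𝓝 (Gfun χ Z q)) :=
        ((Gfun_continuous hχ hZne).tendsto q).comp hlim
      apply le_antisymm _ (Gfun_nonneg hχ hZne q)
      have hlimb : Tendsto (fun j : ℕ => 1/((j:ℝ)+1)) atTop (𝓝 0) :=
        tendsto_one_div_add_atTop_nhds_zero_nat
      refine le_of_tendsto_of_tendsto htd hlimb (Filter.Eventually.of_forall fun j => ?_)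
      have h1 := hb j
      have h2 : 1/((σ j:ℝ)+1) ≤ 1/((j:ℝ)+1) := by
        apply one_div_le_one_div_of_le (by positivity)
        have : j ≤ σ j := hσ.le_apply
        have hc : (j:ℝ) ≤ ((σ j : ℕ):ℝ) := by exact_mod_cast this
        linarith
      exact le_trans h1 h2
    have hq1 : Gfun φ Z q = 0 := hzero φ hφp (fun j => (hxs1 (σ j)).1)
    have hq2 : Gfun ψ Z q = 0 := hzero ψ hψp (fun j => (hxs1 (σ j)).2)
    have hqZ := hcore q hq1 hq2
    have hnot : q ∉ W' := by
      have hcl : IsClosed (W')ᶜ := hW'o.isClosed_compl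
      exact hcl.mem_of_tendsto hlim (Filter.Eventually.of_forall fun j => hxs2 (σ j))
    exact hnot (hZW' hqZ)
  obtain ⟨ε, hε, hKeyε⟩ := hKey
  refine ⟨{x : M | Gfun φ Z x < ε ∧ Gfun ψ Z x < ε}, ?_, ?_, ?_, ?_, ?_⟩
  · have e : {x : M | Gfun φ Z x < ε ∧ Gfun ψ Z x < ε}
        = {x | Gfun φ Z x < ε} ∩ {x | Gfun ψ Z x < ε} := rfl
    rw [e]
    exact (isOpen_lt (Gfun_continuous hφp hZne) continuous_const).inter
      (isOpen_lt (Gfun_continuous hψp hZne) continuous_const)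
  · intro z hz
    refine ⟨?_, ?_⟩
    · show Gfun φ Z z < ε
      rw [Gfun_zero_on hφp hZinv hz]; exact hε
    · show Gfun ψ Z z < ε
      rw [Gfun_zero_on hψp hψZinv hz]; exact hε
  · intro x hx
    exact hW'W (hKeyε ⟨hx.1.le, hx.2.le⟩)
  · intro x
    constructor
    intro t₁ h₁ t₂ h₂ t ht
    constructor
    · show Gfun φ Z (φ x t) < ε
      have e : φ x t = φ (φ x t₁) (t - t₁) := by
        rw [hφp.law', show t₁ + (t - t₁) = t from by ring]
      have hle := Gfun_flow_le hφp hZne (φ x t₁) (r := t - t₁) (by linarith [ht.1])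
      rw [← e] at hle
      exact lt_of_le_of_lt hle h₁.1
    · show Gfun ψ Z (φ x t) < ε
      have e : φ x t = ψ (φ x t₂) (t₂ - t) := by
        show φ x t = φ (φ x t₂) (-(t₂ - t))
        rw [hφp.law', show t₂ + -(t₂ - t) = t from by ring]
      have hle := Gfun_flow_le hψp hZne (φ x t₂) (r := t₂ - t) (by linarith [ht.2])
      rw [← e] at hle
      exact lt_of_le_of_lt hle h₂.2
  · intro x hx
    rw [Metric.continuousWithinAt_iff]
    intro γ hγ
    obtain ⟨hUb, hUne, hIeq, hS2, hS5⟩ := entry hφp hZne hε x hx.1 hx.2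
    set τ := sInf {t : ℝ | Gfun φ Z (φ x t) < ε} with hτdef
    have htP : Gfun φ Z (φ x (τ + γ/2)) < ε := hS2 (τ + γ/2) (by linarith)
    have htM : ε < Gfun φ Z (φ x (τ - γ/2)) := hS5 (τ - γ/2) (by linarith)
    have hcP : Continuous fun y : M => Gfun φ Z (φ y (τ + γ/2)) :=
      (Gfun_continuous hφp hZne).comp (hφp.contX _)
    have hcM : Continuous fun y : M => Gfun φ Z (φ y (τ - γ/2)) :=
      (Gfun_continuous hφp hZne).comp (hφp.contX _)
    obtain ⟨d₁, hd₁, hddP⟩ := Metric.continuousAt_iff.mp (hcP.continuousAt (x := x))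
      (ε - Gfun φ Z (φ x (τ + γ/2))) (by linarith)
    obtain ⟨d₂, hd₂, hddM⟩ := Metric.continuousAt_iff.mp (hcM.continuousAt (x := x))
      (Gfun φ Z (φ x (τ - γ/2)) - ε) (by linarith)
    refine ⟨min d₁ d₂, by positivity, ?_⟩
    intro y hyA hyd
    obtain ⟨hUb', hUne', hIeq', hS2', hS5'⟩ := entry hφp hZne hε y hyA.1 hyA.2
    set τy := sInf {t : ℝ | Gfun φ Z (φ y t) < ε} with hτydef
    have hyP : Gfun φ Z (φ y (τ + γ/2)) < ε := by
      have h5 := hddP (lt_of_lt_of_le hyd (min_le_left _ _))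
      rw [Real.dist_eq, abs_lt] at h5
      linarith [h5.2]
    have hyM : ε < Gfun φ Z (φ y (τ - γ/2)) := by
      have h5 := hddM (lt_of_lt_of_le hyd (min_le_right _ _))
      rw [Real.dist_eq, abs_lt] at h5
      linarith [h5.1]
    have hup : τy ≤ τ + γ/2 := csInf_le hUb' hyP
    have hdn : τ - γ/2 ≤ τy := by
      by_contra hlt
      push_neg at hlt
      have := hS2' (τ - γ/2) hlt
      linarith
    show dist
      (sInf {t : ℝ | Gfun φ Z (φ y t) < ε ∧ Gfun (fun a s => φ a (-s)) Z (φ y t) < ε})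
      (sInf {t : ℝ | Gfun φ Z (φ x t) < ε ∧ Gfun (fun a s => φ a (-s)) Z (φ x t) < ε}) < γ
    rw [hIeq', hIeq]
    rw [Real.dist_eq, abs_lt]
    constructor <;> linarith

end FCN

end FCNLib

/-- **Existence of flow-convex neighbourhoods (Farber–Kappeler).**  Let `v` be
a smooth vector field on a closed smooth manifold `M` generating a flow `Φ`
(write `x·t = Φ x t`), and let `Z` be a connected component of the chain
recurrent set `R` of `Φ` which is isolated in `R`.  Then every neighbourhood
`W` of `Z` contains an open neighbourhood `B` of `Z` such that:
(A) for every `x ∈ M` the set `J_x = {t | x·t ∈ B}` is convex (empty or an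
interval); and (B) on the set `A` of points `x` for which `J_x` is nonempty
and bounded below, the function `x ↦ inf J_x` is continuous. -/
theorem exists_flow_convex_neighborhood
    (n : ℕ) (M : Type) [MetricSpace M]
    [ChartedSpace (EuclideanSpace ℝ (Fin n)) M]
    [IsManifold (𝓡 n) (⊤ : ℕ∞) M]
    [CompactSpace M]
    (v : (x : M) → TangentSpace (𝓡 n) x) (hv : IsSmoothVF v)
    (Φ : M → ℝ → M) (hΦ : IsFlowOf v Φ)
    (Z : Set M)
    (hZ : ∃ x ∈ chainRecurrentSet Φ, Z = connectedComponentIn (chainRecurrentSet Φ) x)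
    (hiso : ∃ U₀ : Set M, IsOpen U₀ ∧ Z ⊆ U₀ ∧ U₀ ∩ chainRecurrentSet Φ = Z) :
    ∀ W ∈ nhdsSet Z, ∃ B : Set M, IsOpen B ∧ Z ⊆ B ∧ B ⊆ W ∧
      (∀ x : M, Set.OrdConnected {t : ℝ | Φ x t ∈ B}) ∧
      ContinuousOn (fun x : M => sInf {t : ℝ | Φ x t ∈ B})
        {x : M | ({t : ℝ | Φ x t ∈ B}).Nonempty ∧ BddBelow {t : ℝ | Φ x t ∈ B}} := by
  have hφp : FCN.FlowPkg Φ := ⟨hΦ.1, hΦ.2.1, hΦ.2.2.1⟩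
  exact FCN.main_abstract Φ hφp Z hZ hiso
end
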